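/- arXiv:2306.13185 — 15 statements merged into one kernel-verified Lean document; each statement's English description precedes it below -/
import Mathlib

section
/- Suppose that for some δ ≥ 0 a positive solution κ_δ of the self-consistent equation exists (along with the ridgeless solution κ_0). Then the ridgeless omniscient risk estimate is bounded by the overfitting coefficient times the ridge risk estimate: R̃_0 ≤ E_0 · R̃_δ. Consequently, the predicted cost of overfitting C̃ = R̃_0 / inf_{δ ≥ 0} R̃_δ satisfies C̃ ≤ E_0. -/
/-- The ridgeless omniscient risk estimate is bounded by the
overfitting coefficient times the ridge risk estimate, `R̃_0 ≤ E_0 · R̃_δ`,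
and consequently the predicted cost of overfitting
`C̃ = R̃_0 / inf_{δ ≥ 0} R̃_δ` satisfies `C̃ ≤ E_0`. -/
theorem cost_of_overfitting_le_overfitting_coefficient
    (n : ℕ) (hn : 1 ≤ n)
    (lam : ℕ → ℝ) (hlam_nonneg : ∀ i, 0 ≤ lam i) (hlam_mono : Antitone lam)
    (hlam_summable : Summable lam) (hlam_ne : ∃ i, lam i ≠ 0)
    (v : ℕ → ℝ) (hv : Summable fun i => v i ^ 2)
    (σ2 : ℝ) (hσ2 : 0 ≤ σ2)
    (κ : ℝ → ℝ)
    (hκ_pos : ∀ δ, 0 ≤ δ → 0 < κ δ)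
    (hκ_eq : ∀ δ, 0 ≤ δ → ∑' i, lam i / (lam i + κ δ) + δ / κ δ = (n : ℝ))
    (E : ℝ → ℝ)
    (hE : ∀ δ, E δ = (n : ℝ) / ((n : ℝ) - ∑' i, (lam i / (lam i + κ δ)) ^ 2))
    (Rt : ℝ → ℝ)
    (hRt : ∀ δ, Rt δ = E δ * (∑' i, (1 - lam i / (lam i + κ δ)) ^ 2 * v i ^ 2 + σ2)) :
    (∀ δ, 0 ≤ δ → Rt 0 ≤ E 0 * Rt δ) ∧
      Rt 0 / sInf (Rt '' {δ : ℝ | 0 ≤ δ}) ≤ E 0 := by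
  have hκ0 : 0 < κ 0 := hκ_pos 0 le_rfl
  -- basic facts about L for a positive c
  have hden : ∀ (c : ℝ), 0 < c → ∀ i, 0 < lam i + c :=
    fun c hc i => add_pos_of_nonneg_of_pos (hlam_nonneg i) hc
  have hLnn : ∀ (c : ℝ), 0 < c → ∀ i, 0 ≤ lam i / (lam i + c) :=
    fun c hc i => div_nonneg (hlam_nonneg i) (hden c hc i).le
  have hLle1 : ∀ (c : ℝ), 0 < c → ∀ i, lam i / (lam i + c) ≤ 1 :=
    fun c hc i => (div_le_one (hden c hc i)).2 (le_add_of_nonneg_right hc.le)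
  have hLsum : ∀ (c : ℝ), 0 < c → Summable (fun i => lam i / (lam i + c)) := by
    intro c hc
    refine Summable.of_nonneg_of_le (hLnn c hc) (fun i => ?_) (hlam_summable.div_const c)
    gcongr
    · exact hlam_nonneg i
    · exact le_add_of_nonneg_left (hlam_nonneg i)
  have hLsqsum : ∀ (c : ℝ), 0 < c → Summable (fun i => (lam i / (lam i + c)) ^ 2) := by
    intro c hc
    refine Summable.of_nonneg_of_le (fun i => sq_nonneg _) (fun i => ?_) (hLsum c hc)
    calc (lam i / (lam i + c)) ^ 2 ≤ (lam i / (lam i + c)) * 1 := by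
          rw [sq]; exact mul_le_mul_of_nonneg_left (hLle1 c hc i) (hLnn c hc i)
      _ = lam i / (lam i + c) := mul_one _
  have hVsum : ∀ (c : ℝ), 0 < c →
      Summable (fun i => (1 - lam i / (lam i + c)) ^ 2 * v i ^ 2) := by
    intro c hc
    refine Summable.of_nonneg_of_le
      (fun i => mul_nonneg (sq_nonneg _) (sq_nonneg _)) (fun i => ?_) hv
    have h1 : (1 - lam i / (lam i + c)) ^ 2 ≤ 1 := by
      have := hLnn c hc i; have := hLle1 c hc i; nlinarith
    calc (1 - lam i / (lam i + c)) ^ 2 * v i ^ 2 ≤ 1 * v i ^ 2 :=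
          mul_le_mul_of_nonneg_right h1 (sq_nonneg _)
      _ = v i ^ 2 := one_mul _
  -- tsum L at 0 equals n
  have hsum0 : (∑' i, lam i / (lam i + κ 0)) = (n : ℝ) := by
    have := hκ_eq 0 le_rfl
    simpa using this
  -- strict bound on sum of squares
  have hsq_lt : ∀ (c : ℝ), 0 < c → (∑' i, lam i / (lam i + c)) ≤ (n : ℝ) →
      (∑' i, (lam i / (lam i + c)) ^ 2) < (n : ℝ) := by
    intro c hc hle
    obtain ⟨i0, hi0⟩ := hlam_ne
    have hl0 : 0 < lam i0 := lt_of_le_of_ne (hlam_nonneg i0) (Ne.symm hi0)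
    have hLpos : 0 < lam i0 / (lam i0 + c) := div_pos hl0 (hden c hc i0)
    have hLlt1 : lam i0 / (lam i0 + c) < 1 :=
      (div_lt_one (hden c hc i0)).2 (lt_add_of_pos_right _ hc)
    have hstrict : (lam i0 / (lam i0 + c)) ^ 2 < lam i0 / (lam i0 + c) := by nlinarith
    have hlt : (∑' i, (lam i / (lam i + c)) ^ 2) < ∑' i, lam i / (lam i + c) := by
      refine Summable.tsum_lt_tsum (fun i => ?_) hstrict (hLsqsum c hc) (hLsum c hc)
      calc (lam i / (lam i + c)) ^ 2 ≤ (lam i / (lam i + c)) * 1 := by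
            rw [sq]; exact mul_le_mul_of_nonneg_left (hLle1 c hc i) (hLnn c hc i)
        _ = lam i / (lam i + c) := mul_one _
    exact lt_of_lt_of_le hlt hle
  -- E bounds
  have hEone : ∀ δ, 0 ≤ δ → 1 ≤ E δ := by
    intro δ hδ
    have hκδ : 0 < κ δ := hκ_pos δ hδ
    have hsle : (∑' i, lam i / (lam i + κ δ)) ≤ (n : ℝ) := by
      have heq := hκ_eq δ hδ
      have : 0 ≤ δ / κ δ := div_nonneg hδ hκδ.le
      linarith
    have hlt := hsq_lt (κ δ) hκδ hsle
    have hnn : 0 ≤ ∑' i, (lam i / (lam i + κ δ)) ^ 2 :=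
      tsum_nonneg fun i => sq_nonneg _
    rw [hE δ]
    rw [one_le_div (by linarith)]
    linarith
  have hE0pos : 0 < E 0 := lt_of_lt_of_le one_pos (hEone 0 le_rfl)
  -- nonnegativity of the risk "sum" parts
  have hSnn : ∀ δ, 0 ≤ δ →
      0 ≤ ∑' i, (1 - lam i / (lam i + κ δ)) ^ 2 * v i ^ 2 + σ2 := by
    intro δ hδ
    have : 0 ≤ ∑' i, (1 - lam i / (lam i + κ δ)) ^ 2 * v i ^ 2 := tsum_nonneg (fun i => mul_nonneg (sq_nonneg (1 - lam i / (lam i + κ δ)))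
      (sq_nonneg (v i)))
    linarith
  -- main inequality
  have hmain : ∀ δ, 0 ≤ δ → Rt 0 ≤ E 0 * Rt δ := by
    intro δ hδ
    have hκδ : 0 < κ δ := hκ_pos δ hδ
    -- κ 0 ≤ κ δ
    have hκle : κ 0 ≤ κ δ := by
      by_contra h
      push_neg at h
      rcases eq_or_lt_of_le hδ with h0 | h0
      · rw [← h0] at h; exact lt_irrefl _ h
      · have hmono : ∀ i, lam i / (lam i + κ 0) ≤ lam i / (lam i + κ δ) := by
          intro i
          gcongr <;> first | exact hlam_nonneg i | exact hden (κ δ) hκδ i | linarith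
        have h1 : (n : ℝ) ≤ ∑' i, lam i / (lam i + κ δ) := by
          rw [← hsum0]
          exact Summable.tsum_le_tsum hmono (hLsum (κ 0) hκ0) (hLsum (κ δ) hκδ)
        have h2 : (∑' i, lam i / (lam i + κ δ)) < (n : ℝ) := by
          have heq := hκ_eq δ hδ
          have : 0 < δ / κ δ := div_pos h0 hκδ
          linarith
        linarith
    -- sum comparison
    have hSle : (∑' i, (1 - lam i / (lam i + κ 0)) ^ 2 * v i ^ 2) ≤
        ∑' i, (1 - lam i / (lam i + κ δ)) ^ 2 * v i ^ 2 := by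
      refine Summable.tsum_le_tsum (fun i => ?_) (hVsum (κ 0) hκ0) (hVsum (κ δ) hκδ)
      have hm : lam i / (lam i + κ δ) ≤ lam i / (lam i + κ 0) := by
        gcongr <;> first | exact hlam_nonneg i | exact hden (κ 0) hκ0 i | linarith
      have h0le : 0 ≤ 1 - lam i / (lam i + κ 0) := by
        have := hLle1 (κ 0) hκ0 i; linarith
      have : (1 - lam i / (lam i + κ 0)) ^ 2 ≤ (1 - lam i / (lam i + κ δ)) ^ 2 := by
        nlinarith
      exact mul_le_mul_of_nonneg_right this (sq_nonneg _)
    have hEδ1 : 1 ≤ E δ := hEone δ hδ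
    have hS0 := hSnn 0 le_rfl
    have hSδ := hSnn δ hδ
    rw [hRt 0, hRt δ]
    calc E 0 * (∑' i, (1 - lam i / (lam i + κ 0)) ^ 2 * v i ^ 2 + σ2)
        ≤ E 0 * (∑' i, (1 - lam i / (lam i + κ δ)) ^ 2 * v i ^ 2 + σ2) := by
          apply mul_le_mul_of_nonneg_left _ hE0pos.le
          linarith
      _ ≤ E 0 * (E δ * (∑' i, (1 - lam i / (lam i + κ δ)) ^ 2 * v i ^ 2 + σ2)) := by
          apply mul_le_mul_of_nonneg_left _ hE0pos.le
          exact le_mul_of_one_le_left hSδ hEδ1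
  refine ⟨hmain, ?_⟩
  -- second part
  have hRt0nn : 0 ≤ Rt 0 := by
    rw [hRt 0]
    exact mul_nonneg hE0pos.le (hSnn 0 le_rfl)
  have hlb : ∀ x ∈ Rt '' {δ : ℝ | 0 ≤ δ}, Rt 0 / E 0 ≤ x := by
    rintro x ⟨δ, hδ, rfl⟩
    rw [div_le_iff₀ hE0pos]
    calc Rt 0 ≤ E 0 * Rt δ := hmain δ hδ
      _ = Rt δ * E 0 := mul_comm _ _
  have hne : (Rt '' {δ : ℝ | 0 ≤ δ}).Nonempty := ⟨Rt 0, 0, by norm_num, rfl⟩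
  have hinf : Rt 0 / E 0 ≤ sInf (Rt '' {δ : ℝ | 0 ≤ δ}) := le_csInf hne hlb
  rcases eq_or_lt_of_le hRt0nn with h0 | h0
  · rw [← h0, zero_div]
    exact le_trans zero_le_one (hEone 0 le_rfl)
  · have hinfpos : 0 < sInf (Rt '' {δ : ℝ | 0 ≤ δ}) :=
      lt_of_lt_of_le (div_pos h0 hE0pos) hinf
    rw [div_le_iff₀ hinfpos]
    calc Rt 0 = E 0 * (Rt 0 / E 0) := by field_simp
      _ ≤ E 0 * sInf (Rt '' {δ : ℝ | 0 ≤ δ}) :=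
          mul_le_mul_of_nonneg_left hinf hE0pos.le
end

section
/- The ridgeless omniscient risk estimate satisfies the lower bound R̃_0 ≥ E_0 · σ². Consequently, if for every δ ≥ 0 a positive solution κ_δ exists, the predicted cost of overfitting C̃ = R̃_0 / inf_{δ ≥ 0} R̃_δ satisfies E_0 · σ² / inf_{δ ≥ 0} R̃_δ ≤ C̃ ≤ E_0, i.e. σ²/inf_{δ ≥ 0} R̃_δ ≤ C̃/E_0 ≤ 1. -/
/-- `R̃_0 ≥ E_0 · σ²`, and consequently the predicted cost of
overfitting `C̃ = R̃_0 / inf_{δ ≥ 0} R̃_δ` satisfies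
`E_0 · σ² / inf_{δ ≥ 0} R̃_δ ≤ C̃ ≤ E_0`. -/
theorem cost_of_overfitting_lower_bound
    (n : ℕ) (hn : 1 ≤ n)
    (lam : ℕ → ℝ) (hlam_nonneg : ∀ i, 0 ≤ lam i) (hlam_mono : Antitone lam)
    (hlam_summable : Summable lam) (hlam_ne : ∃ i, lam i ≠ 0)
    (v : ℕ → ℝ) (hv : Summable fun i => v i ^ 2)
    (σ2 : ℝ) (hσ2 : 0 ≤ σ2)
    (κ : ℝ → ℝ)
    (hκ_pos : ∀ δ, 0 ≤ δ → 0 < κ δ)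
    (hκ_eq : ∀ δ, 0 ≤ δ → ∑' i, lam i / (lam i + κ δ) + δ / κ δ = (n : ℝ))
    (E : ℝ → ℝ)
    (hE : ∀ δ, E δ = (n : ℝ) / ((n : ℝ) - ∑' i, (lam i / (lam i + κ δ)) ^ 2))
    (Rt : ℝ → ℝ)
    (hRt : ∀ δ, Rt δ = E δ * (∑' i, (1 - lam i / (lam i + κ δ)) ^ 2 * v i ^ 2 + σ2)) :
    E 0 * σ2 ≤ Rt 0 ∧
      E 0 * σ2 / sInf (Rt '' {δ : ℝ | 0 ≤ δ}) ≤ Rt 0 / sInf (Rt '' {δ : ℝ | 0 ≤ δ}) ∧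
      Rt 0 / sInf (Rt '' {δ : ℝ | 0 ≤ δ}) ≤ E 0 := by
  obtain ⟨i0, hi0ne⟩ := hlam_ne
  have hi0 : 0 < lam i0 := (hlam_nonneg i0).lt_of_ne (Ne.symm hi0ne)
  have hκ0 : 0 < κ 0 := hκ_pos 0 le_rfl
  have hLnn : ∀ (c : ℝ), 0 < c → ∀ i, 0 ≤ lam i / (lam i + c) := fun c hc i =>
    div_nonneg (hlam_nonneg i) (by linarith [hlam_nonneg i])
  have hLlt : ∀ (c : ℝ), 0 < c → ∀ i, lam i / (lam i + c) < 1 := by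
    intro c hc i
    rw [div_lt_one (by linarith [hlam_nonneg i])]
    linarith
  have hsumL : ∀ (c : ℝ), 0 < c → Summable (fun i => lam i / (lam i + c)) := by
    intro c hc
    refine Summable.of_nonneg_of_le (hLnn c hc) (fun i => ?_) (hlam_summable.div_const c)
    rw [div_le_div_iff₀ (by linarith [hlam_nonneg i]) hc]
    nlinarith [hlam_nonneg i]
  have hsumL2 : ∀ (c : ℝ), 0 < c → Summable (fun i => (lam i / (lam i + c)) ^ 2) := by
    intro c hc
    refine Summable.of_nonneg_of_le (fun i => sq_nonneg _) (fun i => ?_) (hsumL c hc)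
    nlinarith [hLnn c hc i, hLlt c hc i]
  have hsum_le : ∀ δ, 0 ≤ δ → ∑' i, lam i / (lam i + κ δ) ≤ (n : ℝ) := by
    intro δ hδ
    have h := hκ_eq δ hδ
    have h2 : 0 ≤ δ / κ δ := div_nonneg hδ (hκ_pos δ hδ).le
    linarith
  have hL2lt : ∀ δ, 0 ≤ δ →
      ∑' i, (lam i / (lam i + κ δ)) ^ 2 < ∑' i, lam i / (lam i + κ δ) := by
    intro δ hδ
    have hc := hκ_pos δ hδ
    refine Summable.tsum_lt_tsum (fun i => ?_) (i := i0) ?_ (hsumL2 _ hc) (hsumL _ hc)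
    · nlinarith [hLnn _ hc i, hLlt _ hc i]
    · have h1 : 0 < lam i0 / (lam i0 + κ δ) := div_pos hi0 (by linarith)
      nlinarith [hLlt _ hc i0]
  have hEpos : ∀ δ, 0 ≤ δ → 0 < (n : ℝ) - ∑' i, (lam i / (lam i + κ δ)) ^ 2 := by
    intro δ hδ
    have h1 := hL2lt δ hδ
    have h2 := hsum_le δ hδ
    linarith
  have hE1 : ∀ δ, 0 ≤ δ → 1 ≤ E δ := by
    intro δ hδ
    rw [hE δ, le_div_iff₀ (hEpos δ hδ)]
    have h3 : 0 ≤ ∑' i, (lam i / (lam i + κ δ)) ^ 2 := tsum_nonneg fun i => sq_nonneg _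
    linarith
  have hκmono : ∀ δ, 0 ≤ δ → κ 0 ≤ κ δ := by
    intro δ hδ
    by_contra h
    push_neg at h
    have hc := hκ_pos δ hδ
    have hlt : ∑' i, lam i / (lam i + κ 0) < ∑' i, lam i / (lam i + κ δ) := by
      refine Summable.tsum_lt_tsum (fun i => ?_) (i := i0) ?_ (hsumL _ hκ0) (hsumL _ hc)
      · rw [div_le_div_iff₀ (by linarith [hlam_nonneg i]) (by linarith [hlam_nonneg i])]
        nlinarith [hlam_nonneg i]
      · rw [div_lt_div_iff₀ (by linarith) (by linarith)]
        nlinarith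
    have he0 := hκ_eq 0 le_rfl
    have heδ := hκ_eq δ hδ
    have hdnn : 0 ≤ δ / κ δ := div_nonneg hδ hc.le
    rw [zero_div, add_zero] at he0
    linarith
  have hsumG : ∀ (c : ℝ), 0 < c →
      Summable (fun i => (1 - lam i / (lam i + c)) ^ 2 * v i ^ 2) := by
    intro c hc
    refine Summable.of_nonneg_of_le
      (fun i => mul_nonneg (sq_nonneg _) (sq_nonneg _)) (fun i => ?_) hv
    have h1 := hLnn c hc i
    have h2 := hLlt c hc i
    nlinarith [sq_nonneg (v i),
      mul_nonneg (mul_nonneg h1 (by linarith : (0:ℝ) ≤ 2 - lam i / (lam i + c)))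
        (sq_nonneg (v i))]
  have hGmono : ∀ δ, 0 ≤ δ →
      ∑' i, (1 - lam i / (lam i + κ 0)) ^ 2 * v i ^ 2 ≤
        ∑' i, (1 - lam i / (lam i + κ δ)) ^ 2 * v i ^ 2 := by
    intro δ hδ
    have hc := hκ_pos δ hδ
    have hk := hκmono δ hδ
    refine Summable.tsum_le_tsum (fun i => ?_) (hsumG _ hκ0) (hsumG _ hc)
    have hli := hlam_nonneg i
    have h1 : 1 - lam i / (lam i + κ 0) = κ 0 / (lam i + κ 0) := by
      field_simp
      ring
    have h2 : 1 - lam i / (lam i + κ δ) = κ δ / (lam i + κ δ) := by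
      field_simp
      ring
    rw [h1, h2]
    have hmono : κ 0 / (lam i + κ 0) ≤ κ δ / (lam i + κ δ) := by
      rw [div_le_div_iff₀ (by linarith) (by linarith)]
      nlinarith
    have hnn : 0 ≤ κ 0 / (lam i + κ 0) := div_nonneg hκ0.le (by linarith)
    exact mul_le_mul_of_nonneg_right (pow_le_pow_left₀ hnn hmono 2) (sq_nonneg _)
  set m := ∑' i, (1 - lam i / (lam i + κ 0)) ^ 2 * v i ^ 2 + σ2 with hm
  have hsig0 : 0 ≤ ∑' i, (1 - lam i / (lam i + κ 0)) ^ 2 * v i ^ 2 :=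
    tsum_nonneg fun i => mul_nonneg (sq_nonneg _) (sq_nonneg _)
  have hm0 : 0 ≤ m := by rw [hm]; linarith
  have hkey : ∀ δ, 0 ≤ δ → m ≤ Rt δ := by
    intro δ hδ
    rw [hRt δ, hm]
    have h1 := hE1 δ hδ
    have h2 := hGmono δ hδ
    have h3 : 0 ≤ ∑' i, (1 - lam i / (lam i + κ δ)) ^ 2 * v i ^ 2 :=
      tsum_nonneg fun i => mul_nonneg (sq_nonneg _) (sq_nonneg _)
    nlinarith
  have hE0 : 1 ≤ E 0 := hE1 0 le_rfl
  have hRt0 : Rt 0 = E 0 * m := by rw [hm]; exact hRt 0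
  have hpart1 : E 0 * σ2 ≤ Rt 0 := by
    rw [hRt0]
    have : σ2 ≤ m := by rw [hm]; linarith
    exact mul_le_mul_of_nonneg_left this (by linarith)
  have hSne : (Rt '' {δ : ℝ | 0 ≤ δ}).Nonempty := ⟨Rt 0, 0, le_rfl (α := ℝ), rfl⟩
  have hmle : m ≤ sInf (Rt '' {δ : ℝ | 0 ≤ δ}) := by
    refine le_csInf hSne ?_
    rintro x ⟨δ, hδ, rfl⟩
    exact hkey δ hδ
  have hSnn : 0 ≤ sInf (Rt '' {δ : ℝ | 0 ≤ δ}) := le_trans hm0 hmle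
  refine ⟨hpart1, ?_, ?_⟩
  · rcases hSnn.eq_or_lt with h | h
    · rw [← h, div_zero, div_zero]
    · gcongr
  · rcases hSnn.eq_or_lt with h | h
    · rw [← h, div_zero]; linarith
    · rw [div_le_iff₀ h, hRt0]
      exact mul_le_mul_of_nonneg_left hmle (by linarith)
end

section
/- Suppose that for every δ ≥ 0 a positive solution κ_δ of the self-consistent equation exists, and that the target coefficients satisfy v_i = 0 for every i. Then R̃_δ = E_δ · σ² ≥ σ² for every δ ≥ 0, inf_{δ ≥ 0} R̃_δ = σ², and R̃_0 = E_0 · σ². Hence, if σ² > 0, the predicted cost of overfitting C̃ = R̃_0 / inf_{δ ≥ 0} R̃_δ equals E_0 exactly; i.e., the bound C̃ ≤ E_0 is attained. -/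
/-- If the target coefficients satisfy `v_i = 0` for every `i`,
then `R̃_δ = E_δ · σ² ≥ σ²` for every `δ ≥ 0`, `inf_{δ ≥ 0} R̃_δ = σ²`, and
`R̃_0 = E_0 · σ²`; hence if `σ² > 0`, the predicted cost of overfitting
`C̃ = R̃_0 / inf_{δ ≥ 0} R̃_δ` equals `E_0` exactly. -/
theorem cost_of_overfitting_attained
    (n : ℕ) (hn : 1 ≤ n)
    (lam : ℕ → ℝ) (hlam_nonneg : ∀ i, 0 ≤ lam i) (hlam_mono : Antitone lam)
    (hlam_summable : Summable lam) (hlam_ne : ∃ i, lam i ≠ 0)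
    (v : ℕ → ℝ) (hv : Summable fun i => v i ^ 2) (hv0 : ∀ i, v i = 0)
    (σ2 : ℝ) (hσ2 : 0 ≤ σ2)
    (κ : ℝ → ℝ)
    (hκ_pos : ∀ δ, 0 ≤ δ → 0 < κ δ)
    (hκ_eq : ∀ δ, 0 ≤ δ → ∑' i, lam i / (lam i + κ δ) + δ / κ δ = (n : ℝ))
    (E : ℝ → ℝ)
    (hE : ∀ δ, E δ = (n : ℝ) / ((n : ℝ) - ∑' i, (lam i / (lam i + κ δ)) ^ 2))
    (Rt : ℝ → ℝ)
    (hRt : ∀ δ, Rt δ = E δ * (∑' i, (1 - lam i / (lam i + κ δ)) ^ 2 * v i ^ 2 + σ2)) :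
    (∀ δ, 0 ≤ δ → Rt δ = E δ * σ2 ∧ σ2 ≤ Rt δ) ∧
      sInf (Rt '' {δ : ℝ | 0 ≤ δ}) = σ2 ∧
      Rt 0 = E 0 * σ2 ∧
      (0 < σ2 → Rt 0 / sInf (Rt '' {δ : ℝ | 0 ≤ δ}) = E 0) := by
  obtain ⟨i₀, hi₀⟩ := hlam_ne
  have hi₀pos : 0 < lam i₀ := lt_of_le_of_ne (hlam_nonneg i₀) (Ne.symm hi₀)
  have hn' : (0:ℝ) < (n:ℝ) := by exact_mod_cast Nat.lt_of_lt_of_le Nat.zero_lt_one hn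
  set S := ∑' i, lam i with hSdef
  have hS_pos : 0 < S :=
    hi₀pos.trans_le (Summable.le_tsum hlam_summable i₀ (fun j _ => hlam_nonneg j))
  have key : ∀ δ, 0 ≤ δ →
      (Rt δ = E δ * σ2 ∧ 1 ≤ E δ ∧
        0 < (n:ℝ) - ∑' i, (lam i / (lam i + κ δ)) ^ 2) ∧
      (0 < δ → ∑' i, (lam i / (lam i + κ δ)) ^ 2 ≤ S * ((n:ℝ) / δ)) := by
    intro δ hδ
    have hk : 0 < κ δ := hκ_pos δ hδ
    set k := κ δ with hkdef
    have hden : ∀ i, 0 < lam i + k := fun i => add_pos_of_nonneg_of_pos (hlam_nonneg i) hk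
    have hL0 : ∀ i, 0 ≤ lam i / (lam i + k) := fun i => div_nonneg (hlam_nonneg i) (hden i).le
    have hL1 : ∀ i, lam i / (lam i + k) ≤ 1 := fun i =>
      div_le_one_of_le₀ (by linarith [hlam_nonneg i]) (hden i).le
    have hLle : ∀ i, lam i / (lam i + k) ≤ lam i / k := fun i =>
      div_le_div_of_nonneg_left (hlam_nonneg i) hk (by linarith [hlam_nonneg i])
    have hsumL : Summable (fun i => lam i / (lam i + k)) :=
      Summable.of_nonneg_of_le hL0 hLle (hlam_summable.div_const k)
    have hL2le : ∀ i, (lam i / (lam i + k)) ^ 2 ≤ lam i / (lam i + k) := fun i => by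
      nlinarith [hL0 i, hL1 i]
    have hsumL2 : Summable (fun i => (lam i / (lam i + k)) ^ 2) :=
      Summable.of_nonneg_of_le (fun i => sq_nonneg _) hL2le hsumL
    have hTle : ∑' i, lam i / (lam i + k) ≤ (n:ℝ) := by
      have heq := hκ_eq δ hδ
      have hδκ : 0 ≤ δ / k := div_nonneg hδ hk.le
      linarith
    have hstrict : ∑' i, (lam i / (lam i + k)) ^ 2 < ∑' i, lam i / (lam i + k) := by
      refine Summable.tsum_lt_tsum hL2le (i := i₀) ?_ hsumL2 hsumL
      have h1 : lam i₀ / (lam i₀ + k) < 1 := (div_lt_one (hden i₀)).2 (by linarith)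
      have h2 : 0 < lam i₀ / (lam i₀ + k) := div_pos hi₀pos (hden i₀)
      nlinarith
    have hT2lt : ∑' i, (lam i / (lam i + k)) ^ 2 < (n:ℝ) := lt_of_lt_of_le hstrict hTle
    have hEpos : 0 < (n:ℝ) - ∑' i, (lam i / (lam i + k)) ^ 2 := by linarith
    have hT2nn : 0 ≤ ∑' i, (lam i / (lam i + k)) ^ 2 := tsum_nonneg (fun i => sq_nonneg _)
    have hE1 : 1 ≤ E δ := by
      rw [hE δ, le_div_iff₀ hEpos]; linarith
    have hRtδ : Rt δ = E δ * σ2 := by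
      rw [hRt δ]
      have h0 : ∑' i, (1 - lam i / (lam i + k)) ^ 2 * v i ^ 2 = 0 := by
        simp [hv0]
      rw [h0]; ring
    refine ⟨⟨hRtδ, hE1, hEpos⟩, ?_⟩
    intro hδpos
    have hkge : δ / (n:ℝ) ≤ k := by
      have heq := hκ_eq δ hδ
      have hTnn : 0 ≤ ∑' i, lam i / (lam i + k) := tsum_nonneg hL0
      have hdk : δ / k ≤ (n:ℝ) := by linarith
      rw [div_le_iff₀ hk] at hdk
      rw [div_le_iff₀ hn']
      linarith
    have hbound : ∀ i, (lam i / (lam i + k)) ^ 2 ≤ lam i * ((n:ℝ) / δ) := by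
      intro i
      have h2 : (1:ℝ) / k ≤ (n:ℝ) / δ := by
        have h3 : 0 < δ / (n:ℝ) := div_pos hδpos hn'
        have := one_div_le_one_div_of_le h3 hkge
        rwa [one_div_div] at this
      have h4 : lam i / k ≤ lam i * ((n:ℝ) / δ) := by
        rw [div_eq_mul_one_div]
        exact mul_le_mul_of_nonneg_left h2 (hlam_nonneg i)
      exact le_trans (hL2le i) (le_trans (hLle i) h4)
    calc ∑' i, (lam i / (lam i + k)) ^ 2 ≤ ∑' i, lam i * ((n:ℝ)/δ) :=
          Summable.tsum_le_tsum hbound hsumL2 (hlam_summable.mul_right _)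
      _ = S * ((n:ℝ)/δ) := tsum_mul_right
  -- basic facts about the image set
  have hmem0 : Rt 0 ∈ Rt '' {δ : ℝ | 0 ≤ δ} := ⟨0, by simp, rfl⟩
  have hne : (Rt '' {δ : ℝ | 0 ≤ δ}).Nonempty := ⟨Rt 0, hmem0⟩
  have hlb : ∀ x ∈ Rt '' {δ : ℝ | 0 ≤ δ}, σ2 ≤ x := by
    rintro x ⟨δ, hδ, rfl⟩
    obtain ⟨⟨h1, h2, _⟩, _⟩ := key δ hδ
    rw [h1]
    exact le_mul_of_one_le_left hσ2 h2
  have hbdd : BddBelow (Rt '' {δ : ℝ | 0 ≤ δ}) := ⟨σ2, hlb⟩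
  have hinf_ge : σ2 ≤ sInf (Rt '' {δ : ℝ | 0 ≤ δ}) := le_csInf hne hlb
  have hRt0 : Rt 0 = E 0 * σ2 := ((key 0 le_rfl).1).1
  have hinf_le : sInf (Rt '' {δ : ℝ | 0 ≤ δ}) ≤ σ2 := by
    rcases eq_or_lt_of_le hσ2 with h0 | hσ2'
    · have : Rt 0 = σ2 := by rw [hRt0, ← h0]; ring
      exact this ▸ csInf_le hbdd hmem0
    · rw [Real.sInf_le_iff hbdd hne]
      intro ε hε
      obtain ⟨δ, hδdef⟩ : ∃ δ, δ = S * (σ2 + ε) / ε + 1 := ⟨_, rfl⟩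
      have hδpos : 0 < δ := by rw [hδdef]; positivity
      have hδS : S < δ := by
        have h1 : S * 1 ≤ S * ((σ2 + ε) / ε) := by
          apply mul_le_mul_of_nonneg_left _ hS_pos.le
          rw [le_div_iff₀ hε]; linarith
        have h2 : S * ((σ2 + ε) / ε) = S * (σ2 + ε) / ε := by ring
        linarith [h1, h2]
      obtain ⟨⟨h1, h2, hEpos⟩, h3⟩ := key δ hδpos.le
      have hT2 := h3 hδpos
      refine ⟨Rt δ, ⟨δ, hδpos.le, rfl⟩, ?_⟩
      rw [h1, hE δ, div_mul_eq_mul_div, div_lt_iff₀ hEpos]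
      -- goal: ↑n * σ2 < (σ2 + ε) * (↑n - ∑' ...)
      have hδε : δ * ε = S * (σ2 + ε) + ε := by
        rw [hδdef]; field_simp
      have hT2δ : (∑' i, (lam i / (lam i + κ δ)) ^ 2) * δ ≤ S * (n:ℝ) := by
        have := mul_le_mul_of_nonneg_right hT2 hδpos.le
        calc (∑' i, (lam i / (lam i + κ δ)) ^ 2) * δ ≤ S * ((n:ℝ)/δ) * δ := this
          _ = S * (n:ℝ) := by
              rw [mul_assoc, div_mul_cancel₀ _ (ne_of_gt hδpos)]
      nlinarith [mul_pos hn' hε, mul_pos hδpos hε, hEpos, hσ2', hn', hδpos,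
        mul_le_mul_of_nonneg_left hT2δ (le_of_lt (by linarith : (0:ℝ) < σ2 + ε))]
  have hinf : sInf (Rt '' {δ : ℝ | 0 ≤ δ}) = σ2 := le_antisymm hinf_le hinf_ge
  refine ⟨fun δ hδ => ⟨((key δ hδ).1).1, ?_⟩, hinf, hRt0, ?_⟩
  · obtain ⟨⟨h1, h2, _⟩, _⟩ := key δ hδ
    rw [h1]; exact le_mul_of_one_le_left hσ2 h2
  · intro hσ2'
    rw [hinf, hRt0, mul_div_assoc, div_self (ne_of_gt hσ2'), mul_one]
end

section
/- (Flatness of the risk curve at small regularization.) For any 0 ≤ δ ≤ δ′ for which positive solutions κ_δ, κ_{δ′} and κ_0 of the self-consistent equation exist, the risk estimates satisfy R̃_δ ≤ E_δ · R̃_{δ′} ≤ E_0 · R̃_{δ′}. In particular, the overfitting coefficient E_0 bounds the multiplicative cost of using any ridge parameter δ smaller than the optimal one. -/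
set_option maxHeartbeats 2000000 in
/-- Flatness of the risk curve at small regularization:
For any `0 ≤ δ ≤ δ'` for which positive solutions `κ_δ`, `κ_{δ'}` and `κ_0`
of the self-consistent equation exist, `R̃_δ ≤ E_δ · R̃_{δ'} ≤ E_0 · R̃_{δ'}`. -/
theorem flatness_of_risk_curve
    (n : ℕ) (hn : 1 ≤ n)
    (lam : ℕ → ℝ) (hlam_nonneg : ∀ i, 0 ≤ lam i) (hlam_mono : Antitone lam)
    (hlam_summable : Summable lam) (hlam_ne : ∃ i, lam i ≠ 0)
    (v : ℕ → ℝ) (hv : Summable fun i => v i ^ 2)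
    (σ2 : ℝ) (hσ2 : 0 ≤ σ2)
    (δ δ' : ℝ) (hδ : 0 ≤ δ) (hδδ' : δ ≤ δ')
    (κ0 κδ κδ' : ℝ) (hκ0_pos : 0 < κ0) (hκδ_pos : 0 < κδ) (hκδ'_pos : 0 < κδ')
    (hκ0_eq : ∑' i, lam i / (lam i + κ0) = (n : ℝ))
    (hκδ_eq : ∑' i, lam i / (lam i + κδ) + δ / κδ = (n : ℝ))
    (hκδ'_eq : ∑' i, lam i / (lam i + κδ') + δ' / κδ' = (n : ℝ))
    (E0 Eδ : ℝ)
    (hE0 : E0 = (n : ℝ) / ((n : ℝ) - ∑' i, (lam i / (lam i + κ0)) ^ 2))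
    (hEδ : Eδ = (n : ℝ) / ((n : ℝ) - ∑' i, (lam i / (lam i + κδ)) ^ 2))
    (Eδ' : ℝ)
    (hEδ' : Eδ' = (n : ℝ) / ((n : ℝ) - ∑' i, (lam i / (lam i + κδ')) ^ 2))
    (Rtδ Rtδ' : ℝ)
    (hRtδ : Rtδ = Eδ * (∑' i, (1 - lam i / (lam i + κδ)) ^ 2 * v i ^ 2 + σ2))
    (hRtδ' : Rtδ' = Eδ' * (∑' i, (1 - lam i / (lam i + κδ')) ^ 2 * v i ^ 2 + σ2)) :
    Rtδ ≤ Eδ * Rtδ' ∧ Eδ * Rtδ' ≤ E0 * Rtδ' := by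
  obtain ⟨i0, hi0⟩ := hlam_ne
  have hi0pos : 0 < lam i0 := (hlam_nonneg i0).lt_of_ne (Ne.symm hi0)
  -- generic facts about f κ i = lam i / (lam i + κ)
  have hden : ∀ κ : ℝ, 0 < κ → ∀ i, 0 < lam i + κ := fun κ hκ i =>
    add_pos_of_nonneg_of_pos (hlam_nonneg i) hκ
  have hf_nonneg : ∀ κ : ℝ, 0 < κ → ∀ i, 0 ≤ lam i / (lam i + κ) := fun κ hκ i =>
    div_nonneg (hlam_nonneg i) (hden κ hκ i).le
  have hf_le_one : ∀ κ : ℝ, 0 < κ → ∀ i, lam i / (lam i + κ) ≤ 1 := fun κ hκ i => by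
    rw [div_le_one (hden κ hκ i)]; linarith
  have hf_summable : ∀ κ : ℝ, 0 < κ → Summable (fun i => lam i / (lam i + κ)) := by
    intro κ hκ
    refine Summable.of_nonneg_of_le (hf_nonneg κ hκ) (fun i => ?_) (hlam_summable.div_const κ)
    exact div_le_div_of_nonneg_left (hlam_nonneg i) hκ (by linarith [hlam_nonneg i])
  have hfsq_le : ∀ κ : ℝ, 0 < κ → ∀ i, (lam i / (lam i + κ)) ^ 2 ≤ lam i / (lam i + κ) := by
    intro κ hκ i
    have := hf_nonneg κ hκ i
    have := hf_le_one κ hκ i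
    nlinarith
  have hfsq_summable : ∀ κ : ℝ, 0 < κ → Summable (fun i => (lam i / (lam i + κ)) ^ 2) := by
    intro κ hκ
    exact Summable.of_nonneg_of_le (fun i => sq_nonneg _) (hfsq_le κ hκ) (hf_summable κ hκ)
  -- pointwise monotonicity in κ
  have hf_mono : ∀ κ κ' : ℝ, 0 < κ → κ ≤ κ' → ∀ i,
      lam i / (lam i + κ') ≤ lam i / (lam i + κ) := by
    intro κ κ' hκ hκκ' i
    exact div_le_div_of_nonneg_left (hlam_nonneg i) (hden κ hκ i) (by linarith)
  have hf_strict : ∀ κ κ' : ℝ, 0 < κ → κ < κ' →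
      ∑' i, lam i / (lam i + κ') < ∑' i, lam i / (lam i + κ) := by
    intro κ κ' hκ hκκ'
    refine Summable.tsum_lt_tsum (hf_mono κ κ' hκ hκκ'.le) (i := i0) ?_
      (hf_summable κ' (by linarith)) (hf_summable κ hκ)
    exact div_lt_div_of_pos_left hi0pos (hden κ hκ i0) (by linarith)
  -- ordering of the κ's
  have hκ0δ : κ0 ≤ κδ := by
    by_contra h
    push_neg at h
    have h1 := hf_strict κδ κ0 hκδ_pos h
    have h2 : 0 ≤ δ / κδ := div_nonneg hδ hκδ_pos.le
    linarith [hκ0_eq, hκδ_eq]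
  have hκδδ' : κδ ≤ κδ' := by
    by_contra h
    push_neg at h
    have h1 := hf_strict κδ' κδ hκδ'_pos h
    have h2 : δ / κδ ≤ δ' / κδ' := le_trans
      (div_le_div_of_nonneg_left hδ hκδ'_pos h.le)
      (div_le_div_of_nonneg_right hδδ' hκδ'_pos.le)
    linarith [hκδ_eq, hκδ'_eq]
  have hκ0δ' : κ0 ≤ κδ' := le_trans hκ0δ hκδδ'
  -- sums of squares
  have hsq_mono : ∀ κ κ' : ℝ, 0 < κ → κ ≤ κ' →
      ∑' i, (lam i / (lam i + κ')) ^ 2 ≤ ∑' i, (lam i / (lam i + κ)) ^ 2 := by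
    intro κ κ' hκ hκκ'
    refine Summable.tsum_le_tsum (fun i => ?_) (hfsq_summable κ' (by linarith)) (hfsq_summable κ hκ)
    exact pow_le_pow_left₀ (hf_nonneg κ' (by linarith) i) (hf_mono κ κ' hκ hκκ' i) 2
  have hS0_lt : ∑' i, (lam i / (lam i + κ0)) ^ 2 < (n : ℝ) := by
    rw [← hκ0_eq]
    refine Summable.tsum_lt_tsum (hfsq_le κ0 hκ0_pos) (i := i0) ?_
      (hfsq_summable κ0 hκ0_pos) (hf_summable κ0 hκ0_pos)
    have h1 : 0 < lam i0 / (lam i0 + κ0) := div_pos hi0pos (hden κ0 hκ0_pos i0)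
    have h2 : lam i0 / (lam i0 + κ0) < 1 := by
      rw [div_lt_one (hden κ0 hκ0_pos i0)]; linarith
    nlinarith
  have hD0_pos : 0 < (n : ℝ) - ∑' i, (lam i / (lam i + κ0)) ^ 2 := by linarith
  have hDδ_pos : 0 < (n : ℝ) - ∑' i, (lam i / (lam i + κδ)) ^ 2 := by
    have := hsq_mono κ0 κδ hκ0_pos hκ0δ
    linarith
  have hDδ'_pos : 0 < (n : ℝ) - ∑' i, (lam i / (lam i + κδ')) ^ 2 := by
    have := hsq_mono κ0 κδ' hκ0_pos hκ0δ'
    linarith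
  -- E comparisons
  have hEδ_nonneg : 0 ≤ Eδ := by
    rw [hEδ]; exact div_nonneg (Nat.cast_nonneg n) hDδ_pos.le
  have hEδ_le_E0 : Eδ ≤ E0 := by
    rw [hEδ, hE0]
    refine div_le_div_of_nonneg_left (Nat.cast_nonneg n) hD0_pos ?_
    have := hsq_mono κ0 κδ hκ0_pos hκ0δ
    linarith
  have hEδ'_ge_one : 1 ≤ Eδ' := by
    rw [hEδ']
    rw [le_div_iff₀ hDδ'_pos]
    have : 0 ≤ ∑' i, (lam i / (lam i + κδ')) ^ 2 :=
      tsum_nonneg (fun i => sq_nonneg _)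
    linarith
  -- the bias sums
  have hg_summable : ∀ κ : ℝ, 0 < κ →
      Summable (fun i => (1 - lam i / (lam i + κ)) ^ 2 * v i ^ 2) := by
    intro κ hκ
    refine Summable.of_nonneg_of_le (fun i => mul_nonneg (sq_nonneg _) (sq_nonneg _))
      (fun i => ?_) hv
    have h1 := hf_nonneg κ hκ i
    have h2 := hf_le_one κ hκ i
    have h3 : (1 - lam i / (lam i + κ)) ^ 2 ≤ 1 := by nlinarith
    simpa using mul_le_mul_of_nonneg_right h3 (sq_nonneg (v i))
  have hS_le : ∑' i, (1 - lam i / (lam i + κδ)) ^ 2 * v i ^ 2 ≤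
      ∑' i, (1 - lam i / (lam i + κδ')) ^ 2 * v i ^ 2 := by
    refine Summable.tsum_le_tsum (fun i => ?_) (hg_summable κδ hκδ_pos) (hg_summable κδ' hκδ'_pos)
    have h1 := hf_mono κδ κδ' hκδ_pos hκδδ' i
    have h2 := hf_le_one κδ hκδ_pos i
    have h3 := hf_nonneg κδ' hκδ'_pos i
    have h4 := hf_le_one κδ' hκδ'_pos i
    have h5 : (1 - lam i / (lam i + κδ)) ^ 2 ≤ (1 - lam i / (lam i + κδ')) ^ 2 :=
      pow_le_pow_left₀ (by linarith) (by linarith) 2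
    exact mul_le_mul_of_nonneg_right h5 (sq_nonneg (v i))
  have hS'_nonneg : 0 ≤ ∑' i, (1 - lam i / (lam i + κδ')) ^ 2 * v i ^ 2 :=
    tsum_nonneg (fun i => mul_nonneg (sq_nonneg _) (sq_nonneg _))
  have key : ∑' i, (1 - lam i / (lam i + κδ)) ^ 2 * v i ^ 2 + σ2 ≤ Rtδ' := by
    rw [hRtδ']
    calc _ ≤ ∑' i, (1 - lam i / (lam i + κδ')) ^ 2 * v i ^ 2 + σ2 := by linarith
    _ ≤ Eδ' * (∑' i, (1 - lam i / (lam i + κδ')) ^ 2 * v i ^ 2 + σ2) :=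
        le_mul_of_one_le_left (by linarith) hEδ'_ge_one
  have hRtδ'_nonneg : 0 ≤ Rtδ' := by
    rw [hRtδ']
    exact mul_nonneg (by linarith) (by linarith)
  constructor
  · rw [hRtδ]
    exact mul_le_mul_of_nonneg_left key hEδ_nonneg
  · exact mul_le_mul_of_nonneg_right hEδ_le_E0 hRtδ'_nonneg
end

section
/- Suppose (λ_i)_{i≥1} is a nonincreasing summable sequence of nonnegative reals with λ_i > 0 for infinitely many i, and n ≥ 1 is an integer. Then for every δ ≥ 0 there exists a unique κ_δ > 0 satisfying Σ_{i≥1} λ_i/(λ_i + κ_δ) + δ/κ_δ = n; the map δ ↦ κ_δ is strictly increasing on [0, ∞); the map δ ↦ Σ_{i≥1} (λ_i/(λ_i + κ_δ))² is nonincreasing; and consequently E_δ ≤ E_0 for every δ ≥ 0. -/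
namespace KappaAux

variable {lam : ℕ → ℝ}

lemma term_nonneg (hnn : ∀ i, 0 ≤ lam i) {κ : ℝ} (hκ : 0 < κ) (i : ℕ) :
    0 ≤ lam i / (lam i + κ) := by
  have := hnn i; positivity

lemma term_le_one (hnn : ∀ i, 0 ≤ lam i) {κ : ℝ} (hκ : 0 < κ) (i : ℕ) :
    lam i / (lam i + κ) ≤ 1 := by
  have := hnn i
  rw [div_le_one (by linarith)]; linarith

lemma term_le (hnn : ∀ i, 0 ≤ lam i) {κ : ℝ} (hκ : 0 < κ) (i : ℕ) :
    lam i / (lam i + κ) ≤ lam i / κ := by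
  have := hnn i
  gcongr
  linarith

lemma summable_term (hs : Summable lam) (hnn : ∀ i, 0 ≤ lam i) {κ : ℝ} (hκ : 0 < κ) :
    Summable fun i => lam i / (lam i + κ) :=
  Summable.of_nonneg_of_le (term_nonneg hnn hκ) (term_le hnn hκ) (hs.div_const κ)

lemma term_anti (hnn : ∀ i, 0 ≤ lam i) {a b : ℝ} (ha : 0 < a) (hab : a ≤ b) (i : ℕ) :
    lam i / (lam i + b) ≤ lam i / (lam i + a) := by
  have := hnn i
  gcongr <;> linarith

lemma S_anti (hs : Summable lam) (hnn : ∀ i, 0 ≤ lam i) {a b : ℝ} (ha : 0 < a) (hab : a ≤ b) :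
    ∑' i, lam i / (lam i + b) ≤ ∑' i, lam i / (lam i + a) :=
  Summable.tsum_le_tsum (term_anti hnn ha hab) (summable_term hs hnn (ha.trans_le hab)) (summable_term hs hnn ha)

lemma S_le (hs : Summable lam) (hnn : ∀ i, 0 ≤ lam i) {b : ℝ} (hb : 0 < b) :
    ∑' i, lam i / (lam i + b) ≤ (∑' i, lam i) / b := by
  rw [← tsum_div_const]
  exact Summable.tsum_le_tsum (term_le hnn hb) (summable_term hs hnn hb) (hs.div_const b)

end KappaAux

namespace KappaAux

variable {lam : ℕ → ℝ}

/-- For small `a` the sum exceeds `n`. -/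
lemma exists_lower (hs : Summable lam) (hnn : ∀ i, 0 ≤ lam i)
    (hinf : {i : ℕ | 0 < lam i}.Infinite) (n : ℕ) :
    ∃ a : ℝ, 0 < a ∧ (n : ℝ) ≤ ∑' i, lam i / (lam i + a) := by
  rcases Nat.eq_zero_or_pos n with hn0 | hn0
  · exact ⟨1, one_pos, by rw [hn0]; exact_mod_cast tsum_nonneg (term_nonneg hnn one_pos)⟩
  obtain ⟨T, hTsub, hTcard⟩ := hinf.exists_subset_card_eq (2 * n)
  have hT : T.Nonempty := by
    rw [← Finset.card_pos, hTcard]; omega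
  · set ε := T.inf' hT lam with hε
    have hεpos : 0 < ε := by
      obtain ⟨i, hi, hival⟩ := T.exists_mem_eq_inf' hT lam
      rw [hε, hival]
      exact hTsub hi
    refine ⟨ε, hεpos, ?_⟩
    have hterm : ∀ i ∈ T, (1 : ℝ) / 2 ≤ lam i / (lam i + ε) := by
      intro i hi
      have h1 : ε ≤ lam i := Finset.inf'_le lam hi
      have h2 : 0 < lam i + ε := by linarith
      rw [div_le_div_iff₀ (by norm_num) h2]
      linarith
    have hsum : (n : ℝ) ≤ ∑ i ∈ T, lam i / (lam i + ε) := by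
      have := Finset.card_nsmul_le_sum T _ _ hterm
      rw [hTcard] at this
      have h2 : ((2 * n : ℕ) : ℝ) * (1 / 2) = (n : ℝ) := by push_cast; ring
      calc (n : ℝ) = ((2 * n : ℕ) : ℝ) * (1 / 2) := h2.symm
        _ ≤ _ := by simpa [nsmul_eq_mul] using this
    exact hsum.trans (Summable.sum_le_tsum T (fun i _ => term_nonneg hnn hεpos i)
      (summable_term hs hnn hεpos))

/-- Continuity of the self-consistent function on a compact interval. -/
lemma contOn (hs : Summable lam) (hnn : ∀ i, 0 ≤ lam i) {a b : ℝ} (ha : 0 < a) :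
    ContinuousOn (fun x => ∑' i, lam i / (lam i + x)) (Set.Icc a b) := by
  refine continuousOn_tsum (u := fun i => lam i / a) (fun i => ?_) (hs.div_const a) (fun i x hx => ?_)
  · apply ContinuousOn.div continuousOn_const (by fun_prop)
    intro x hx
    have := hnn i
    have := hx.1
    intro h; nlinarith [h]
  · have hxa : (0:ℝ) < x := lt_of_lt_of_le ha hx.1
    have h1 : 0 ≤ lam i / (lam i + x) := term_nonneg hnn hxa i
    rw [Real.norm_of_nonneg h1]
    have h2 := hnn i
    have hx1 := hx.1
    exact div_le_div_of_nonneg_left h2 ha (by linarith)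

end KappaAux

namespace KappaAux

variable {lam : ℕ → ℝ}

lemma S_strict_anti (hs : Summable lam) (hnn : ∀ i, 0 ≤ lam i)
    (hinf : {i : ℕ | 0 < lam i}.Infinite) {a b : ℝ} (ha : 0 < a) (hab : a < b) :
    ∑' i, lam i / (lam i + b) < ∑' i, lam i / (lam i + a) := by
  obtain ⟨i0, hi0⟩ := hinf.nonempty
  refine Summable.tsum_lt_tsum (i := i0) (term_anti hnn ha hab.le) ?_
    (summable_term hs hnn (ha.trans hab)) (summable_term hs hnn ha)
  have h0 : 0 < lam i0 := hi0
  exact div_lt_div_of_pos_left h0 (by linarith) (by linarith)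

lemma f_strict_anti (hs : Summable lam) (hnn : ∀ i, 0 ≤ lam i)
    (hinf : {i : ℕ | 0 < lam i}.Infinite) {δ : ℝ} (hδ : 0 ≤ δ)
    {a b : ℝ} (ha : 0 < a) (hab : a < b) :
    ∑' i, lam i / (lam i + b) + δ / b < ∑' i, lam i / (lam i + a) + δ / a := by
  have h1 := S_strict_anti hs hnn hinf ha hab
  have h2 : δ / b ≤ δ / a := div_le_div_of_nonneg_left hδ ha hab.le
  linarith

lemma exists_sol (n : ℕ) (hn : 1 ≤ n) (hs : Summable lam) (hnn : ∀ i, 0 ≤ lam i)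
    (hinf : {i : ℕ | 0 < lam i}.Infinite) {δ : ℝ} (hδ : 0 ≤ δ) :
    ∃ κ : ℝ, 0 < κ ∧ ∑' i, lam i / (lam i + κ) + δ / κ = (n : ℝ) := by
  obtain ⟨a, ha, hna⟩ := exists_lower hs hnn hinf n
  set b := max a ((∑' i, lam i) + δ + 1) with hbdef
  have hb0 : 0 < b := lt_of_lt_of_le ha (le_max_left _ _)
  have hab : a ≤ b := le_max_left _ _
  have hL : (0:ℝ) ≤ ∑' i, lam i := tsum_nonneg hnn
  have hb1 : (∑' i, lam i) + δ + 1 ≤ b := le_max_right _ _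
  have hfb : ∑' i, lam i / (lam i + b) + δ / b ≤ (n : ℝ) := by
    have h1 : ∑' i, lam i / (lam i + b) ≤ (∑' i, lam i) / b := S_le hs hnn hb0
    have h2 : (∑' i, lam i) / b + δ / b ≤ 1 := by
      rw [← add_div, div_le_one hb0]; linarith
    have h3 : (1:ℝ) ≤ n := by exact_mod_cast hn
    linarith
  have hfa : (n : ℝ) ≤ ∑' i, lam i / (lam i + a) + δ / a := by
    have : 0 ≤ δ / a := div_nonneg hδ ha.le
    linarith
  have hcont : ContinuousOn (fun x => ∑' i, lam i / (lam i + x) + δ / x) (Set.Icc a b) := by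
    apply (contOn hs hnn ha).add
    apply ContinuousOn.div continuousOn_const continuousOn_id
    intro x hx; exact ne_of_gt (lt_of_lt_of_le ha hx.1)
  obtain ⟨κ, hκmem, hκeq⟩ := intermediate_value_Icc' hab hcont ⟨hfb, hfa⟩
  exact ⟨κ, lt_of_lt_of_le ha hκmem.1, hκeq⟩

lemma sol_unique (hs : Summable lam) (hnn : ∀ i, 0 ≤ lam i)
    (hinf : {i : ℕ | 0 < lam i}.Infinite) {δ : ℝ} (hδ : 0 ≤ δ) {c : ℝ}
    {κ κ' : ℝ} (hκ : 0 < κ) (hκ' : 0 < κ')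
    (h : ∑' i, lam i / (lam i + κ) + δ / κ = c)
    (h' : ∑' i, lam i / (lam i + κ') + δ / κ' = c) : κ' = κ := by
  rcases lt_trichotomy κ' κ with hlt | heq | hgt
  · have := f_strict_anti hs hnn hinf hδ hκ' hlt
    rw [h, h'] at this; exact absurd this (lt_irrefl _)
  · exact heq
  · have := f_strict_anti hs hnn hinf hδ hκ hgt
    rw [h, h'] at this; exact absurd this (lt_irrefl _)

lemma sq_term_le (hnn : ∀ i, 0 ≤ lam i) {κ : ℝ} (hκ : 0 < κ) (i : ℕ) :
    (lam i / (lam i + κ)) ^ 2 ≤ lam i / (lam i + κ) := by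
  have h0 := term_nonneg hnn hκ i
  have h1 := term_le_one hnn hκ i
  nlinarith

lemma summable_sq (hs : Summable lam) (hnn : ∀ i, 0 ≤ lam i) {κ : ℝ} (hκ : 0 < κ) :
    Summable fun i => (lam i / (lam i + κ)) ^ 2 :=
  Summable.of_nonneg_of_le (fun i => sq_nonneg _) (sq_term_le hnn hκ)
    (summable_term hs hnn hκ)

end KappaAux


/-- For a nonincreasing summable nonnegative spectrum with
infinitely many positive eigenvalues, for every `δ ≥ 0` there is a unique
`κ_δ > 0` solving the self-consistent equation; `δ ↦ κ_δ` is strictly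
increasing on `[0, ∞)`; `δ ↦ Σ_i (λ_i/(λ_i + κ_δ))²` is nonincreasing; and
consequently `E_δ ≤ E_0` for every `δ ≥ 0`. -/
theorem kappa_exists_unique_and_monotone
    (n : ℕ) (hn : 1 ≤ n)
    (lam : ℕ → ℝ) (hlam_nonneg : ∀ i, 0 ≤ lam i) (hlam_mono : Antitone lam)
    (hlam_summable : Summable lam) (hlam_inf : {i : ℕ | 0 < lam i}.Infinite) :
    ∃ κ : ℝ → ℝ,
      (∀ δ, 0 ≤ δ →
        (0 < κ δ ∧ ∑' i, lam i / (lam i + κ δ) + δ / κ δ = (n : ℝ)) ∧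
        (∀ κ' : ℝ, 0 < κ' → ∑' i, lam i / (lam i + κ') + δ / κ' = (n : ℝ) →
          κ' = κ δ)) ∧
      StrictMonoOn κ (Set.Ici 0) ∧
      AntitoneOn (fun δ => ∑' i, (lam i / (lam i + κ δ)) ^ 2) (Set.Ici 0) ∧
      (∀ δ, 0 ≤ δ →
        (n : ℝ) / ((n : ℝ) - ∑' i, (lam i / (lam i + κ δ)) ^ 2) ≤
          (n : ℝ) / ((n : ℝ) - ∑' i, (lam i / (lam i + κ 0)) ^ 2)) := by
  classical
  set κ : ℝ → ℝ := fun δ =>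
    if h : 0 ≤ δ then
      (KappaAux.exists_sol n hn hlam_summable hlam_nonneg hlam_inf h).choose
    else 1 with hκdef
  have hspec : ∀ δ : ℝ, (h : 0 ≤ δ) →
      0 < κ δ ∧ ∑' i, lam i / (lam i + κ δ) + δ / κ δ = (n : ℝ) := by
    intro δ h
    simp only [hκdef, dif_pos h]
    exact (KappaAux.exists_sol n hn hlam_summable hlam_nonneg hlam_inf h).choose_spec
  have huniq : ∀ δ : ℝ, 0 ≤ δ → ∀ κ' : ℝ, 0 < κ' →
      ∑' i, lam i / (lam i + κ') + δ / κ' = (n : ℝ) → κ' = κ δ := by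
    intro δ hδ κ' hκ' heq
    exact KappaAux.sol_unique hlam_summable hlam_nonneg hlam_inf hδ (hspec δ hδ).1 hκ'
      (hspec δ hδ).2 heq
  have hmono : StrictMonoOn κ (Set.Ici 0) := by
    intro δ1 h1 δ2 h2 hlt
    simp only [Set.mem_Ici] at h1 h2
    obtain ⟨hκ1, he1⟩ := hspec δ1 h1
    obtain ⟨hκ2, he2⟩ := hspec δ2 h2
    by_contra hle
    push_neg at hle
    have hS : ∑' i, lam i / (lam i + κ δ1) ≤ ∑' i, lam i / (lam i + κ δ2) :=
      KappaAux.S_anti hlam_summable hlam_nonneg hκ2 hle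
    have hd1 : δ2 / κ δ1 ≤ δ2 / κ δ2 :=
      div_le_div_of_nonneg_left (h1.trans hlt.le) hκ2 hle
    have hd2 : δ1 / κ δ1 < δ2 / κ δ1 := by
      exact div_lt_div_of_pos_right hlt hκ1
    linarith
  refine ⟨κ, fun δ hδ => ⟨hspec δ hδ, huniq δ hδ⟩, hmono, ?_, ?_⟩
  · -- Antitone of squared sums
    intro δ1 h1 δ2 h2 hle
    simp only [Set.mem_Ici] at h1 h2
    have hκ1 := (hspec δ1 h1).1
    have hκ2 := (hspec δ2 h2).1
    have hκle : κ δ1 ≤ κ δ2 := hmono.monotoneOn h1 h2 hle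
    refine Summable.tsum_le_tsum (fun i => ?_)
      (KappaAux.summable_sq hlam_summable hlam_nonneg hκ2)
      (KappaAux.summable_sq hlam_summable hlam_nonneg hκ1)
    have := KappaAux.term_anti hlam_nonneg hκ1 hκle i
    have h0 := KappaAux.term_nonneg hlam_nonneg hκ2 i
    nlinarith [KappaAux.term_nonneg hlam_nonneg hκ1 i]
  · -- final inequality
    intro δ hδ
    have h00 : (0:ℝ) ≤ 0 := le_refl 0
    obtain ⟨hκ0, he0⟩ := hspec 0 h00
    have hS0 : ∑' i, lam i / (lam i + κ 0) = (n : ℝ) := by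
      rw [zero_div, add_zero] at he0; exact he0
    -- g 0 < n
    have hg0lt : ∑' i, (lam i / (lam i + κ 0)) ^ 2 < (n : ℝ) := by
      rw [← hS0]
      obtain ⟨i0, hi0⟩ := hlam_inf.nonempty
      have h0 : 0 < lam i0 := hi0
      refine Summable.tsum_lt_tsum (i := i0) (KappaAux.sq_term_le hlam_nonneg hκ0) ?_
        (KappaAux.summable_sq hlam_summable hlam_nonneg hκ0)
        (KappaAux.summable_term hlam_summable hlam_nonneg hκ0)
      have ht0 : 0 < lam i0 / (lam i0 + κ 0) := div_pos h0 (by linarith)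
      have ht1 : lam i0 / (lam i0 + κ 0) < 1 := by
        rw [div_lt_one (by linarith)]; linarith
      nlinarith
    have hgle : ∑' i, (lam i / (lam i + κ δ)) ^ 2 ≤ ∑' i, (lam i / (lam i + κ 0)) ^ 2 := by
      have hκδ := (hspec δ hδ).1
      have hκle : κ 0 ≤ κ δ := by
        rcases eq_or_lt_of_le hδ with h | h
        · rw [← h]
        · exact (hmono (Set.mem_Ici.mpr h00) (Set.mem_Ici.mpr hδ) h).le
      refine Summable.tsum_le_tsum (fun i => ?_)
        (KappaAux.summable_sq hlam_summable hlam_nonneg hκδ)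
        (KappaAux.summable_sq hlam_summable hlam_nonneg hκ0)
      have := KappaAux.term_anti hlam_nonneg hκ0 hκle i
      have h0 := KappaAux.term_nonneg hlam_nonneg hκδ i
      nlinarith [KappaAux.term_nonneg hlam_nonneg hκ0 i]
    have hden0 : (0:ℝ) < (n : ℝ) - ∑' i, (lam i / (lam i + κ 0)) ^ 2 := by linarith
    exact div_le_div_of_nonneg_left (Nat.cast_nonneg n) hden0 (by linarith)
end

section
/- For any integer k with 0 ≤ k < n such that λ_{k+1} > 0 and R_k > n, the overfitting coefficient satisfies E_0 ≤ (1 − k/n)^{−2} · (1 − n/R_k)^{−1}. -/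
lemma tsum_cauchy_schwarz (f g : ℕ → ℝ) (hf0 : ∀ i, 0 ≤ f i) (hg0 : ∀ i, 0 ≤ g i)
    (hf : Summable fun i => f i ^ 2) (hg : Summable fun i => g i ^ 2) :
    (∑' i, f i * g i) ^ 2 ≤ (∑' i, f i ^ 2) * ∑' i, g i ^ 2 := by
  have hfg : Summable fun i => f i * g i := by
    refine Summable.of_nonneg_of_le (fun i => mul_nonneg (hf0 i) (hg0 i)) (fun i => ?_)
      ((hf.add hg).div_const 2)
    nlinarith [sq_nonneg (f i - g i)]
  have hA0 : 0 ≤ ∑' i, f i ^ 2 := tsum_nonneg fun i => sq_nonneg _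
  have hB0 : 0 ≤ ∑' i, g i ^ 2 := tsum_nonneg fun i => sq_nonneg _
  have key : ∑' i, f i * g i ≤ Real.sqrt (∑' i, f i ^ 2) * Real.sqrt (∑' i, g i ^ 2) := by
    refine Summable.tsum_le_of_sum_le hfg fun s => ?_
    have h1 : (∑ i ∈ s, f i * g i) ^ 2 ≤ (∑ i ∈ s, f i ^ 2) * ∑ i ∈ s, g i ^ 2 :=
      Finset.sum_mul_sq_le_sq_mul_sq s f g
    have h2 : ∑ i ∈ s, f i * g i ≤
        Real.sqrt ((∑ i ∈ s, f i ^ 2) * ∑ i ∈ s, g i ^ 2) := by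
      calc ∑ i ∈ s, f i * g i
          = Real.sqrt ((∑ i ∈ s, f i * g i) ^ 2) :=
            (Real.sqrt_sq (Finset.sum_nonneg fun i _ => mul_nonneg (hf0 i) (hg0 i))).symm
        _ ≤ _ := Real.sqrt_le_sqrt h1
    refine h2.trans ?_
    rw [Real.sqrt_mul (Finset.sum_nonneg fun i _ => sq_nonneg _)]
    exact mul_le_mul
      (Real.sqrt_le_sqrt (Summable.sum_le_tsum s (fun i _ => sq_nonneg _) hf))
      (Real.sqrt_le_sqrt (Summable.sum_le_tsum s (fun i _ => sq_nonneg _) hg))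
      (Real.sqrt_nonneg _) (Real.sqrt_nonneg _)
  have h0 : 0 ≤ ∑' i, f i * g i := tsum_nonneg fun i => mul_nonneg (hf0 i) (hg0 i)
  calc (∑' i, f i * g i) ^ 2
      ≤ (Real.sqrt (∑' i, f i ^ 2) * Real.sqrt (∑' i, g i ^ 2)) ^ 2 :=
        pow_le_pow_left₀ h0 key 2
    _ = (∑' i, f i ^ 2) * ∑' i, g i ^ 2 := by
        rw [mul_pow, Real.sq_sqrt hA0, Real.sq_sqrt hB0]

set_option maxHeartbeats 1000000 in
/-- For any `k < n` with `λ_{k+1} > 0` and `R_k > n`,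
`E_0 ≤ (1 − k/n)⁻² · (1 − n/R_k)⁻¹`.
(Here `lam i` denotes `λ_{i+1}`, so `∑' i, lam (k+i) = Σ_{i>k} λ_i` and
`lam k = λ_{k+1}`.) -/
theorem e0_upper_bound_benign
    (n : ℕ) (hn : 1 ≤ n)
    (lam : ℕ → ℝ) (hlam_nonneg : ∀ i, 0 ≤ lam i) (hlam_mono : Antitone lam)
    (hlam_summable : Summable lam) (hlam_ne : ∃ i, lam i ≠ 0)
    (κ0 : ℝ) (hκ0 : 0 < κ0)
    (hκ0_eq : ∑' i, lam i / (lam i + κ0) = (n : ℝ))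
    (E0 : ℝ)
    (hE0 : E0 = (n : ℝ) / ((n : ℝ) - ∑' i, (lam i / (lam i + κ0)) ^ 2))
    (k : ℕ) (hk : k < n) (hlamk : 0 < lam k)
    (Rk : ℝ) (hRk : Rk = (∑' i, lam (k + i)) ^ 2 / ∑' i, lam (k + i) ^ 2)
    (hRkn : (n : ℝ) < Rk) :
    E0 ≤ ((1 - (k : ℝ) / n) ^ 2)⁻¹ * (1 - (n : ℝ) / Rk)⁻¹ := by
  have hpos : ∀ i, 0 < lam i + κ0 := fun i => add_pos_of_nonneg_of_pos (hlam_nonneg i) hκ0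
  set L : ℕ → ℝ := fun i => lam i / (lam i + κ0) with hLdef
  have hL0 : ∀ i, 0 ≤ L i := fun i => div_nonneg (hlam_nonneg i) (hpos i).le
  have hL1 : ∀ i, L i ≤ 1 := fun i =>
    div_le_one_of_le₀ (le_add_of_nonneg_right hκ0.le) (hpos i).le
  -- summability facts
  have hLle : ∀ i, L i ≤ lam i / κ0 := by
    intro i
    rw [hLdef]
    rw [div_le_div_iff₀ (hpos i) hκ0]
    nlinarith [hlam_nonneg i]
  have hsumL : Summable L :=
    Summable.of_nonneg_of_le hL0 hLle (hlam_summable.div_const κ0)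
  have hsumL2 : Summable (fun i => L i ^ 2) :=
    Summable.of_nonneg_of_le (fun i => sq_nonneg _)
      (fun i => by nlinarith [hL0 i, hL1 i]) hsumL
  have hsumlam2 : Summable (fun i => lam i ^ 2) :=
    Summable.of_nonneg_of_le (fun i => sq_nonneg _)
      (fun i => by
        have := hlam_mono (Nat.zero_le i)
        nlinarith [hlam_nonneg i])
      (hlam_summable.mul_left (lam 0))
  have hsumq : Summable (fun i => lam i / (lam i + κ0) ^ 2) := by
    refine Summable.of_nonneg_of_le
      (fun i => div_nonneg (hlam_nonneg i) (sq_nonneg _))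
      (fun i => ?_) (hlam_summable.div_const (κ0 ^ 2))
    rw [div_le_div_iff₀ (pow_pos (hpos i) 2) (pow_pos hκ0 2)]
    nlinarith [hlam_nonneg i, hκ0.le, sq_nonneg (lam i)]
  have tail : ∀ (f : ℕ → ℝ), Summable f → Summable (fun i => f (k + i)) := by
    intro f hf
    have := (summable_nat_add_iff (f := f) k).2 hf
    simpa [add_comm] using this
  have hsplit : ∀ (f : ℕ → ℝ), Summable f →
      (∑ i ∈ Finset.range k, f i) + ∑' i, f (k + i) = ∑' i, f i := by
    intro f hf
    have h1 : ∑' i, f (k + i) = ∑' i, f (i + k) :=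
      tsum_congr fun i => by rw [add_comm]
    rw [h1]
    exact Summable.sum_add_tsum_nat_add k hf
  set T := ∑' i, lam (k + i) with hT
  set P := ∑' i, lam (k + i) ^ 2 with hP
  set S := ∑' i, L (k + i) with hS
  set Q := ∑' i, lam (k + i) / (lam (k + i) + κ0) ^ 2 with hQ
  have hT0 : 0 < T :=
    Summable.tsum_pos (tail _ hlam_summable) (fun i => hlam_nonneg _) 0 (by simpa using hlamk)
  have hP0 : 0 < P :=
    Summable.tsum_pos (tail _ hsumlam2) (fun i => sq_nonneg _) 0 (by simpa using pow_pos hlamk 2)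
  have hS0 : 0 ≤ S := tsum_nonneg fun i => hL0 _
  have hn0 : (0:ℝ) < n := by exact_mod_cast hn
  have hRk0 : 0 < Rk := lt_trans hn0 hRkn
  -- bounds on S
  have hsplitL := hsplit L hsumL
  rw [hκ0_eq] at hsplitL
  have hhead_le : (∑ i ∈ Finset.range k, L i) ≤ k := by
    calc (∑ i ∈ Finset.range k, L i) ≤ ∑ i ∈ Finset.range k, (1:ℝ) :=
          Finset.sum_le_sum fun i _ => hL1 i
      _ = k := by simp
  have hhead_0 : 0 ≤ ∑ i ∈ Finset.range k, L i :=
    Finset.sum_nonneg fun i _ => hL0 i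
  have hS_ge : (n : ℝ) - k ≤ S := by linarith
  have hS_le : S ≤ n := by linarith
  -- D ≥ κ0 * Q
  have hterm : ∀ i, L i - L i ^ 2 = κ0 * (lam i / (lam i + κ0) ^ 2) := by
    intro i
    rw [hLdef]
    have := (hpos i).ne'
    field_simp
    ring
  have hDQ : κ0 * Q ≤ (n : ℝ) - ∑' i, L i ^ 2 := by
    have h1 : ∑' i, (L i - L i ^ 2) = (n : ℝ) - ∑' i, L i ^ 2 := by
      rw [Summable.tsum_sub hsumL hsumL2]
      congr 1
    have hsub : Summable (fun i => L i - L i ^ 2) := hsumL.sub hsumL2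
    have hsplit2 := hsplit _ hsub
    have hhead2 : 0 ≤ ∑ i ∈ Finset.range k, (L i - L i ^ 2) :=
      Finset.sum_nonneg fun i _ => by nlinarith [hL0 i, hL1 i]
    have h2 : ∑' i, (L (k + i) - L (k + i) ^ 2) = κ0 * Q := by
      rw [hQ, ← tsum_mul_left]
      exact tsum_congr fun i => hterm (k + i)
    linarith [hsplit2, hhead2, h1, h2]
  -- Cauchy-Schwarz 1 : S^2 ≤ Q * T
  have CS1 : S ^ 2 ≤ Q * T := by
    have hf0 : ∀ i, 0 ≤ Real.sqrt (lam (k + i)) / (lam (k + i) + κ0) :=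
      fun i => div_nonneg (Real.sqrt_nonneg _) (hpos _).le
    have hg0 : ∀ i, 0 ≤ Real.sqrt (lam (k + i)) := fun i => Real.sqrt_nonneg _
    have hfg : ∀ i, (Real.sqrt (lam (k + i)) / (lam (k + i) + κ0)) *
        Real.sqrt (lam (k + i)) = L (k + i) := by
      intro i
      rw [hLdef, div_mul_eq_mul_div, Real.mul_self_sqrt (hlam_nonneg _)]
    have hf2 : ∀ i, (Real.sqrt (lam (k + i)) / (lam (k + i) + κ0)) ^ 2 =
        lam (k + i) / (lam (k + i) + κ0) ^ 2 := by
      intro i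
      rw [div_pow, Real.sq_sqrt (hlam_nonneg _)]
    have hg2 : ∀ i, (Real.sqrt (lam (k + i))) ^ 2 = lam (k + i) :=
      fun i => Real.sq_sqrt (hlam_nonneg _)
    have h := tsum_cauchy_schwarz _ _ hf0 hg0
      (by simp only [hf2]; exact tail _ hsumq)
      (by simp only [hg2]; exact tail _ hlam_summable)
    rw [tsum_congr hfg, tsum_congr hf2, tsum_congr hg2] at h
    exact h
  -- Cauchy-Schwarz 2 : T^2 ≤ S * (P + κ0 * T)
  have CS2 : T ^ 2 ≤ S * (P + κ0 * T) := by
    have hf0 : ∀ i, 0 ≤ Real.sqrt (L (k + i)) := fun i => Real.sqrt_nonneg _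
    have hg0 : ∀ i, 0 ≤ Real.sqrt (lam (k + i) * (lam (k + i) + κ0)) :=
      fun i => Real.sqrt_nonneg _
    have hfg : ∀ i, Real.sqrt (L (k + i)) *
        Real.sqrt (lam (k + i) * (lam (k + i) + κ0)) = lam (k + i) := by
      intro i
      rw [← Real.sqrt_mul (hL0 _)]
      have he : L (k + i) * (lam (k + i) * (lam (k + i) + κ0)) = lam (k + i) ^ 2 := by
        have hne := (hpos (k + i)).ne'
        rw [hLdef]
        field_simp
      rw [he, Real.sqrt_sq (hlam_nonneg _)]
    have hf2 : ∀ i, (Real.sqrt (L (k + i))) ^ 2 = L (k + i) :=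
      fun i => Real.sq_sqrt (hL0 _)
    have hg2 : ∀ i, (Real.sqrt (lam (k + i) * (lam (k + i) + κ0))) ^ 2 =
        lam (k + i) ^ 2 + lam (k + i) * κ0 := by
      intro i
      rw [Real.sq_sqrt (mul_nonneg (hlam_nonneg _) (hpos _).le)]
      ring
    have hsumg2 : Summable (fun i => lam (k + i) ^ 2 + lam (k + i) * κ0) :=
      (tail _ hsumlam2).add ((tail _ hlam_summable).mul_right κ0)
    have h := tsum_cauchy_schwarz _ _ hf0 hg0
      (by simp only [hf2]; exact tail _ hsumL)
      (by simp only [hg2]; exact hsumg2)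
    rw [tsum_congr hfg, tsum_congr hf2, tsum_congr hg2,
      Summable.tsum_add (tail _ hsumlam2) ((tail _ hlam_summable).mul_right κ0),
      tsum_mul_right] at h
    calc T ^ 2 ≤ S * (P + T * κ0) := h
      _ = S * (P + κ0 * T) := by ring
  -- combine: S - S^2 * P / T^2 ≤ κ0 * Q
  have hT2 : (0:ℝ) < T ^ 2 := pow_pos hT0 2
  have h1 : S * T ^ 2 - S ^ 2 * P ≤ κ0 * Q * T ^ 2 := by
    nlinarith [mul_le_mul_of_nonneg_left CS2 hS0,
      mul_le_mul_of_nonneg_left CS1 (mul_nonneg hκ0.le hT0.le)]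
  have h2 : S - S ^ 2 * P / T ^ 2 ≤ κ0 * Q := by
    have hc : S ^ 2 * P / T ^ 2 * T ^ 2 = S ^ 2 * P :=
      div_mul_cancel₀ _ (ne_of_gt hT2)
    have h3 : (S - S ^ 2 * P / T ^ 2) * T ^ 2 ≤ κ0 * Q * T ^ 2 := by
      rw [sub_mul, hc]; linarith
    exact le_of_mul_le_mul_right h3 hT2
  -- rewrite via Rk
  have hRkTP : S ^ 2 / Rk = S ^ 2 * P / T ^ 2 := by
    rw [hRk]
    rw [div_div_eq_mul_div]
  set m : ℝ := (n : ℝ) - k with hm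
  have hm1 : 1 ≤ m := by
    have : (k : ℝ) + 1 ≤ n := by exact_mod_cast hk
    rw [hm]; linarith
  have hm0 : 0 ≤ m := by linarith
  have hmS : m ≤ S := hS_ge
  have hm2S2 : m ^ 2 ≤ S ^ 2 := pow_le_pow_left₀ hm0 hmS 2
  have key : m ^ 2 * Rk - m ^ 2 * n ≤ S * n * Rk - S ^ 2 * n := by
    nlinarith [mul_nonneg (sub_nonneg.2 hRkn.le) (sub_nonneg.2 hm2S2),
      mul_nonneg (mul_nonneg hRk0.le hS0) (sub_nonneg.2 hS_le)]
  have h4 : m ^ 2 * (1 / n - 1 / Rk) ≤ S - S ^ 2 / Rk := by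
    have e1 : m ^ 2 * (1 / (n:ℝ) - 1 / Rk) = (m ^ 2 * Rk - m ^ 2 * n) / (n * Rk) := by
      field_simp
    have e2 : S - S ^ 2 / Rk = (S * n * Rk - S ^ 2 * n) / (n * Rk) := by
      field_simp
    rw [e1, e2]
    exact div_le_div_of_nonneg_right key (by positivity) |>.trans_eq rfl
  -- final assembly
  have hc0 : 0 < m ^ 2 * (1 / (n:ℝ) - 1 / Rk) := by
    have : 1 / Rk < 1 / (n:ℝ) := one_div_lt_one_div_of_lt hn0 hRkn
    have hm2 : (0:ℝ) < m ^ 2 := by positivity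
    exact mul_pos hm2 (by linarith)
  have hD_ge : m ^ 2 * (1 / (n:ℝ) - 1 / Rk) ≤ (n : ℝ) - ∑' i, L i ^ 2 := by
    have := hRkTP ▸ h4
    linarith [hDQ, h2]
  have hE0le : E0 ≤ (n : ℝ) / (m ^ 2 * (1 / (n:ℝ) - 1 / Rk)) := by
    rw [hE0]
    have hLsq : ∑' i, (lam i / (lam i + κ0)) ^ 2 = ∑' i, L i ^ 2 := rfl
    rw [hLsq]
    exact div_le_div_of_nonneg_left hn0.le hc0 hD_ge
  refine hE0le.trans (le_of_eq ?_)
  have hmne : m ≠ 0 := by linarith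
  have h1k : 1 - (k:ℝ)/n = m / n := by
    rw [hm]; field_simp
  have h1n : 1 - (n:ℝ)/Rk = (Rk - n) / Rk := by
    field_simp
  rw [h1k, h1n]
  have hRkn0 : Rk - n ≠ 0 := by linarith
  field_simp
end

section
/- Assume that for every n the index k_n (the least integer 0 ≤ k < n with n ≤ k + r_k^{(n)}) exists. Then E_0(n) → 1 as n → ∞ if and only if both k_n/n → 0 and n/R^{(n)}_{k_n} → 0 as n → ∞. -/
open Filter Finset

private lemma tailSummable {f : ℕ → ℝ} (hf : Summable f) (j : ℕ) :
    Summable fun i => f (j + i) :=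
  ((summable_nat_add_iff j).2 hf).congr (fun i => by rw [add_comm])

private lemma tail_split {f : ℕ → ℝ} (hf : Summable f) {j m : ℕ} (hjm : j ≤ m) :
    (∑' i, f (j + i)) = (∑ i ∈ Finset.range (m - j), f (j + i)) + ∑' i, f (m + i) := by
  have h1 := Summable.sum_add_tsum_nat_add (f := fun i => f (j + i)) (m - j) (tailSummable hf j)
  rw [← h1]
  congr 1
  refine tsum_congr fun i => ?_
  exact congrArg f (by omega)

private lemma tail_le_total {f : ℕ → ℝ} (hf : Summable f) (h0 : ∀ i, 0 ≤ f i) (m : ℕ) :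
    (∑' i, f (m + i)) ≤ ∑' i, f i := by
  have h := tail_split hf (Nat.zero_le m)
  simp only [zero_add] at h
  rw [h]
  have : 0 ≤ ∑ i ∈ Finset.range (m - 0), f i := Finset.sum_nonneg fun i _ => h0 i
  linarith

private lemma total_split {f : ℕ → ℝ} (hf : Summable f) (m : ℕ) :
    (∑' i, f i) = (∑ i ∈ Finset.range m, f i) + ∑' i, f (m + i) := by
  have h := tail_split hf (Nat.zero_le m)
  simpa using h

set_option maxHeartbeats 1000000 in
private lemma key
    (lam : ℕ → ℝ) (κ : ℝ) (n k : ℕ)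
    (hn : 1 ≤ n)
    (hpos : ∀ i, 0 < lam i)
    (hmono : Antitone lam)
    (hsum : Summable lam)
    (hκ : 0 < κ)
    (heq : ∑' i, lam i / (lam i + κ) = (n : ℝ))
    (hk1 : k < n)
    (hk2 : (n : ℝ) ≤ (k : ℝ) + (∑' i, lam (k + i)) / lam k)
    (hk3 : ∀ j, j < k → ¬((n : ℝ) ≤ (j : ℝ) + (∑' i, lam (j + i)) / lam j)) :
    0 ≤ (∑' i, (lam i / (lam i + κ)) ^ 2) / n ∧
    (∑' i, (lam i / (lam i + κ)) ^ 2) / n < 1 ∧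
    (k : ℝ) / n ≤ 4 * ((∑' i, (lam i / (lam i + κ)) ^ 2) / n) ∧
    ((∑' i, (lam i / (lam i + κ)) ^ 2) / n ≤ 1 / 8 →
      (n : ℝ) * (∑' i, lam (k + i) ^ 2) / (∑' i, lam (k + i)) ^ 2 ≤
        32 * ((∑' i, (lam i / (lam i + κ)) ^ 2) / n)) ∧
    (2 * k ≤ n → (n : ℝ) * (∑' i, lam (k + i) ^ 2) / (∑' i, lam (k + i)) ^ 2 < 1 / 64 →
      (∑' i, (lam i / (lam i + κ)) ^ 2) / n ≤
        (k : ℝ) / n + 32 * ((n : ℝ) * (∑' i, lam (k + i) ^ 2) / (∑' i, lam (k + i)) ^ 2)) := by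
  have hN : (0 : ℝ) < n := by exact_mod_cast hn
  set s : ℕ → ℝ := fun i => lam i / (lam i + κ) with hs_def
  have hlk : ∀ i, 0 < lam i + κ := fun i => add_pos (hpos i) hκ
  have hs_pos : ∀ i, 0 < s i := fun i => div_pos (hpos i) (hlk i)
  have hs_lt1 : ∀ i, s i < 1 := fun i => by
    show lam i / (lam i + κ) < 1
    rw [div_lt_one (hlk i)]; linarith [hpos i]
  have hs_nonneg : ∀ i, 0 ≤ s i := fun i => (hs_pos i).le
  have hs_le1 : ∀ i, s i ≤ 1 := fun i => (hs_lt1 i).le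
  have hs_le_div : ∀ i, s i ≤ lam i / κ := fun i => by
    show lam i / (lam i + κ) ≤ lam i / κ
    gcongr <;> linarith [hpos i]
  have hs_sum : Summable s :=
    Summable.of_nonneg_of_le hs_nonneg hs_le_div (hsum.div_const κ)
  have hsq_sum : Summable fun i => s i ^ 2 := by
    refine Summable.of_nonneg_of_le (fun i => sq_nonneg _) (fun i => ?_) hs_sum
    rw [sq]
    nlinarith [hs_pos i, hs_le1 i]
  have hlamsq_sum : Summable fun i => lam i ^ 2 := by
    refine Summable.of_nonneg_of_le (fun i => sq_nonneg _) (fun i => ?_) (hsum.mul_right (lam 0))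
    rw [sq]
    have := hmono (Nat.zero_le i)
    nlinarith [hpos i]
  set Ssq : ℝ := ∑' i, s i ^ 2 with hSsq_def
  have hSsq_nonneg : 0 ≤ Ssq := tsum_nonneg fun i => sq_nonneg _
  have hSsq_lt : Ssq < n := by
    rw [← heq]
    refine Summable.tsum_lt_tsum (i := 0) (fun i => ?_) ?_ hsq_sum hs_sum
    · rw [sq]; nlinarith [hs_pos i, hs_le1 i]
    · rw [sq]; nlinarith [hs_pos 0, hs_lt1 0]
  -- the index kt = #{i : κ < lam i}
  have hex : ∃ j, lam j ≤ κ :=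
    ((hsum.tendsto_atTop_zero.eventually_lt_const hκ).exists).imp fun j hj => hj.le
  have hkt1 : lam (Nat.find hex) ≤ κ := Nat.find_spec hex
  set kt := Nat.find hex with hkt_def
  have hkt2 : ∀ j, j < kt → κ < lam j := fun j hj => lt_of_not_ge (Nat.find_min hex hj)
  have hkt_tail : ∀ i, lam (kt + i) ≤ κ := fun i =>
    le_trans (hmono (Nat.le_add_right kt i)) hkt1
  -- head sums of s are at most the number of terms
  have hhead_s : ∀ m : ℕ, (∑ i ∈ Finset.range m, s i) ≤ (m : ℝ) := fun m => by
    calc (∑ i ∈ Finset.range m, s i) ≤ ∑ i ∈ Finset.range m, 1 :=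
          Finset.sum_le_sum fun i _ => hs_le1 i
    _ = (m : ℝ) := by simp
  -- tail sums of s compared with tails of lam
  have htail_s_le : ∀ m : ℕ, (∑' i, s (m + i)) ≤ (∑' i, lam (m + i)) / κ := fun m => by
    have h1 : (∑' i, s (m + i)) ≤ ∑' i, lam (m + i) / κ :=
      Summable.tsum_le_tsum (fun i => hs_le_div (m + i)) (tailSummable hs_sum m)
        ((tailSummable hsum m).div_const κ)
    rwa [tsum_div_const] at h1
  have htail_s_total : ∀ m : ℕ, (∑' i, s (m + i)) ≤ (n : ℝ) := fun m => by
    have := tail_le_total hs_sum hs_nonneg m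
    rw [heq] at this
    exact this
  -- F4 : n ≤ kt + T kt / κ
  have hF4 : (n : ℝ) ≤ (kt : ℝ) + (∑' i, lam (kt + i)) / κ := by
    have h := total_split hs_sum kt
    rw [heq] at h
    have h1 := hhead_s kt
    have h2 := htail_s_le kt
    linarith
  -- k ≤ kt
  have hk_le_kt : k ≤ kt := by
    by_contra h
    push_neg at h
    refine hk3 kt h ?_
    have hTt_nonneg : 0 ≤ ∑' i, lam (kt + i) := tsum_nonneg fun i => (hpos _).le
    have h2 : (∑' i, lam (kt + i)) / κ ≤ (∑' i, lam (kt + i)) / lam kt :=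
      div_le_div_of_nonneg_left hTt_nonneg (hpos kt) hkt1
    linarith
  -- F1 : kt ≤ 4 * Ssq
  have hkt_le : (kt : ℝ) ≤ 4 * Ssq := by
    have hterm : ∀ i ∈ Finset.range kt, (1 : ℝ) / 4 ≤ s i ^ 2 := by
      intro i hi
      have hκi := hkt2 i (Finset.mem_range.1 hi)
      have hsi : 1 / 2 < s i := by
        show (1 : ℝ) / 2 < lam i / (lam i + κ)
        rw [lt_div_iff₀ (hlk i)]
        linarith
      nlinarith [hs_pos i]
    have h1 : (Finset.range kt).card • ((1 : ℝ) / 4) ≤ ∑ i ∈ Finset.range kt, s i ^ 2 :=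
      Finset.card_nsmul_le_sum _ _ _ hterm
    have h2 : (∑ i ∈ Finset.range kt, s i ^ 2) ≤ Ssq :=
      Summable.sum_le_tsum _ (fun i _ => sq_nonneg _) hsq_sum
    simp only [Finset.card_range, nsmul_eq_mul] at h1
    linarith
  -- F2 : St ≤ 4 κ² Ssq
  have hSt_le : (∑' i, lam (kt + i) ^ 2) ≤ 4 * κ ^ 2 * Ssq := by
    have h1 : ∀ i, lam (kt + i) ^ 2 / (4 * κ ^ 2) ≤ s (kt + i) ^ 2 := by
      intro i
      have hl := hkt_tail i
      have hs2 : lam (kt + i) / (2 * κ) ≤ s (kt + i) := by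
        show _ ≤ lam (kt + i) / (lam (kt + i) + κ)
        apply div_le_div_of_nonneg_left (hpos _).le (hlk _)
        linarith
      have hnn : (0 : ℝ) ≤ lam (kt + i) / (2 * κ) :=
        div_nonneg (hpos _).le (by positivity)
      calc lam (kt + i) ^ 2 / (4 * κ ^ 2) = (lam (kt + i) / (2 * κ)) ^ 2 := by
            rw [div_pow]; ring_nf
      _ ≤ s (kt + i) ^ 2 := by nlinarith
    have h2 : (∑' i, lam (kt + i) ^ 2 / (4 * κ ^ 2)) ≤ ∑' i, s (kt + i) ^ 2 :=
      Summable.tsum_le_tsum h1 ((tailSummable hlamsq_sum kt).div_const _) (tailSummable hsq_sum kt)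
    have h3 : (∑' i, s (kt + i) ^ 2) ≤ Ssq :=
      tail_le_total hsq_sum (fun i => sq_nonneg _) kt
    rw [tsum_div_const] at h2
    have hκ2 : (0 : ℝ) < 4 * κ ^ 2 := by positivity
    rw [div_le_iff₀ hκ2] at h2
    nlinarith
  -- positivity of tails
  have hTk_pos : (0 : ℝ) < ∑' i, lam (k + i) :=
    Summable.tsum_pos (tailSummable hsum k) (fun i => (hpos _).le) 0 (hpos _)
  have hSk_pos : (0 : ℝ) < ∑' i, lam (k + i) ^ 2 :=
    Summable.tsum_pos (tailSummable hlamsq_sum k) (fun i => sq_nonneg _) 0 (pow_pos (hpos _) 2)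
  have hTt_le_Tk : (∑' i, lam (kt + i)) ≤ ∑' i, lam (k + i) := by
    have h := tail_split hsum hk_le_kt
    have h0 : 0 ≤ ∑ i ∈ Finset.range (kt - k), lam (k + i) :=
      Finset.sum_nonneg fun i _ => (hpos _).le
    linarith
  have hSt_le_Sk : (∑' i, lam (kt + i) ^ 2) ≤ ∑' i, lam (k + i) ^ 2 := by
    have h := tail_split hlamsq_sum hk_le_kt
    have h0 : 0 ≤ ∑ i ∈ Finset.range (kt - k), lam (k + i) ^ 2 :=
      Finset.sum_nonneg fun i _ => sq_nonneg _
    linarith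
  have hTt_nonneg : (0 : ℝ) ≤ ∑' i, lam (kt + i) := tsum_nonneg fun i => (hpos _).le
  have hSt_nonneg : (0 : ℝ) ≤ ∑' i, lam (kt + i) ^ 2 := tsum_nonneg fun i => sq_nonneg _
  -- (n - k) lam k ≤ Tk
  have hL : ((n : ℝ) - k) * lam k ≤ ∑' i, lam (k + i) := by
    have h1 : (n : ℝ) - k ≤ (∑' i, lam (k + i)) / lam k := by linarith
    exact (le_div_iff₀ (hpos k)).1 h1
  -- P1
  have hP1 : (k : ℝ) / n ≤ 4 * (Ssq / n) := by
    have hkk : (k : ℝ) ≤ kt := Nat.cast_le.2 hk_le_kt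
    calc (k : ℝ) / n ≤ (4 * Ssq) / n := by gcongr; linarith
    _ = 4 * (Ssq / n) := by ring
  -- P2
  have hP2 : Ssq / n ≤ 1 / 8 →
      (n : ℝ) * (∑' i, lam (k + i) ^ 2) / (∑' i, lam (k + i)) ^ 2 ≤ 32 * (Ssq / n) := by
    intro hA
    have hSsq_le : Ssq ≤ (n : ℝ) / 8 := by
      rw [div_le_div_iff₀ hN (by norm_num : (0:ℝ) < 8)] at hA
      linarith
    have hktN : (kt : ℝ) ≤ (n : ℝ) / 2 := by linarith
    have hkN : (k : ℝ) ≤ (n : ℝ) / 2 := le_trans (Nat.cast_le.2 hk_le_kt) hktN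
    have hLk' : lam k * n ≤ 2 * ∑' i, lam (k + i) := by
      have h := mul_le_mul_of_nonneg_right (by linarith : (n : ℝ)/2 ≤ (n : ℝ) - k) (hpos k).le
      linarith only [h, hL]
    have hκ' : κ * n ≤ 2 * ∑' i, lam (kt + i) := by
      have h1 : (n : ℝ) - kt ≤ (∑' i, lam (kt + i)) / κ := by linarith
      have h2 : ((n : ℝ) - kt) * κ ≤ ∑' i, lam (kt + i) := (le_div_iff₀ hκ).1 h1
      have h := mul_le_mul_of_nonneg_right (by linarith : (n : ℝ)/2 ≤ (n : ℝ) - kt) hκ.le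
      linarith only [h, h2]
    have hsplitSk := tail_split hlamsq_sum hk_le_kt
    have hhead : (∑ i ∈ Finset.range (kt - k), lam (k + i) ^ 2) ≤ (kt : ℝ) * lam k ^ 2 := by
      have h1 : ∀ i ∈ Finset.range (kt - k), lam (k + i) ^ 2 ≤ lam k ^ 2 := by
        intro i _
        have := hmono (Nat.le_add_right k i)
        nlinarith [hpos (k + i)]
      have h2 : (∑ i ∈ Finset.range (kt - k), lam (k + i) ^ 2) ≤
          (Finset.range (kt - k)).card • (lam k ^ 2) :=
        Finset.sum_le_card_nsmul _ _ _ h1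
      simp only [Finset.card_range, nsmul_eq_mul] at h2
      have h3 : ((kt - k : ℕ) : ℝ) ≤ (kt : ℝ) := Nat.cast_le.2 (Nat.sub_le _ _)
      have h4 := mul_le_mul_of_nonneg_right h3 (sq_nonneg (lam k))
      linarith only [h2, h4]
    -- multiplied-through bounds
    have hA1 : lam k ^ 2 * n ^ 2 ≤ 4 * (∑' i, lam (k + i)) ^ 2 := by
      have h := mul_self_le_mul_self (mul_nonneg (hpos k).le hN.le) hLk'
      linarith only [h]
    have hA3 : κ ^ 2 * n ^ 2 ≤ 4 * (∑' i, lam (kt + i)) ^ 2 := by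
      have h := mul_self_le_mul_self (mul_nonneg hκ.le hN.le) hκ'
      linarith only [h]
    have hTt2 : (∑' i, lam (kt + i)) ^ 2 ≤ (∑' i, lam (k + i)) ^ 2 := by
      have h := mul_self_le_mul_self hTt_nonneg hTt_le_Tk
      linarith only [h]
    have hSkBound : (∑' i, lam (k + i) ^ 2) * n ^ 2 ≤ 32 * Ssq * (∑' i, lam (k + i)) ^ 2 := by
      have hheadB : (∑ i ∈ Finset.range (kt - k), lam (k + i) ^ 2) * n ^ 2 ≤
          16 * Ssq * (∑' i, lam (k + i)) ^ 2 := by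
        have h5 : (kt : ℝ) * (lam k ^ 2 * n ^ 2) ≤ (4 * Ssq) * (4 * (∑' i, lam (k + i)) ^ 2) := by
          apply mul_le_mul hkt_le hA1 (by positivity) (by positivity)
        have h6 := mul_le_mul_of_nonneg_right hhead (sq_nonneg ((n:ℝ)))
        linarith only [h5, h6]
      have htailB : (∑' i, lam (kt + i) ^ 2) * n ^ 2 ≤ 16 * Ssq * (∑' i, lam (k + i)) ^ 2 := by
        have h1 := mul_le_mul_of_nonneg_right hSt_le (sq_nonneg ((n:ℝ)))
        have h2 : 4 * Ssq * (κ ^ 2 * n ^ 2) ≤ 4 * Ssq * (4 * (∑' i, lam (kt + i)) ^ 2) :=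
          mul_le_mul_of_nonneg_left hA3 (by positivity)
        have h4 := mul_le_mul_of_nonneg_left hTt2 (by positivity : (0:ℝ) ≤ 16 * Ssq)
        linarith only [h1, h2, h4]
      have h7 := congrArg (fun x => x * ((n:ℝ)) ^ 2) hsplitSk
      linarith only [h7, hheadB, htailB]
    have hTk2 : (0 : ℝ) < (∑' i, lam (k + i)) ^ 2 := by positivity
    have h2 : (32:ℝ) * (Ssq / ↑n) * (∑' i, lam (k + i)) ^ 2
        = 32 * Ssq * (∑' i, lam (k + i)) ^ 2 / ↑n := by ring
    rw [div_le_iff₀ hTk2, h2, le_div_iff₀ hN]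
    linarith only [hSkBound]
  -- P3
  have hTk2 : (0 : ℝ) < (∑' i, lam (k + i)) ^ 2 := by positivity
  have hP3 : 2 * k ≤ n →
      (n : ℝ) * (∑' i, lam (k + i) ^ 2) / (∑' i, lam (k + i)) ^ 2 < 1 / 64 →
      Ssq / n ≤ (k : ℝ) / n +
        32 * ((n : ℝ) * (∑' i, lam (k + i) ^ 2) / (∑' i, lam (k + i)) ^ 2) := by
    intro h2k hδ
    have hkN : (k : ℝ) ≤ (n : ℝ) / 2 := by
      have h : ((2 * k : ℕ) : ℝ) ≤ (n : ℝ) := Nat.cast_le.2 h2k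
      push_cast at h
      linarith
    have hLk' : lam k * n ≤ 2 * ∑' i, lam (k + i) := by
      have h := mul_le_mul_of_nonneg_right (by linarith : (n : ℝ)/2 ≤ (n : ℝ) - k) (hpos k).le
      linarith only [h, hL]
    set δ := (n : ℝ) * (∑' i, lam (k + i) ^ 2) / (∑' i, lam (k + i)) ^ 2 with hδd
    have hδTk : δ * (∑' i, lam (k + i)) ^ 2 = (n : ℝ) * ∑' i, lam (k + i) ^ 2 := by
      rw [hδd]
      exact div_mul_cancel₀ _ (ne_of_gt hTk2)
    have hδ_nonneg : 0 ≤ δ := by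
      rw [hδd]; positivity
    have hBpos : (0 : ℝ) < (∑' i, lam (k + i)) / (4 * n) := by positivity
    -- Step 1 : B ≤ κ
    have hκB : (∑' i, lam (k + i)) / (4 * n) ≤ κ := by
      by_contra hcon
      push_neg at hcon
      have hexB : ∃ j, lam j < (∑' i, lam (k + i)) / (4 * n) :=
        (hsum.tendsto_atTop_zero.eventually_lt_const hBpos).exists
      set m' := max (Nat.find hexB) k with hm'
      have hkm' : k ≤ m' := le_max_right _ _
      have hsmall : ∀ i, lam (m' + i) < (∑' j, lam (k + j)) / (4 * n) := fun i =>
        lt_of_le_of_lt (hmono (le_trans (le_max_left _ _) (Nat.le_add_right _ _)))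
          (Nat.find_spec hexB)
      have hbig : ∀ i, i < m' - k → (∑' j, lam (k + j)) / (4 * n) ≤ lam (k + i) := by
        intro i hi
        have hik : k + i < Nat.find hexB := by
          rcases Nat.le_total (Nat.find hexB) k with hc | hc
          · have he : m' = k := max_eq_right hc
            omega
          · have he : m' = Nat.find hexB := max_eq_left hc
            omega
        exact le_of_not_gt (Nat.find_min hexB hik)
      have hc1 : ((m' - k : ℕ) : ℝ) * ((∑' i, lam (k + i)) / (4 * n)) ^ 2 ≤
          ∑' i, lam (k + i) ^ 2 := by
        have hterm : ∀ i ∈ Finset.range (m' - k),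
            ((∑' j, lam (k + j)) / (4 * n)) ^ 2 ≤ lam (k + i) ^ 2 := by
          intro i hi
          have h1 := hbig i (Finset.mem_range.1 hi)
          have h2 : (0:ℝ) ≤ (∑' j, lam (k + j)) / (4 * n) := hBpos.le
          have h3 := mul_self_le_mul_self h2 h1
          linarith only [h3]
        have hs1 := Finset.card_nsmul_le_sum _ _ _ hterm
        simp only [Finset.card_range, nsmul_eq_mul] at hs1
        have hs2 : (∑ i ∈ Finset.range (m' - k), lam (k + i) ^ 2) ≤ ∑' i, lam (k + i) ^ 2 :=
          Summable.sum_le_tsum _ (fun i _ => sq_nonneg _) (tailSummable hlamsq_sum k)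
        linarith only [hs1, hs2]
      have hc2 : ((m' - k : ℕ) : ℝ) ≤ 16 * n * δ := by
        have h := mul_le_mul_of_nonneg_right hc1 (by positivity : (0:ℝ) ≤ 16 * (n:ℝ)^2)
        have e0 : ((∑' i, lam (k + i)) / (4 * (n:ℝ))) ^ 2 * (16 * (n:ℝ)^2) =
            (∑' i, lam (k + i))^2 := by
          rw [div_pow]
          field_simp
          ring
        have e : ((m' - k : ℕ) : ℝ) * ((∑' i, lam (k + i)) / (4 * ↑n)) ^ 2 * (16 * ↑n^2) =
            ((m' - k : ℕ) : ℝ) * (∑' i, lam (k + i))^2 := by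
          rw [mul_assoc, e0]
        rw [e] at h
        have h9 : ((m' - k : ℕ) : ℝ) * (∑' i, lam (k + i))^2 ≤
            (16 * n * δ) * (∑' i, lam (k + i))^2 := by
          have e2 : (16 * (n:ℝ) * δ) * (∑' i, lam (k + i))^2 = 16 * n * (δ * (∑' i, lam (k + i))^2) := by
            ring
          rw [e2, hδTk]
          linarith only [h]
        exact le_of_mul_le_mul_right h9 hTk2
      have hheadT : (∑ i ∈ Finset.range (m' - k), lam (k + i)) ≤
          32 * δ * ∑' i, lam (k + i) := by
        have h1 : (∑ i ∈ Finset.range (m' - k), lam (k + i)) ≤ ((m' - k : ℕ) : ℝ) * lam k := by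
          have h := Finset.sum_le_card_nsmul (Finset.range (m' - k)) _ (lam k)
            (fun i _ => hmono (Nat.le_add_right k i))
          simpa [nsmul_eq_mul] using h
        have h2 : ((m' - k : ℕ) : ℝ) * (lam k * n) ≤ (16 * n * δ) * (2 * ∑' i, lam (k + i)) :=
          mul_le_mul hc2 hLk' (mul_nonneg (hpos k).le hN.le) (by positivity)
        have h3 : ((m' - k : ℕ) : ℝ) * lam k * n ≤ (32 * δ * ∑' i, lam (k + i)) * n := by
          linarith only [h2]
        have h4 := le_of_mul_le_mul_right h3 hN
        linarith only [h1, h4]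
      have htailT : (∑' i, lam (m' + i)) ≤ (∑' i, lam (k + i)) / 2 := by
        have hstep : ∀ i, lam (m' + i) ≤
            (2 * ((∑' j, lam (k + j)) / (4 * n))) * s (m' + i) := by
          intro i
          have h1 := hsmall i
          have h3 := hpos (m' + i)
          have h4 := hlk (m' + i)
          show _ ≤ _ * (lam (m' + i) / (lam (m' + i) + κ))
          rw [← mul_div_assoc, le_div_iff₀ h4]
          have h5 : lam (m' + i) + κ ≤ 2 * ((∑' j, lam (k + j)) / (4 * n)) := by
            linarith only [h1, hcon]
          have h6 := mul_le_mul_of_nonneg_left h5 h3.le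
          linarith only [h6]
        have h5 : (∑' i, lam (m' + i)) ≤
            ∑' i, (2 * ((∑' j, lam (k + j)) / (4 * n))) * s (m' + i) :=
          Summable.tsum_le_tsum hstep (tailSummable hsum m') ((tailSummable hs_sum m').mul_left _)
        rw [tsum_mul_left] at h5
        have h6 := htail_s_total m'
        have h7 : 2 * ((∑' j, lam (k + j)) / (4 * n)) * (∑' i, s (m' + i)) ≤
            2 * ((∑' j, lam (k + j)) / (4 * n)) * n :=
          mul_le_mul_of_nonneg_left h6 (by positivity)
        have e : 2 * ((∑' j, lam (k + j)) / (4 * n)) * (n : ℝ) = (∑' j, lam (k + j)) / 2 := by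
          field_simp
          ring
        rw [e] at h7
        linarith only [h5, h7]
      have hsplitT := tail_split hsum hkm'
      have hfin : (∑' i, lam (k + i)) / 2 ≤ 32 * δ * (∑' i, lam (k + i)) := by
        linarith only [hsplitT, hheadT, htailT]
      have h8 : (1:ℝ)/64 * (∑' i, lam (k + i)) ≤ δ * (∑' i, lam (k + i)) := by
        linarith only [hfin]
      have h9 := le_of_mul_le_mul_right
        (by linarith only [h8] : (1:ℝ)/64 * (∑' i, lam (k + i)) ≤ δ * (∑' i, lam (k + i))) hTk_pos
      linarith only [h9, hδ]
    -- Step 2 : kt - k ≤ 16 n δ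
    have hmid : ((kt - k : ℕ) : ℝ) ≤ 16 * n * δ := by
      have hc1 : ((kt - k : ℕ) : ℝ) * ((∑' i, lam (k + i)) / (4 * n)) ^ 2 ≤
          ∑' i, lam (k + i) ^ 2 := by
        have hterm : ∀ i ∈ Finset.range (kt - k),
            ((∑' j, lam (k + j)) / (4 * n)) ^ 2 ≤ lam (k + i) ^ 2 := by
          intro i hi
          have hik : k + i < kt := by
            have := Finset.mem_range.1 hi
            omega
          have h1 : κ < lam (k + i) := hkt2 _ hik
          have h2 : (∑' j, lam (k + j)) / (4 * n) ≤ lam (k + i) := le_trans hκB h1.le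
          have h3 := mul_self_le_mul_self hBpos.le h2
          linarith only [h3]
        have hs1 := Finset.card_nsmul_le_sum _ _ _ hterm
        simp only [Finset.card_range, nsmul_eq_mul] at hs1
        have hs2 : (∑ i ∈ Finset.range (kt - k), lam (k + i) ^ 2) ≤ ∑' i, lam (k + i) ^ 2 :=
          Summable.sum_le_tsum _ (fun i _ => sq_nonneg _) (tailSummable hlamsq_sum k)
        linarith only [hs1, hs2]
      have h := mul_le_mul_of_nonneg_right hc1 (by positivity : (0:ℝ) ≤ 16 * (n:ℝ)^2)
      have e0 : ((∑' i, lam (k + i)) / (4 * (n:ℝ))) ^ 2 * (16 * (n:ℝ)^2) =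
          (∑' i, lam (k + i))^2 := by
        rw [div_pow]
        field_simp
        ring
      have e : ((kt - k : ℕ) : ℝ) * ((∑' i, lam (k + i)) / (4 * ↑n)) ^ 2 * (16 * ↑n^2) =
          ((kt - k : ℕ) : ℝ) * (∑' i, lam (k + i))^2 := by
        rw [mul_assoc, e0]
      rw [e] at h
      have h9 : ((kt - k : ℕ) : ℝ) * (∑' i, lam (k + i))^2 ≤
          (16 * n * δ) * (∑' i, lam (k + i))^2 := by
        have e2 : (16 * (n:ℝ) * δ) * (∑' i, lam (k + i))^2 = 16 * n * (δ * (∑' i, lam (k + i))^2) := by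
          ring
        rw [e2, hδTk]
        linarith only [h]
      exact le_of_mul_le_mul_right h9 hTk2
    -- Step 2' : St ≤ 16 n δ κ²
    have hStB : (∑' i, lam (kt + i) ^ 2) ≤ 16 * n * δ * κ ^ 2 := by
      have hB2 : ((∑' i, lam (k + i)) / (4 * n)) ^ 2 ≤ κ ^ 2 := by
        have h := mul_self_le_mul_self hBpos.le hκB
        linarith only [h]
      have e : 16 * (n:ℝ) * δ * ((∑' i, lam (k + i)) / (4 * n)) ^ 2 =
          δ * (∑' i, lam (k + i)) ^ 2 / n := by
        field_simp
        ring
      have e2 : δ * (∑' i, lam (k + i)) ^ 2 / n = ∑' i, lam (k + i) ^ 2 := by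
        rw [hδTk]
        field_simp
      have h4 : 16 * (n:ℝ) * δ * ((∑' i, lam (k + i)) / (4 * n)) ^ 2 ≤ 16 * n * δ * κ ^ 2 :=
        mul_le_mul_of_nonneg_left hB2 (by positivity)
      calc (∑' i, lam (kt + i) ^ 2) ≤ ∑' i, lam (k + i) ^ 2 := hSt_le_Sk
      _ = 16 * (n:ℝ) * δ * ((∑' i, lam (k + i)) / (4 * n)) ^ 2 := by rw [e, e2]
      _ ≤ _ := h4
    -- Step 3 : Ssq ≤ kt + St/κ²
    have hSsq_up : Ssq ≤ (kt : ℝ) + (∑' i, lam (kt + i) ^ 2) / κ ^ 2 := by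
      have hsp := total_split hsq_sum kt
      have hhead : (∑ i ∈ Finset.range kt, s i ^ 2) ≤ (kt : ℝ) := by
        calc (∑ i ∈ Finset.range kt, s i ^ 2) ≤ ∑ i ∈ Finset.range kt, (1:ℝ) :=
              Finset.sum_le_sum fun i _ => by nlinarith [hs_nonneg i, hs_le1 i]
        _ = (kt : ℝ) := by simp
      have htl : (∑' i, s (kt + i) ^ 2) ≤ (∑' i, lam (kt + i) ^ 2) / κ ^ 2 := by
        have h1 : ∀ i, s (kt + i) ^ 2 ≤ lam (kt + i) ^ 2 / κ ^ 2 := by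
          intro i
          have hd := hs_le_div (kt + i)
          have h3 := mul_self_le_mul_self (hs_nonneg (kt + i)) hd
          have e : lam (kt + i) / κ * (lam (kt + i) / κ) = lam (kt + i) ^ 2 / κ ^ 2 := by
            field_simp
          rw [e] at h3
          calc s (kt + i) ^ 2 = s (kt + i) * s (kt + i) := sq (s (kt + i)) ▸ by ring
          _ ≤ _ := h3
        have h2 := Summable.tsum_le_tsum h1 (tailSummable hsq_sum kt)
          ((tailSummable hlamsq_sum kt).div_const _)
        rwa [tsum_div_const] at h2
      linarith only [hsp, hhead, htl]
    have hStκ : (∑' i, lam (kt + i) ^ 2) / κ ^ 2 ≤ 16 * n * δ := by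
      rw [div_le_iff₀ (by positivity : (0:ℝ) < κ ^ 2)]
      linarith only [hStB]
    have hktk : (kt : ℝ) ≤ (k : ℝ) + 16 * n * δ := by
      have h := Nat.sub_add_cancel hk_le_kt
      have h2 : ((kt - k : ℕ) : ℝ) + (k : ℝ) = (kt : ℝ) := by exact_mod_cast congrArg (Nat.cast (R := ℝ)) h
      linarith only [h2, hmid]
    have hfinal : Ssq ≤ (k : ℝ) + 32 * n * δ := by linarith only [hSsq_up, hStκ, hktk]
    have e3 : ((k : ℝ) / n + 32 * δ) * n = (k : ℝ) + 32 * n * δ := by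
      field_simp
    rw [div_le_iff₀ hN, e3]
    exact hfinal
  exact ⟨div_nonneg hSsq_nonneg hN.le, by rw [div_lt_one hN]; exact hSsq_lt, hP1, hP2, hP3⟩

private noncomputable def Afun (lam : ℕ → ℕ → ℝ) (κ : ℕ → ℝ) (n : ℕ) : ℝ :=
  (∑' i, (lam n i / (lam n i + κ n)) ^ 2) / n

private noncomputable def Dfun (lam : ℕ → ℕ → ℝ) (kn : ℕ → ℕ) (n : ℕ) : ℝ :=
  (n : ℝ) * (∑' i, lam n (kn n + i) ^ 2) / (∑' i, lam n (kn n + i)) ^ 2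

/-- With a spectrum `λ^{(n)}` possibly changing with `n`, and
`k_n` the least integer `0 ≤ k < n` with `n ≤ k + r_k^{(n)}` (assumed to
exist), we have `E_0(n) → 1` iff `k_n/n → 0` and `n/R^{(n)}_{k_n} → 0`.
(Here `lam n i` denotes `λ^{(n)}_{i+1}`.) -/
theorem benign_overfitting_iff
    (lam : ℕ → ℕ → ℝ)
    (hlam_pos : ∀ n, 1 ≤ n → ∀ i, 0 < lam n i)
    (hlam_mono : ∀ n, 1 ≤ n → Antitone (lam n))
    (hlam_summable : ∀ n, 1 ≤ n → Summable (lam n))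
    (κ : ℕ → ℝ) (hκ_pos : ∀ n, 1 ≤ n → 0 < κ n)
    (hκ_eq : ∀ n, 1 ≤ n → ∑' i, lam n i / (lam n i + κ n) = (n : ℝ))
    (E : ℕ → ℝ)
    (hE : ∀ n, E n = (n : ℝ) / ((n : ℝ) - ∑' i, (lam n i / (lam n i + κ n)) ^ 2))
    (r : ℕ → ℕ → ℝ) (hr : ∀ n j, r n j = (∑' i, lam n (j + i)) / lam n j)
    (R : ℕ → ℕ → ℝ)
    (hR : ∀ n j, R n j = (∑' i, lam n (j + i)) ^ 2 / ∑' i, lam n (j + i) ^ 2)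
    (kn : ℕ → ℕ)
    (hkn : ∀ n, 1 ≤ n → kn n < n ∧ (n : ℝ) ≤ (kn n : ℝ) + r n (kn n) ∧
      ∀ j, j < kn n → ¬((n : ℝ) ≤ (j : ℝ) + r n j)) :
    Filter.Tendsto E Filter.atTop (nhds 1) ↔
      (Filter.Tendsto (fun n : ℕ => (kn n : ℝ) / n) Filter.atTop (nhds 0) ∧
        Filter.Tendsto (fun n : ℕ => (n : ℝ) / R n (kn n)) Filter.atTop (nhds 0)) := by
  have hkey : ∀ n, 1 ≤ n →
      0 ≤ Afun lam κ n ∧ Afun lam κ n < 1 ∧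
      (kn n : ℝ) / n ≤ 4 * Afun lam κ n ∧
      (Afun lam κ n ≤ 1 / 8 → Dfun lam kn n ≤ 32 * Afun lam κ n) ∧
      (2 * kn n ≤ n → Dfun lam kn n < 1 / 64 →
        Afun lam κ n ≤ (kn n : ℝ) / n + 32 * Dfun lam kn n) := by
    intro n hn
    obtain ⟨h1, h2, h3⟩ := hkn n hn
    rw [hr] at h2
    have h3' : ∀ j, j < kn n → ¬((n : ℝ) ≤ (j : ℝ) + (∑' i, lam n (j + i)) / lam n j) := by
      intro j hj
      have := h3 j hj
      rwa [hr] at this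
    have := key (lam n) (κ n) n (kn n) hn (hlam_pos n hn) (hlam_mono n hn)
      (hlam_summable n hn) (hκ_pos n hn) (hκ_eq n hn) h1 h2 h3'
    simpa only [Afun, Dfun] using this
  have hRD : ∀ n : ℕ, (n : ℝ) / R n (kn n) = Dfun lam kn n := by
    intro n
    rw [hR, div_div_eq_mul_div]
    rfl
  have hAnonneg : ∀ n, 0 ≤ Afun lam κ n := fun n =>
    div_nonneg (tsum_nonneg fun i => sq_nonneg _) (Nat.cast_nonneg n)
  have hDnonneg : ∀ n, 0 ≤ Dfun lam kn n := fun n =>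
    div_nonneg (mul_nonneg (Nat.cast_nonneg n) (tsum_nonneg fun i => sq_nonneg _)) (sq_nonneg _)
  have hEA : ∀ n, 1 ≤ n → E n = (1 - Afun lam κ n)⁻¹ := by
    intro n hn
    have hN : (0 : ℝ) < n := by exact_mod_cast hn
    have hlt := (hkey n hn).2.1
    have he : (1 : ℝ) - Afun lam κ n = ((n : ℝ) - ∑' i, (lam n i / (lam n i + κ n)) ^ 2) / n := by
      unfold Afun
      field_simp
    rw [hE, he, inv_div]
  have hfwd : Filter.Tendsto E Filter.atTop (nhds 1) →
      Filter.Tendsto (Afun lam κ) Filter.atTop (nhds 0) := by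
    intro hT
    have h1 : Filter.Tendsto (fun n => 1 - (E n)⁻¹) Filter.atTop (nhds 0) := by
      have h2 := (tendsto_const_nhds (x := (1:ℝ))).sub (hT.inv₀ one_ne_zero)
      simpa using h2
    refine Filter.Tendsto.congr' ?_ h1
    filter_upwards [Filter.eventually_ge_atTop 1] with n hn
    have hlt := (hkey n hn).2.1
    rw [hEA n hn, inv_inv]
    ring
  have hbwd : Filter.Tendsto (Afun lam κ) Filter.atTop (nhds 0) →
      Filter.Tendsto E Filter.atTop (nhds 1) := by
    intro hA
    have h1 : Filter.Tendsto (fun n => (1 - Afun lam κ n)⁻¹) Filter.atTop (nhds 1) := by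
      have h2 := (tendsto_const_nhds (x := (1:ℝ))).sub hA
      have h3 := h2.inv₀ (by norm_num)
      simpa using h3
    refine Filter.Tendsto.congr' ?_ h1
    filter_upwards [Filter.eventually_ge_atTop 1] with n hn
    exact (hEA n hn).symm
  constructor
  · intro hE1
    have hA0 := hfwd hE1
    constructor
    · refine squeeze_zero' (g := fun n => 4 * Afun lam κ n)
        (Filter.Eventually.of_forall fun n =>
        div_nonneg (Nat.cast_nonneg _) (Nat.cast_nonneg _)) ?_ ?_
      · filter_upwards [Filter.eventually_ge_atTop 1] with n hn
        exact (hkey n hn).2.2.1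
      · simpa using hA0.const_mul (4:ℝ)
    · refine squeeze_zero' (g := fun n => 32 * Afun lam κ n)
        (Filter.Eventually.of_forall fun n => by
        rw [hRD n]; exact hDnonneg n) ?_ ?_
      · filter_upwards [Filter.eventually_ge_atTop 1,
          hA0.eventually (eventually_le_nhds (by norm_num : (0:ℝ) < 1/8))] with n hn h8
        rw [hRD n]
        exact (hkey n hn).2.2.2.1 h8
      · simpa using hA0.const_mul (32:ℝ)
  · rintro ⟨hk0, hD0⟩
    have hD0' : Filter.Tendsto (fun n => Dfun lam kn n) Filter.atTop (nhds 0) :=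
      hD0.congr (fun n => hRD n)
    have hA0 : Filter.Tendsto (Afun lam κ) Filter.atTop (nhds 0) := by
      refine squeeze_zero' (g := fun n => (kn n : ℝ) / n + 32 * Dfun lam kn n)
        (Filter.Eventually.of_forall hAnonneg) ?_ ?_
      · filter_upwards [Filter.eventually_ge_atTop 1,
          hk0.eventually (eventually_lt_nhds (by norm_num : (0:ℝ) < 1/2)),
          hD0'.eventually (eventually_lt_nhds (by norm_num : (0:ℝ) < 1/64))] with n hn hk2 hD2
        have hN : (0 : ℝ) < n := by exact_mod_cast hn
        rw [div_lt_iff₀ hN] at hk2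
        have h2k : 2 * kn n ≤ n := by
          have h : ((2 * kn n : ℕ) : ℝ) < n := by push_cast; linarith
          exact_mod_cast h.le
        exact (hkey n hn).2.2.2.2 h2k hD2
      · have h := hk0.add (hD0'.const_mul (32:ℝ))
        simpa using h
    exact hbwd hA0
end

section
/- Assume λ_i > 0 for every i. Fix any ε with 0 < ε < n/r_0, and define k_l = max{ k ≥ 0 : k + ε·r_k ≤ n } and k_u = min{ k ≥ 0 : k + r_k ≥ (1 + ε^{−1})·n } (both are well-defined and finite). Then E_0 ≤ (1 + ε)² · max_{k_l ≤ k < k_u} ( λ_{k+1}/λ_{k+2} + (1/ε) · (k+1)/(r_k − 1) ), where a term with r_k ≤ 1 is interpreted as +∞. -/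
set_option maxHeartbeats 2000000 in
/-- Tempered bound: Assume all eigenvalues are positive. For any
`0 < ε < n/r_0`, with `k_l = max{k : k + ε·r_k ≤ n}` and
`k_u = min{k : k + r_k ≥ (1 + ε⁻¹)·n}`,
`E_0 ≤ (1+ε)² · max_{k_l ≤ k < k_u} (λ_{k+1}/λ_{k+2} + (1/ε)·(k+1)/(r_k − 1))`,
where a term with `r_k ≤ 1` is interpreted as `+∞` (formalized in `EReal`).
(Here `lam i` denotes `λ_{i+1}`, so `λ_{k+1}/λ_{k+2} = lam k / lam (k+1)`.) -/
theorem e0_tempered_upper_bound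
    (n : ℕ) (hn : 1 ≤ n)
    (lam : ℕ → ℝ) (hlam_pos : ∀ i, 0 < lam i) (hlam_mono : Antitone lam)
    (hlam_summable : Summable lam)
    (κ0 : ℝ) (hκ0 : 0 < κ0)
    (hκ0_eq : ∑' i, lam i / (lam i + κ0) = (n : ℝ))
    (E0 : ℝ)
    (hE0 : E0 = (n : ℝ) / ((n : ℝ) - ∑' i, (lam i / (lam i + κ0)) ^ 2))
    (r : ℕ → ℝ) (hr : ∀ j, r j = (∑' i, lam (j + i)) / lam j)
    (ε : ℝ) (hε0 : 0 < ε) (hεn : ε < (n : ℝ) / r 0)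
    (kl ku : ℕ)
    (hkl_mem : (kl : ℝ) + ε * r kl ≤ n)
    (hkl_max : ∀ j : ℕ, (j : ℝ) + ε * r j ≤ n → j ≤ kl)
    (hku_mem : (1 + ε⁻¹) * n ≤ (ku : ℝ) + r ku)
    (hku_min : ∀ j : ℕ, (1 + ε⁻¹) * n ≤ (j : ℝ) + r j → ku ≤ j) :
    (E0 : EReal) ≤ (((1 + ε) ^ 2 : ℝ) : EReal) *
      (Finset.Ico kl ku).sup (fun k =>
        if 1 < r k then
          ((lam k / lam (k + 1) + (1 / ε) * ((k : ℝ) + 1) / (r k - 1) : ℝ) : EReal)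
        else ⊤) := by
  classical
  -- basic positivity
  have hden : ∀ i, 0 < lam i + κ0 := fun i => add_pos (hlam_pos i) hκ0
  set L : ℕ → ℝ := fun i => lam i / (lam i + κ0) with hLdef
  have hL_pos : ∀ i, 0 < L i := fun i => div_pos (hlam_pos i) (hden i)
  have hL_lt_one : ∀ i, L i < 1 := fun i =>
    (div_lt_one (hden i)).2 (lt_add_of_pos_right _ hκ0)
  have hL_le : ∀ i, L i ≤ lam i / κ0 := by
    intro i
    apply div_le_div_of_nonneg_left (hlam_pos i).le hκ0
    linarith [(hlam_pos i)]
  have hL_summable : Summable L :=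
    Summable.of_nonneg_of_le (fun i => (hL_pos i).le) hL_le (hlam_summable.div_const κ0)
  have hL_anti : Antitone L := by
    intro i j hij
    have h1 := hlam_mono hij
    rw [hLdef]
    simp only
    rw [div_le_div_iff₀ (hden j) (hden i)]
    nlinarith [hlam_pos i, hlam_pos j]
  have hsumL : ∑' i, L i = (n : ℝ) := hκ0_eq
  -- tail sums
  set T : ℕ → ℝ := fun j => ∑' i, lam (j + i) with hTdef
  have hT_summable : ∀ j, Summable (fun i => lam (j + i)) := by
    intro j
    have := (summable_nat_add_iff (f := lam) j).2 hlam_summable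
    exact this.congr (fun i => by rw [add_comm])
  have hrT : ∀ j, r j = T j / lam j := fun j => hr j
  have hT_pos : ∀ j, 0 < T j := by
    intro j
    exact Summable.tsum_pos (hT_summable j) (fun i => (hlam_pos _).le) 0 (hlam_pos _)
  have hT_rec : ∀ j, T j = lam j + T (j + 1) := by
    intro j
    have h := Summable.tsum_eq_zero_add (hT_summable j)
    rw [hTdef]
    simp only
    rw [h, add_zero]
    congr 1
    exact tsum_congr fun i => by congr 1; omega
  -- splitting ∑ L at m
  have hsplit : ∀ m : ℕ, (∑ i ∈ Finset.range m, L i) + (∑' i, L (m + i)) = (n : ℝ) := by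
    intro m
    rw [← hsumL]
    rw [← Summable.sum_add_tsum_nat_add m hL_summable]
    congr 1
    exact tsum_congr fun i => by rw [add_comm]
  have hLtail_summable : ∀ m, Summable (fun i => L (m + i)) := by
    intro m
    have := (summable_nat_add_iff (f := L) m).2 hL_summable
    exact this.congr (fun i => by rw [add_comm])
  -- upper bound on n at any cut m
  have hn_upper : ∀ m : ℕ, (n : ℝ) ≤ m + T m / κ0 := by
    intro m
    rw [← hsplit m]
    have h1 : (∑ i ∈ Finset.range m, L i) ≤ (m : ℝ) := by
      calc (∑ i ∈ Finset.range m, L i) ≤ ∑ i ∈ Finset.range m, 1 :=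
            Finset.sum_le_sum fun i _ => (hL_lt_one i).le
        _ = m := by simp
    have h2 : (∑' i, L (m + i)) ≤ T m / κ0 := by
      rw [hTdef]
      simp only
      rw [← tsum_div_const]
      exact Summable.tsum_le_tsum (fun i => hL_le _) (hLtail_summable m) ((hT_summable m).div_const κ0)
    linarith
  -- λ₀ > εκ₀
  have hlam0 : ε * κ0 < lam 0 := by
    have h0 := hn_upper 0
    have hr0 : r 0 = T 0 / lam 0 := hrT 0
    have hn1 : (1 : ℝ) ≤ n := by exact_mod_cast hn
    have hr0pos : 0 < r 0 := by
      rw [hr0]; exact div_pos (hT_pos 0) (hlam_pos 0)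
    have hεr : ε * r 0 < n := by
      have := (lt_div_iff₀ hr0pos).1 hεn
      linarith
    rw [hr0] at hεr
    -- n ≤ T 0 / κ0 and ε * T 0 / lam 0 < n
    have h2 : ε * (T 0 / lam 0) < T 0 / κ0 := by
      calc ε * (T 0 / lam 0) < (n : ℝ) := hεr
        _ ≤ 0 + T 0 / κ0 := by exact_mod_cast h0
        _ = T 0 / κ0 := by ring
    have hT0 := hT_pos 0
    have hl0 := hlam_pos 0
    rw [mul_div_assoc'] at h2
    rw [div_lt_div_iff₀ hl0 hκ0] at h2
    nlinarith
  -- choose k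
  have hex : ∃ j, lam j < ε * κ0 := by
    have htend : Filter.Tendsto lam Filter.atTop (nhds 0) := hlam_summable.tendsto_atTop_zero
    exact (htend.eventually_lt_const (by positivity)).exists
  set k' := Nat.find hex with hk'def
  have hk'pos : 0 < k' := by
    rcases Nat.eq_zero_or_pos k' with h | h
    · exfalso
      have := Nat.find_spec hex
      rw [← hk'def, h] at this
      linarith
    · exact h
  set k := k' - 1 with hkdef
  have hkk' : k + 1 = k' := by omega
  have hk_ge : ε * κ0 ≤ lam k := by
    have := Nat.find_min hex (m := k) (by omega)
    linarith [not_lt.1 this]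
  have hk1_lt : lam (k + 1) < ε * κ0 := by
    have := Nat.find_spec hex
    rw [← hk'def] at this
    rwa [hkk']
  -- kl ≤ k
  have hklk : kl ≤ k := by
    by_contra h
    push_neg at h
    have hlkl : lam kl < ε * κ0 := by
      have : k + 1 ≤ kl := by omega
      calc lam kl ≤ lam (k + 1) := hlam_mono this
        _ < ε * κ0 := hk1_lt
    have h1 : (kl : ℝ) + ε * (T kl / lam kl) ≤ n := by rw [← hrT kl]; exact hkl_mem
    have h2 := hn_upper kl
    have h3 : ε * (T kl / lam kl) ≤ T kl / κ0 := by linarith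
    have hTkl := hT_pos kl
    have hlklpos := hlam_pos kl
    rw [mul_div_assoc'] at h3
    rw [div_le_div_iff₀ hlklpos hκ0] at h3
    nlinarith
  -- k < ku
  have hLk_lb : ε / (1 + ε) ≤ L k := by
    rw [hLdef]
    simp only
    rw [div_le_div_iff₀ (by linarith) (hden k)]
    nlinarith
  have hkku : k < ku := by
    have hhead : (k : ℝ) * (ε / (1 + ε)) ≤ ∑ i ∈ Finset.range k, L i := by
      calc (k : ℝ) * (ε / (1 + ε)) = ∑ _i ∈ Finset.range k, (ε / (1 + ε)) := by
            rw [Finset.sum_const, Finset.card_range, nsmul_eq_mul]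
        _ ≤ ∑ i ∈ Finset.range k, L i := by
            apply Finset.sum_le_sum
            intro i hi
            exact le_trans hLk_lb (hL_anti (Finset.mem_range.1 hi).le)
    -- strict tail bound
    have htail : T k / (lam k + κ0) < ∑' i, L (k + i) := by
      obtain ⟨m, hm1, hm2⟩ := (((hlam_summable.tendsto_atTop_zero).eventually_lt_const
        (hlam_pos k)).and (Filter.eventually_ge_atTop k)).exists
      have hfg : ∀ i, lam (k + i) / (lam k + κ0) ≤ L (k + i) := by
        intro i
        rw [hLdef]
        simp only
        apply div_le_div_of_nonneg_left (hlam_pos _).le (hden _)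
        have := hlam_mono (Nat.le_add_right k i)
        linarith
      have hstrict : lam (k + (m - k)) / (lam k + κ0) < L (k + (m - k)) := by
        have hkm : k + (m - k) = m := by omega
        rw [hLdef, hkm]
        simp only
        apply div_lt_div_of_pos_left (hlam_pos m) (hden m)
        linarith
      have h1 : (∑' i, lam (k + i) / (lam k + κ0)) < ∑' i, L (k + i) :=
        Summable.tsum_lt_tsum hfg hstrict ((hT_summable k).div_const _) (hLtail_summable k)
      calc T k / (lam k + κ0) = ∑' i, lam (k + i) / (lam k + κ0) := tsum_div_const.symm
        _ < _ := h1
    have htail2 : (ε / (1 + ε)) * (T k / lam k) ≤ T k / (lam k + κ0) := by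
      have h1 : T k / (lam k * ((1 + ε) / ε)) ≤ T k / (lam k + κ0) := by
        apply div_le_div_of_nonneg_left (hT_pos k).le (hden k)
        have heq : lam k * ((1 + ε) / ε) = lam k + lam k / ε := by
          field_simp
          ring
        have hκle : κ0 ≤ lam k / ε := (le_div_iff₀ hε0).2 (by linarith)
        linarith
      calc (ε / (1 + ε)) * (T k / lam k) = T k / (lam k * ((1 + ε) / ε)) := by
            field_simp
        _ ≤ _ := h1
    have hnlow : (ε / (1 + ε)) * ((k : ℝ) + T k / lam k) < n := by
      have hexp : (ε / (1 + ε)) * ((k : ℝ) + T k / lam k) =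
          (k : ℝ) * (ε / (1 + ε)) + (ε / (1 + ε)) * (T k / lam k) := by ring
      rw [hexp]
      have h3 := hsplit k
      linarith [htail, htail2, hhead]
    have hklt : (k : ℝ) + T k / lam k < (1 + ε⁻¹) * n := by
      have hfac : (0 : ℝ) < ε / (1 + ε) := by positivity
      have h2 : (1 + ε⁻¹) * ((ε / (1 + ε)) * ((k : ℝ) + T k / lam k)) =
          (k : ℝ) + T k / lam k := by
        field_simp
        ring
      have hmul := mul_lt_mul_of_pos_left hnlow (show (0:ℝ) < 1 + ε⁻¹ by positivity)
      rw [h2] at hmul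
      exact hmul
    by_contra h
    push_neg at h
    have hFmono : Monotone (fun j : ℕ => (j : ℝ) + T j / lam j) := by
      apply monotone_nat_of_le_succ
      intro j
      show (j : ℝ) + T j / lam j ≤ ((j + 1 : ℕ) : ℝ) + T (j + 1) / lam (j + 1)
      push_cast
      have h1 : T j / lam j ≤ 1 + T (j + 1) / lam (j + 1) := by
        rw [hT_rec j]
        rw [add_div, div_self (hlam_pos j).ne']
        have : T (j + 1) / lam j ≤ T (j + 1) / lam (j + 1) := by
          apply div_le_div_of_nonneg_left (hT_pos _).le (hlam_pos _)
          exact hlam_mono (Nat.le_succ j)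
        linarith
      linarith
    have : (1 + ε⁻¹) * n ≤ (k : ℝ) + T k / lam k := by
      calc (1 + ε⁻¹) * n ≤ (ku : ℝ) + r ku := hku_mem
        _ = (ku : ℝ) + T ku / lam ku := by rw [hrT]
        _ ≤ (k : ℝ) + T k / lam k := hFmono h
    linarith
  -- main estimate
  have hrk1 : 1 < r k := by
    rw [hrT, lt_div_iff₀ (hlam_pos k), one_mul, hT_rec k]
    linarith [hT_pos (k + 1)]
  set W : ℝ := lam k / lam (k + 1) + (1 / ε) * ((k : ℝ) + 1) / (r k - 1) with hWdef
  have hrk_sub : r k - 1 = T (k + 1) / lam k := by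
    rw [hrT, hT_rec k, add_div, div_self (hlam_pos k).ne']
    ring
  have hE0V : E0 ≤ (1 + ε) ^ 2 * W := by
    have hb := hlam_pos (k + 1)
    have ha := hlam_pos k
    have hab : lam (k + 1) ≤ lam k := hlam_mono (Nat.le_succ k)
    have htpos := hT_pos (k + 1)
    set t : ℝ := T (k + 1) with htdef
    set C : ℝ := lam (k + 1) + κ0 with hCdef
    have hC : 0 < C := hden (k + 1)
    have hCD : C ≤ (1 + ε) * κ0 := by
      rw [hCdef]
      linarith [hk1_lt]
    have hC2 : C ^ 2 ≤ ((1 + ε) * κ0) ^ 2 := pow_le_pow_left₀ hC.le hCD 2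
    -- summability of the difference
    have hL2_summable : Summable (fun i => L i ^ 2) := by
      apply Summable.of_nonneg_of_le (fun i => sq_nonneg _) (fun i => ?_) hL_summable
      nlinarith [hL_pos i, hL_lt_one i]
    have hdiff_summable : Summable (fun i => L i - L i ^ 2) := hL_summable.sub hL2_summable
    have hdiff_nonneg : ∀ i, 0 ≤ L i - L i ^ 2 := by
      intro i
      nlinarith [hL_pos i, hL_lt_one i]
    have hS_eq : (n : ℝ) - ∑' i, (lam i / (lam i + κ0)) ^ 2 = ∑' i, (L i - L i ^ 2) := by
      rw [← hsumL]
      exact (Summable.tsum_sub hL_summable hL2_summable).symm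
    have hLdiff : ∀ j, L j - L j ^ 2 = lam j * κ0 / (lam j + κ0) ^ 2 := by
      intro j
      have hne := (hden j).ne'
      rw [hLdef]
      simp only
      rw [div_pow, div_sub_div _ _ hne (pow_ne_zero 2 hne),
        div_eq_div_iff (by positivity) (pow_ne_zero 2 hne)]
      ring
    have hdiff_tail_summable : Summable (fun i => L ((k + 1) + i) - L ((k + 1) + i) ^ 2) := by
      have := (summable_nat_add_iff (f := fun i => L i - L i ^ 2) (k + 1)).2 hdiff_summable
      exact this.congr (fun i => by rw [add_comm])
    have hdrop : (∑' i, (L ((k + 1) + i) - L ((k + 1) + i) ^ 2)) ≤ ∑' i, (L i - L i ^ 2) := by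
      rw [← Summable.sum_add_tsum_nat_add (k + 1) hdiff_summable]
      have hhead0 : 0 ≤ ∑ i ∈ Finset.range (k + 1), (L i - L i ^ 2) :=
        Finset.sum_nonneg fun i _ => hdiff_nonneg i
      have heqt : (∑' i, (L ((k + 1) + i) - L ((k + 1) + i) ^ 2)) =
          ∑' i, (L (i + (k + 1)) - L (i + (k + 1)) ^ 2) :=
        tsum_congr fun i => by rw [add_comm]
      linarith [heqt.le, heqt.ge]
    have hterm : ∀ i : ℕ, lam ((k + 1) + i) * (κ0 / C ^ 2) ≤
        L ((k + 1) + i) - L ((k + 1) + i) ^ 2 := by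
      intro i
      rw [hLdiff]
      have h1 : lam ((k + 1) + i) + κ0 ≤ C := by
        rw [hCdef]
        have := hlam_mono (Nat.le_add_right (k + 1) i)
        linarith
      have h2 : (lam ((k + 1) + i) + κ0) ^ 2 ≤ C ^ 2 := by
        nlinarith [hden ((k + 1) + i)]
      calc lam ((k + 1) + i) * (κ0 / C ^ 2) = lam ((k + 1) + i) * κ0 / C ^ 2 := by ring
        _ ≤ lam ((k + 1) + i) * κ0 / (lam ((k + 1) + i) + κ0) ^ 2 :=
          div_le_div_of_nonneg_left (mul_pos (hlam_pos _) hκ0).le (pow_pos (hden _) 2) h2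
    have hSlb : κ0 * t / C ^ 2 ≤ ∑' i, (L i - L i ^ 2) := by
      have h1 : (∑' i, lam ((k + 1) + i) * (κ0 / C ^ 2)) = κ0 * t / C ^ 2 := by
        rw [(hT_summable (k + 1)).tsum_mul_right]
        rw [htdef, hTdef]
        simp only
        ring
      calc κ0 * t / C ^ 2 = ∑' i, lam ((k + 1) + i) * (κ0 / C ^ 2) := h1.symm
        _ ≤ ∑' i, (L ((k + 1) + i) - L ((k + 1) + i) ^ 2) :=
          Summable.tsum_le_tsum hterm ((hT_summable (k + 1)).mul_right _) hdiff_tail_summable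
        _ ≤ _ := hdrop
    have hSlb_pos : (0 : ℝ) < κ0 * t / C ^ 2 := by positivity
    have hS_pos : (0 : ℝ) < (n : ℝ) - ∑' i, (lam i / (lam i + κ0)) ^ 2 := by
      rw [hS_eq]
      linarith
    -- the two pieces of the final algebraic bound
    have hB : t / κ0 ≤ (1 + ε) ^ 2 * (lam k / lam (k + 1)) * (κ0 * t / C ^ 2) := by
      have hfac1 : (1 : ℝ) ≤ lam k / lam (k + 1) := (one_le_div hb).2 hab
      have hfac2 : (1 : ℝ) ≤ (1 + ε) ^ 2 * κ0 ^ 2 / C ^ 2 := by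
        rw [le_div_iff₀ (by positivity)]
        nlinarith
      have heq : (1 + ε) ^ 2 * (lam k / lam (k + 1)) * (κ0 * t / C ^ 2) =
          (t / κ0) * ((lam k / lam (k + 1)) * ((1 + ε) ^ 2 * κ0 ^ 2 / C ^ 2)) := by
        field_simp
      rw [heq]
      have hfac12 : (1 : ℝ) ≤ (lam k / lam (k + 1)) * ((1 + ε) ^ 2 * κ0 ^ 2 / C ^ 2) := by
        nlinarith [hfac1, hfac2]
      exact le_mul_of_one_le_right (div_pos htpos hκ0).le hfac12
    have hA : ((k : ℝ) + 1) ≤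
        (1 + ε) ^ 2 * ((1 / ε) * ((k : ℝ) + 1) / (t / lam k)) * (κ0 * t / C ^ 2) := by
      have hfac : (1 : ℝ) ≤ lam k * κ0 * (1 + ε) ^ 2 / (ε * C ^ 2) := by
        rw [le_div_iff₀ (by positivity)]
        nlinarith [mul_le_mul_of_nonneg_left hC2 hε0.le,
          mul_le_mul_of_nonneg_left hk_ge (show (0:ℝ) ≤ (1 + ε) ^ 2 * κ0 by positivity)]
      have heq : (1 + ε) ^ 2 * ((1 / ε) * ((k : ℝ) + 1) / (t / lam k)) * (κ0 * t / C ^ 2) =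
          ((k : ℝ) + 1) * (lam k * κ0 * (1 + ε) ^ 2 / (ε * C ^ 2)) := by
        field_simp
      rw [heq]
      exact le_mul_of_one_le_right (by positivity) hfac
    have hW_eq : (1 + ε) ^ 2 * W * (κ0 * t / C ^ 2) =
        (1 + ε) ^ 2 * (lam k / lam (k + 1)) * (κ0 * t / C ^ 2) +
        (1 + ε) ^ 2 * ((1 / ε) * ((k : ℝ) + 1) / (t / lam k)) * (κ0 * t / C ^ 2) := by
      rw [hWdef, hrk_sub]
      ring
    have hn2 : (n : ℝ) ≤ ((k : ℝ) + 1) + t / κ0 := by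
      have := hn_upper (k + 1)
      push_cast at this
      linarith
    have hW_pos : 0 < W := by
      rw [hWdef, hrk_sub]
      have h1 : 0 < lam k / lam (k + 1) := by positivity
      have h2 : 0 < (1 / ε) * ((k : ℝ) + 1) / (t / lam k) := by positivity
      linarith
    have hVn : (n : ℝ) ≤ ((1 + ε) ^ 2 * W) * ((n : ℝ) - ∑' i, (lam i / (lam i + κ0)) ^ 2) := by
      calc (n : ℝ) ≤ ((k : ℝ) + 1) + t / κ0 := hn2
        _ ≤ (1 + ε) ^ 2 * W * (κ0 * t / C ^ 2) := by rw [hW_eq]; linarith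
        _ ≤ ((1 + ε) ^ 2 * W) * ((n : ℝ) - ∑' i, (lam i / (lam i + κ0)) ^ 2) := by
            apply mul_le_mul_of_nonneg_left _ (by positivity)
            rw [hS_eq]
            exact hSlb
    rw [hE0, div_le_iff₀ hS_pos]
    exact hVn
  -- assemble in EReal
  have hkmem : k ∈ Finset.Ico kl ku := Finset.mem_Ico.2 ⟨hklk, hkku⟩
  have hfk : (if 1 < r k then
      ((lam k / lam (k + 1) + (1 / ε) * ((k : ℝ) + 1) / (r k - 1) : ℝ) : EReal)
      else ⊤) = ((W : ℝ) : EReal) := by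
    rw [if_pos hrk1]
  have hsup := Finset.le_sup (f := fun k =>
        if 1 < r k then
          ((lam k / lam (k + 1) + (1 / ε) * ((k : ℝ) + 1) / (r k - 1) : ℝ) : EReal)
        else ⊤) hkmem
  have hsup' : ((W : ℝ) : EReal) ≤ (Finset.Ico kl ku).sup (fun k =>
        if 1 < r k then
          ((lam k / lam (k + 1) + (1 / ε) * ((k : ℝ) + 1) / (r k - 1) : ℝ) : EReal)
        else ⊤) := by
    rw [← hfk]; exact hsup
  calc (E0 : EReal) ≤ (((1 + ε) ^ 2 * W : ℝ) : EReal) := by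
        exact_mod_cast hE0V
    _ = (((1 + ε) ^ 2 : ℝ) : EReal) * ((W : ℝ) : EReal) := EReal.coe_mul _ _
    _ ≤ _ := mul_le_mul_of_nonneg_left hsup' (EReal.coe_nonneg.2 (by positivity))
end

section
/- For any integer k ≥ n with λ_{k+1} > 0, it holds that (1/n) Σ_{i≥1} L_{i,0}² ≥ (n/k) · ( (k − n)/(k − n + r_k) )². -/
set_option maxHeartbeats 1000000


/-- Catastrophic lower bound: For any integer `k ≥ n` with
`λ_{k+1} > 0`, `(1/n) Σ_i L_{i,0}² ≥ (n/k)·((k − n)/(k − n + r_k))²`.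
(Here `lam i` denotes `λ_{i+1}`, so `r k = (Σ_{i>k} λ_i)/λ_{k+1}`.) -/
theorem e0_catastrophic_lower_bound
    (n : ℕ) (hn : 1 ≤ n)
    (lam : ℕ → ℝ) (hlam_nonneg : ∀ i, 0 ≤ lam i) (hlam_mono : Antitone lam)
    (hlam_summable : Summable lam) (hlam_ne : ∃ i, lam i ≠ 0)
    (κ0 : ℝ) (hκ0 : 0 < κ0)
    (hκ0_eq : ∑' i, lam i / (lam i + κ0) = (n : ℝ))
    (k : ℕ) (hk : n ≤ k) (hlamk : 0 < lam k)
    (r : ℕ → ℝ) (hr : ∀ j, r j = (∑' i, lam (j + i)) / lam j) :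
    ((n : ℝ) / k) * (((k : ℝ) - n) / ((k : ℝ) - n + r k)) ^ 2
      ≤ (1 / (n : ℝ)) * ∑' i, (lam i / (lam i + κ0)) ^ 2 := by
  have hd : ∀ i, 0 < lam i + κ0 := fun i => add_pos_of_nonneg_of_pos (hlam_nonneg i) hκ0
  set L : ℕ → ℝ := fun i => lam i / (lam i + κ0) with hLdef
  have hL0 : ∀ i, 0 ≤ L i := fun i => div_nonneg (hlam_nonneg i) (hd i).le
  have hLle : ∀ i, L i ≤ lam i / κ0 := fun i =>
    div_le_div_of_nonneg_left (hlam_nonneg i) hκ0 (by linarith [hlam_nonneg i])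
  have hsumL : Summable L :=
    Summable.of_nonneg_of_le hL0 hLle (hlam_summable.div_const κ0)
  have hL1 : ∀ i, L i ≤ 1 := fun i =>
    div_le_one_of_le₀ (le_add_of_nonneg_right hκ0.le) (hd i).le
  have hsumL2 : Summable fun i => L i ^ 2 :=
    Summable.of_nonneg_of_le (fun i => sq_nonneg _)
      (fun i => by nlinarith [hL0 i, hL1 i]) hsumL
  set S : ℝ := ∑ i ∈ Finset.range k, L i with hSdef
  set T : ℝ := ∑' i, L (i + k) with hTdef
  have hsumLk : Summable fun i => L (i + k) := (summable_nat_add_iff k).mpr hsumL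
  have hsumlamk : Summable fun i => lam (i + k) := (summable_nat_add_iff k).mpr hlam_summable
  have htot : S + T = n := by
    rw [hSdef, hTdef, Summable.sum_add_tsum_nat_add k hsumL, hκ0_eq]
  have hT0 : 0 ≤ T := tsum_nonneg fun i => hL0 _
  have hLk0 : 0 < L k := div_pos hlamk (hd k)
  have hTk : L k ≤ T := by
    have := Summable.le_tsum hsumLk 0 (fun j _ => hL0 _)
    simpa using this
  -- S ≥ k * L k
  have hSk : (k : ℝ) * L k ≤ S := by
    have h1 : ∀ i ∈ Finset.range k, L k ≤ L i := by
      intro i hi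
      have hlki : lam k ≤ lam i := hlam_mono (Finset.mem_range.mp hi).le
      rw [hLdef]
      rw [div_le_div_iff₀ (hd k) (hd i)]
      nlinarith [hκ0]
    calc (k : ℝ) * L k = (Finset.range k).card • L k := by simp [nsmul_eq_mul]
    _ ≤ S := Finset.card_nsmul_le_sum _ _ _ h1
  -- tail bound
  have hTlam : ∑' i, lam (k + i) = ∑' i, lam (i + k) := tsum_congr fun i => by rw [add_comm]
  have hrk : r k * lam k = ∑' i, lam (i + k) := by
    rw [hr k, hTlam, div_mul_cancel₀]
    exact hlamk.ne'
  have hTle : T * κ0 ≤ r k * lam k := by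
    rw [hrk, hTdef]
    have h1 : ∑' i, L (i + k) ≤ ∑' i, lam (i + k) / κ0 :=
      Summable.tsum_le_tsum (fun i => hLle _) hsumLk (hsumlamk.div_const κ0)
    have h2 : ∑' i, lam (i + k) / κ0 = (∑' i, lam (i + k)) / κ0 := tsum_div_const
    rw [← le_div_iff₀ hκ0]
    rw [h2] at h1
    exact h1
  have hr1 : 1 ≤ r k := by
    rw [hr k, le_div_iff₀ hlamk, one_mul]
    have h2 : lam (0 + k) ≤ ∑' i, lam (i + k) :=
      Summable.le_tsum hsumlamk 0 (fun j _ => hlam_nonneg _)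
    rw [hTlam]
    simpa using h2
  -- basic positivity
  have hn0 : (0 : ℝ) < n := by exact_mod_cast hn
  have hk0 : (0 : ℝ) < k := lt_of_lt_of_le hn0 (by exact_mod_cast hk)
  have hkn : (n : ℝ) ≤ k := by exact_mod_cast hk
  have hS0 : 0 ≤ S := Finset.sum_nonneg fun i _ => hL0 i
  have hSn : S ≤ n := by linarith
  have hSltk : S < (k : ℝ) := by
    have : 0 < T := lt_of_lt_of_le hLk0 hTk
    linarith
  -- key inequality: lam k * (k - S) ≤ S * κ0
  have hkc : lam k * ((k : ℝ) - S) ≤ S * κ0 := by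
    have h2 : (k : ℝ) * (lam k / (lam k + κ0)) * (lam k + κ0) ≤ S * (lam k + κ0) :=
      mul_le_mul_of_nonneg_right hSk (hd k).le
    have h3 : lam k / (lam k + κ0) * (lam k + κ0) = lam k :=
      div_mul_cancel₀ _ (hd k).ne'
    nlinarith [h2, h3]
  -- quadratic: (n - S)(k - S) ≤ r k * S
  have hQ : ((n : ℝ) - S) * ((k : ℝ) - S) ≤ r k * S := by
    have hnS : ((n : ℝ) - S) * κ0 ≤ r k * lam k := by
      have : (n : ℝ) - S = T := by linarith
      rw [this]; exact hTle
    have h1 : ((n : ℝ) - S) * κ0 * ((k : ℝ) - S) ≤ r k * lam k * ((k : ℝ) - S) :=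
      mul_le_mul_of_nonneg_right hnS (by linarith)
    have h2 : r k * (lam k * ((k : ℝ) - S)) ≤ r k * (S * κ0) :=
      mul_le_mul_of_nonneg_left hkc (by linarith)
    have h3' : (((n : ℝ) - S) * ((k : ℝ) - S)) * κ0 ≤ (r k * S) * κ0 := by
      nlinarith [h1, h2]
    exact le_of_mul_le_mul_right h3' hκ0
  -- lower bound on S
  have hkey : (n : ℝ) * ((k : ℝ) - n) ≤ S * ((k : ℝ) - n + r k) := by
    nlinarith [hQ, sq_nonneg ((n : ℝ) - S)]
  have haR : 0 < (k : ℝ) - n + r k := by linarith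
  have ha0 : 0 ≤ (k : ℝ) - n := by linarith
  -- Cauchy–Schwarz
  have hCS : S ^ 2 ≤ (k : ℝ) * ∑ i ∈ Finset.range k, L i ^ 2 := by
    have := sq_sum_le_card_mul_sum_sq (s := Finset.range k) (f := L)
    simpa using this
  have hsum_le : ∑ i ∈ Finset.range k, L i ^ 2 ≤ ∑' i, L i ^ 2 :=
    Summable.sum_le_tsum _ (fun i _ => sq_nonneg _) hsumL2
  have hfin : (n : ℝ) ^ 2 * ((k : ℝ) - n) ^ 2 ≤ S ^ 2 * ((k : ℝ) - n + r k) ^ 2 := by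
    have h := mul_self_le_mul_self (mul_nonneg hn0.le ha0) hkey
    calc (n : ℝ) ^ 2 * ((k : ℝ) - n) ^ 2
        = ((n : ℝ) * ((k : ℝ) - n)) * ((n : ℝ) * ((k : ℝ) - n)) := by ring
      _ ≤ (S * ((k : ℝ) - n + r k)) * (S * ((k : ℝ) - n + r k)) := h
      _ = S ^ 2 * ((k : ℝ) - n + r k) ^ 2 := by ring
  have h4 : S ^ 2 / (k : ℝ) ≤ ∑' i, L i ^ 2 := by
    rw [div_le_iff₀ hk0]
    have h6 := mul_le_mul_of_nonneg_right hsum_le hk0.le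
    linarith [hCS, h6]
  have h2 : ((n : ℝ) / k) * (((k : ℝ) - n) / ((k : ℝ) - n + r k)) ^ 2
      ≤ S ^ 2 / ((n : ℝ) * k) := by
    rw [div_pow, div_mul_div_comm, div_le_div_iff₀ (by positivity) (by positivity)]
    have h5 := mul_le_mul_of_nonneg_right hfin hk0.le
    linarith [h5]
  calc ((n : ℝ) / k) * (((k : ℝ) - n) / ((k : ℝ) - n + r k)) ^ 2
      ≤ S ^ 2 / ((n : ℝ) * k) := h2
    _ = (1 / (n : ℝ)) * (S ^ 2 / k) := by ring
    _ ≤ (1 / (n : ℝ)) * ∑' i, L i ^ 2 :=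
        mul_le_mul_of_nonneg_left h4 (by positivity)
end

section
/- If lim_{k→∞} k/r_k = 0, then overfitting is benign: lim_{n→∞} E_0(n) = 1. -/
set_option maxHeartbeats 2000000


/-- If `lim_{k→∞} k/r_k = 0` then overfitting is benign:
`lim_{n→∞} E_0(n) = 1`. (Here `lam i` denotes `λ_{i+1}`, the spectrum being
fixed as `n` increases.) -/
theorem benign_overfitting_of_k_div_rk_tendsto_zero
    (lam : ℕ → ℝ) (hlam_pos : ∀ i, 0 < lam i) (hlam_mono : Antitone lam)
    (hlam_summable : Summable lam)
    (κ : ℕ → ℝ) (hκ_pos : ∀ n, 1 ≤ n → 0 < κ n)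
    (hκ_eq : ∀ n : ℕ, 1 ≤ n → ∑' i, lam i / (lam i + κ n) = (n : ℝ))
    (E : ℕ → ℝ)
    (hE : ∀ n : ℕ, E n = (n : ℝ) / ((n : ℝ) - ∑' i, (lam i / (lam i + κ n)) ^ 2))
    (r : ℕ → ℝ) (hr : ∀ j, r j = (∑' i, lam (j + i)) / lam j)
    (h : Filter.Tendsto (fun k : ℕ => (k : ℝ) / r k) Filter.atTop (nhds 0)) :
    Filter.Tendsto E Filter.atTop (nhds 1) := by
  -- positivity of r
  have hr_pos : ∀ j, 0 < r j := by
    intro j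
    have hT : Summable (fun i => lam (j + i)) := by
      have := (summable_nat_add_iff j).mpr hlam_summable
      simpa [add_comm] using this
    have h0 : lam (j + 0) ≤ ∑' i, lam (j + i) :=
      Summable.le_tsum hT 0 (fun i _ => (hlam_pos _).le)
    have : 0 < ∑' i, lam (j + i) := lt_of_lt_of_le (hlam_pos _) h0
    rw [hr j]
    exact div_pos this (hlam_pos j)
  rw [Metric.tendsto_atTop]
  intro δ hδ
  set ε : ℝ := min (δ / 8) (1 / 4) with hε_def
  have hε_pos : 0 < ε := lt_min (by linarith) (by norm_num)
  have hε_le : ε ≤ 1 / 4 := min_le_right _ _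
  have hεδ : 4 * ε < δ := by
    have h1 : ε ≤ δ / 8 := min_le_left _ _
    linarith
  obtain ⟨K, hK⟩ := (Metric.tendsto_atTop.mp h) (ε ^ 2 / 4) (by positivity)
  set M : ℝ := max (K : ℝ) 1 with hM_def
  refine ⟨max 1 ⌈2 * M / ε⌉₊, fun n hn => ?_⟩
  have hn1 : 1 ≤ n := le_trans (le_max_left _ _) hn
  have hn2 : 2 * M / ε ≤ (n : ℝ) := by
    have : ⌈2 * M / ε⌉₊ ≤ n := le_trans (le_max_right _ _) hn
    exact le_trans (Nat.le_ceil _) (by exact_mod_cast this)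
  have hM1 : (1 : ℝ) ≤ M := le_max_right _ _
  have hMK : (K : ℝ) ≤ M := le_max_left _ _
  have hεn2 : M ≤ ε * n / 2 := by
    rw [div_le_iff₀ hε_pos] at hn2
    nlinarith
  -- choose k
  set k : ℕ := ⌈ε * n / 2⌉₊ with hk_def
  have hk_ge : ε * n / 2 ≤ (k : ℝ) := Nat.le_ceil _
  have hkK : K ≤ k := by
    have : (K : ℝ) ≤ (k : ℝ) := le_trans hMK (le_trans hεn2 hk_ge)
    exact_mod_cast this
  have hk_le : (k : ℝ) ≤ ε * n := by
    have h1 : (k : ℝ) < ε * n / 2 + 1 := Nat.ceil_lt_add_one (by nlinarith)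
    nlinarith
  -- from hypothesis h : n / r k < ε / 2
  have hKk := hK k hkK
  have hkr : (k : ℝ) / r k < ε ^ 2 / 4 := by
    rw [Real.dist_eq, sub_zero] at hKk
    exact lt_of_abs_lt hKk
  have hn_pos : (0 : ℝ) < n := by exact_mod_cast hn1
  have hrk_big : 2 * (n : ℝ) / ε < r k := by
    rw [div_lt_iff₀ (hr_pos k)] at hkr
    have hk2 : ε * n / 2 ≤ (k : ℝ) := hk_ge
    rw [div_lt_iff₀ hε_pos]
    nlinarith [hr_pos k]
  have hnr : (n : ℝ) / r k < ε / 2 := by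
    rw [div_lt_iff₀ (hr_pos k)]
    have : 2 * (n : ℝ) / ε < r k := hrk_big
    rw [div_lt_iff₀ hε_pos] at this
    nlinarith
  -- analytic core
  set c : ℝ := κ n with hc_def
  have hc : 0 < c := hκ_pos n hn1
  set s : ℕ → ℝ := fun i => lam i / (lam i + c) with hs_def
  have hden_pos : ∀ i, 0 < lam i + c := fun i => add_pos (hlam_pos i) hc
  have hs_pos : ∀ i, 0 < s i := fun i => div_pos (hlam_pos i) (hden_pos i)
  have hs_lt1 : ∀ i, s i < 1 := fun i => by
    rw [hs_def]
    exact (div_lt_one (hden_pos i)).mpr (by linarith [hlam_pos i])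
  have hs_anti : ∀ i j, i ≤ j → s j ≤ s i := by
    intro i j hij
    have hl := hlam_mono hij
    rw [hs_def]
    rw [div_le_div_iff₀ (hden_pos j) (hden_pos i)]
    nlinarith [hlam_pos i, hlam_pos j]
  have hs_sum : Summable s := by
    refine Summable.of_nonneg_of_le (fun i => (hs_pos i).le) (fun i => ?_)
      (hlam_summable.div_const c)
    rw [hs_def]
    exact div_le_div_of_nonneg_left (hlam_pos i).le hc (by linarith [hlam_pos i])
  have htot : ∑' i, s i = (n : ℝ) := by
    simp only [hs_def, hc_def]
    exact hκ_eq n hn1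
  have hs2_sum : Summable (fun i => (s i) ^ 2) := by
    refine Summable.of_nonneg_of_le (fun i => sq_nonneg _) (fun i => ?_) hs_sum
    nlinarith [hs_pos i, hs_lt1 i]
  have hs_tail_sum : Summable (fun i => s (i + k)) := (summable_nat_add_iff k).mpr hs_sum
  have htail_s : ∑' i, s (i + k) ≤ (n : ℝ) := by
    have := Summable.sum_add_tsum_nat_add k hs_sum
    have hfin : 0 ≤ ∑ i ∈ Finset.range k, s i :=
      Finset.sum_nonneg (fun i _ => (hs_pos i).le)
    rw [htot] at this
    linarith
  -- tail of lam
  set T : ℝ := ∑' i, lam (i + k) with hT_def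
  have hT_sum : Summable (fun i => lam (i + k)) := (summable_nat_add_iff k).mpr hlam_summable
  have hT_pos : 0 < T := by
    have h0 : lam (0 + k) ≤ T := Summable.le_tsum hT_sum 0 (fun i _ => (hlam_pos _).le)
    exact lt_of_lt_of_le (hlam_pos _) (by simpa using h0)
  have hrkT : r k = T / lam k := by
    rw [hr k, hT_def]
    congr 1
    exact tsum_congr (fun i => by rw [add_comm])
  have hA : T / (lam k + c) ≤ (n : ℝ) := by
    have h1 : T / (lam k + c) = ∑' i, lam (i + k) / (lam k + c) := by
      rw [hT_def, tsum_div_const]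
    rw [h1]
    refine le_trans (Summable.tsum_le_tsum (fun i => ?_) (hT_sum.div_const _) hs_tail_sum) htail_s
    rw [hs_def]
    exact div_le_div_of_nonneg_left (hlam_pos _).le (hden_pos _)
      (by linarith [hlam_mono (Nat.le_add_left k i)])
  have hsk : s k ≤ (n : ℝ) / r k := by
    rw [le_div_iff₀ (hr_pos k), hrkT, hs_def]
    have : lam k / (lam k + c) * (T / lam k) = T / (lam k + c) := by
      rw [div_mul_div_comm, mul_comm (lam k + c) (lam k),
        mul_div_mul_left _ _ (ne_of_gt (hlam_pos k))]
    rw [this]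
    exact hA
  -- bound the sum of squares
  set S : ℝ := ∑' i, (s i) ^ 2 with hS_def
  have hS_nonneg : 0 ≤ S := tsum_nonneg (fun i => sq_nonneg _)
  have hS_le : S ≤ (k : ℝ) + s k * n := by
    have hsplit := Summable.sum_add_tsum_nat_add k hs2_sum
    have hfin : ∑ i ∈ Finset.range k, (s i) ^ 2 ≤ (k : ℝ) := by
      calc ∑ i ∈ Finset.range k, (s i) ^ 2 ≤ ∑ i ∈ Finset.range k, 1 := by
            refine Finset.sum_le_sum (fun i _ => ?_)
            nlinarith [hs_pos i, hs_lt1 i]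
        _ = (k : ℝ) := by simp
    have htail : ∑' i, (s (i + k)) ^ 2 ≤ s k * n := by
      have h1 : ∑' i, (s (i + k)) ^ 2 ≤ ∑' i, s k * s (i + k) := by
        refine Summable.tsum_le_tsum (fun i => ?_) ((summable_nat_add_iff k).mpr hs2_sum)
          (hs_tail_sum.mul_left _)
        have := hs_anti k (i + k) (Nat.le_add_left k i)
        nlinarith [hs_pos (i + k)]
      rw [tsum_mul_left] at h1
      exact le_trans h1 (mul_le_mul_of_nonneg_left htail_s (hs_pos k).le)
    rw [hS_def, ← hsplit]
    linarith
  have hS_small : S ≤ 2 * ε * n := by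
    have h1 : s k * n ≤ (ε / 2) * n := by
      have : s k ≤ ε / 2 := le_trans hsk hnr.le
      nlinarith
    nlinarith
  -- conclude
  have hden : (1 - 2 * ε) * n ≤ (n : ℝ) - S := by nlinarith
  have hden_pos' : 0 < (n : ℝ) - S := by nlinarith
  have hEn : E n = (n : ℝ) / ((n : ℝ) - S) := by
    simp only [hS_def, hs_def, hc_def]
    exact hE n
  have hE_ge : 1 ≤ E n := by
    rw [hEn]
    rw [le_div_iff₀ hden_pos']
    linarith
  have hE_le : E n ≤ 1 + 4 * ε := by
    rw [hEn, div_le_iff₀ hden_pos']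
    nlinarith
  rw [Real.dist_eq]
  rw [abs_of_nonneg (by linarith)]
  linarith
end

section
/- If lim_{k→∞} k/r_k exists and lies in (0, ∞), then overfitting is tempered: liminf_{n→∞} E_0(n) > 1 and limsup_{n→∞} E_0(n) < ∞. -/
open Filter Real Finset

private lemma aux_inv_one_sub_le_exp {u : ℝ} (h0 : 0 ≤ u) (h1 : u ≤ 1/2) :
    1 / (1 - u) ≤ Real.exp (2 * u) := by
  have hpos : 0 < 1 - u := by linarith
  rw [div_le_iff₀ hpos]
  have := Real.add_one_le_exp (2 * u)
  nlinarith

set_option maxHeartbeats 1600000 in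
/-- If `lim_{k→∞} k/r_k` exists and lies in `(0, ∞)`, then
overfitting is tempered: `liminf_{n→∞} E_0(n) > 1` and
`limsup_{n→∞} E_0(n) < ∞` (i.e. `E` is eventually bounded above). -/
theorem tempered_overfitting_of_k_div_rk_tendsto_const
    (lam : ℕ → ℝ) (hlam_pos : ∀ i, 0 < lam i) (hlam_mono : Antitone lam)
    (hlam_summable : Summable lam)
    (κ : ℕ → ℝ) (hκ_pos : ∀ n, 1 ≤ n → 0 < κ n)
    (hκ_eq : ∀ n : ℕ, 1 ≤ n → ∑' i, lam i / (lam i + κ n) = (n : ℝ))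
    (E : ℕ → ℝ)
    (hE : ∀ n : ℕ, E n = (n : ℝ) / ((n : ℝ) - ∑' i, (lam i / (lam i + κ n)) ^ 2))
    (r : ℕ → ℝ) (hr : ∀ j, r j = (∑' i, lam (j + i)) / lam j)
    (c : ℝ) (hc : 0 < c)
    (h : Filter.Tendsto (fun k : ℕ => (k : ℝ) / r k) Filter.atTop (nhds c)) :
    1 < Filter.liminf E Filter.atTop ∧
      Filter.IsBoundedUnder (· ≤ ·) Filter.atTop E := by
  classical
  -- shifted summability
  have hshift : ∀ (f : ℕ → ℝ), Summable f → ∀ k, Summable (fun i => f (k + i)) := by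
    intro f hf k
    have := (summable_nat_add_iff k).mpr hf
    simpa [add_comm] using this
  -- tail sums
  set t : ℕ → ℝ := fun k => ∑' i, lam (k + i) with ht_def
  have htk : ∀ k, t k = ∑' i, lam (k + i) := fun k => rfl
  have ht_pos : ∀ k, 0 < t k := fun k =>
    Summable.tsum_pos (hshift lam hlam_summable k) (fun i => (hlam_pos _).le) 0 (hlam_pos _)
  have ht_rec : ∀ k, t k = lam k + t (k + 1) := by
    intro k
    have h0 := Summable.tsum_eq_zero_add (hshift lam hlam_summable k)
    have h1 : ∀ i : ℕ, lam (k + (i + 1)) = lam ((k + 1) + i) := by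
      intro i; congr 1; omega
    rw [htk k, htk (k+1), h0]
    simp [h1]
  have ht_anti : Antitone t := antitone_nat_of_succ_le (by
    intro j; rw [ht_rec j]; linarith [hlam_pos j])
  -- the limit hypothesis, rewritten
  have h' : Tendsto (fun k : ℕ => (k:ℝ) * lam k / t k) atTop (nhds c) := by
    have he : (fun k : ℕ => (k:ℝ) / r k) = fun k : ℕ => (k:ℝ) * lam k / t k := by
      funext k; rw [hr k, ← htk k, div_div_eq_mul_div]
    rwa [he] at h
  obtain ⟨K₁, hK₁⟩ : ∃ K₁ : ℕ, ∀ k, K₁ ≤ k →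
      (k:ℝ) * lam k / t k ∈ Set.Ioo (c/2) (2*c) := by
    have := h'.eventually (Ioo_mem_nhds (by linarith : c/2 < c) (by linarith : c < 2*c))
    exact eventually_atTop.mp this
  have hub : ∀ k, K₁ ≤ k → (k:ℝ) * lam k < 2*c * t k := by
    intro k hk
    exact (div_lt_iff₀ (ht_pos k)).mp (hK₁ k hk).2 |>.trans_le (by nlinarith [ht_pos k])
  have hlb : ∀ k, K₁ ≤ k → c/2 * t k < (k:ℝ) * lam k := by
    intro k hk
    exact (lt_div_iff₀ (ht_pos k)).mp (hK₁ k hk).1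
  -- threshold K
  set K : ℕ := K₁ + Nat.ceil (4*c) + 1 with hK_def
  have hK4c : ∀ j : ℕ, K ≤ j → 4*c ≤ (j:ℝ) := by
    intro j hj
    have h1 : (4:ℝ)*c ≤ (Nat.ceil (4*c) : ℝ) := Nat.le_ceil _
    have h2 : (Nat.ceil (4*c) : ℕ) ≤ j := by omega
    have : ((Nat.ceil (4*c):ℕ):ℝ) ≤ (j:ℝ) := Nat.cast_le.mpr h2
    linarith
  have hKK₁ : ∀ j : ℕ, K ≤ j → K₁ ≤ j := by intro j hj; omega
  have hK1 : ∀ j : ℕ, K ≤ j → 1 ≤ j := by intro j hj; omega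
  -- one-step growth bound for t
  have hstep : ∀ j : ℕ, K ≤ j → t j ≤ t (j+1) * Real.exp (4*c/(j:ℝ)) := by
    intro j hj
    have hj0 : (0:ℝ) < (j:ℝ) := by exact_mod_cast hK1 j hj
    have hu0 : 0 ≤ 2*c/(j:ℝ) := by positivity
    have hu1 : 2*c/(j:ℝ) ≤ 1/2 := by
      rw [div_le_iff₀ hj0]; linarith [hK4c j hj]
    have hlamj : lam j < 2*c/(j:ℝ) * t j := by
      have h1 := hub j (hKK₁ j hj)
      rw [div_mul_eq_mul_div, lt_div_iff₀ hj0]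
      nlinarith
    have h1 : t j * (1 - 2*c/(j:ℝ)) ≤ t (j+1) := by
      have := ht_rec j; nlinarith
    have h2 : t j ≤ t (j+1) / (1 - 2*c/(j:ℝ)) := by
      rw [le_div_iff₀ (by linarith : (0:ℝ) < 1 - 2*c/(j:ℝ))]
      linarith
    calc t j ≤ t (j+1) / (1 - 2*c/(j:ℝ)) := h2
      _ = t (j+1) * (1 / (1 - 2*c/(j:ℝ))) := by ring
      _ ≤ t (j+1) * Real.exp (2*(2*c/(j:ℝ))) :=
          mul_le_mul_of_nonneg_left (aux_inv_one_sub_le_exp hu0 hu1) (ht_pos (j+1)).le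
      _ = t (j+1) * Real.exp (4*c/(j:ℝ)) := by congr 1; ring_nf
  -- iterated growth bound
  have hiter : ∀ d : ℕ, ∀ m : ℕ, K ≤ m → t m ≤ t (m + d) * Real.exp (4*c*(d:ℝ)/(m:ℝ)) := by
    intro d
    induction d with
    | zero => intro m hm; simp
    | succ d ih =>
      intro m hm
      have hm0 : (0:ℝ) < (m:ℝ) := by exact_mod_cast hK1 m hm
      have e1 : m + 1 + d = m + (d + 1) := by omega
      calc t m ≤ t (m+1) * Real.exp (4*c/(m:ℝ)) := hstep m hm
        _ ≤ (t (m+1+d) * Real.exp (4*c*(d:ℝ)/((m:ℝ)+1))) * Real.exp (4*c/(m:ℝ)) := by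
            apply mul_le_mul_of_nonneg_right _ (Real.exp_pos _).le
            have := ih (m+1) (by omega)
            simpa using this
        _ = t (m + (d+1)) * Real.exp (4*c*(d:ℝ)/((m:ℝ)+1) + 4*c/(m:ℝ)) := by
            rw [Real.exp_add, e1]; ring
        _ ≤ t (m + (d+1)) * Real.exp (4*c*((d:ℝ)+1)/(m:ℝ)) := by
            apply mul_le_mul_of_nonneg_left _ (ht_pos _).le
            apply Real.exp_le_exp.mpr
            have h3 : 4*c*(d:ℝ)/((m:ℝ)+1) ≤ 4*c*(d:ℝ)/(m:ℝ) := by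
              apply div_le_div_of_nonneg_left (by positivity) hm0 (by linarith)
            have h4 : 4*c*(d:ℝ)/(m:ℝ) + 4*c/(m:ℝ) = 4*c*((d:ℝ)+1)/(m:ℝ) := by ring
            linarith
        _ = t (m + (d+1)) * Real.exp (4*c*(((d+1 : ℕ)):ℝ)/(m:ℝ)) := by push_cast; ring_nf
  -- doubling bound for lam
  have hlamdouble : ∀ k : ℕ, 2*K + 2 ≤ k → lam ((k+1)/2) ≤ 8 * Real.exp (4*c) * lam k := by
    intro k hk
    set m : ℕ := (k+1)/2 with hm_def
    have hmK : K ≤ m := by omega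
    have h2m : k ≤ 2*m := by omega
    have hdm : k - m ≤ m := by omega
    have hm0 : (0:ℝ) < (m:ℝ) := by exact_mod_cast hK1 m hmK
    have hk0 : (0:ℝ) < (k:ℝ) := Nat.cast_pos.mpr (by omega)
    have h2m' : (k:ℝ) ≤ 2*(m:ℝ) := by exact_mod_cast h2m
    have htm : t m ≤ t k * Real.exp (4*c) := by
      have h1 := hiter (k - m) m hmK
      rw [show m + (k - m) = k by omega] at h1
      have h2 : 4*c*((k-m : ℕ):ℝ)/(m:ℝ) ≤ 4*c := by
        rw [div_le_iff₀ hm0]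
        have : ((k-m : ℕ):ℝ) ≤ (m:ℝ) := by exact_mod_cast hdm
        nlinarith
      calc t m ≤ t k * Real.exp (4*c*((k-m:ℕ):ℝ)/(m:ℝ)) := h1
        _ ≤ t k * Real.exp (4*c) := mul_le_mul_of_nonneg_left (Real.exp_le_exp.mpr h2) (ht_pos k).le
    have f1 := hub m (hKK₁ m hmK)
    have f3 := hlb k (by omega)
    have hE4 : (0:ℝ) < Real.exp (4*c) := Real.exp_pos _
    have hlk : 0 < lam k := hlam_pos k
    have hlm : 0 < lam m := hlam_pos m
    have htkpos := ht_pos k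
    have key : (m:ℝ) * lam m ≤ (m:ℝ) * (8 * Real.exp (4*c) * lam k) := by
      nlinarith [mul_le_mul_of_nonneg_left htm (by positivity : (0:ℝ) ≤ 2*c),
        mul_lt_mul_of_pos_right f3 (by positivity : (0:ℝ) < 4*Real.exp (4*c)),
        mul_le_mul_of_nonneg_right h2m' (by positivity : (0:ℝ) ≤ 4*Real.exp (4*c)*lam k)]
    exact le_of_mul_le_mul_left key hm0
  -- constants
  set M : ℝ := 8 * Real.exp (4*c) with hM_def
  have hM0 : (0:ℝ) < M := by positivity
  set γ : ℝ := c/(c+2) with hγ_def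
  have hγ0 : 0 < γ := by positivity
  have hγ1 : γ < 1 := by
    rw [hγ_def, div_lt_one (by linarith)]; linarith
  -- threshold for n
  obtain ⟨N₀, hN₀⟩ := exists_nat_gt (((2*K+2 : ℕ) : ℝ) + t 0 / lam (2*K+2))
  -- main quantitative claim
  have main : ∀ n : ℕ, N₀ + 1 ≤ n →
      1/(1-γ/4) ≤ E n ∧ E n ≤ 8*(M+1)/γ := by
    intro n hn
    have hn1 : 1 ≤ n := by omega
    have hnR : (1:ℝ) ≤ (n:ℝ) := by exact_mod_cast hn1
    have hκn : 0 < κ n := hκ_pos n hn1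
    set x : ℕ → ℝ := fun i => lam i / (lam i + κ n) with hx_def
    have hden : ∀ i, 0 < lam i + κ n := fun i => add_pos (hlam_pos i) hκn
    have hx_pos : ∀ i, 0 < x i := fun i => div_pos (hlam_pos i) (hden i)
    have hx_le : ∀ i, x i ≤ lam i / κ n := by
      intro i
      apply div_le_div_of_nonneg_left (hlam_pos i).le hκn
      linarith [hlam_pos i]
    have hx1 : ∀ i, x i ≤ 1 := fun i => (div_le_one (hden i)).mpr (by linarith [hκn])
    have hsumx : Summable x :=
      Summable.of_nonneg_of_le (fun i => (hx_pos i).le) hx_le (hlam_summable.div_const (κ n))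
    have hsumx2 : Summable (fun i => x i ^ 2) :=
      Summable.of_nonneg_of_le (fun i => sq_nonneg _)
        (fun i => by nlinarith [hx_pos i, hx1 i]) hsumx
    have hS : ∑' i, x i = (n:ℝ) := by
      simp only [hx_def]; exact hκ_eq n hn1
    -- the threshold index k
    have hex : ∃ j, lam j < κ n :=
      ((hlam_summable.tendsto_atTop_zero).eventually (gt_mem_nhds hκn)).exists
    obtain ⟨k, hk_lt, hk_ge⟩ : ∃ k, lam k < κ n ∧ ∀ i, i < k → κ n ≤ lam i :=
      ⟨Nat.find hex, Nat.find_spec hex, fun i hi => not_lt.mp (Nat.find_min hex hi)⟩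
    -- n ≤ k + t k / lam k
    have htail : ∑' i, x (k + i) ≤ t k / lam k := by
      have s1 : ∑' i, x (k + i) ≤ ∑' i, lam (k + i) / κ n :=
        Summable.tsum_le_tsum (fun i => hx_le (k + i)) (hshift x hsumx k)
          ((hshift lam hlam_summable k).div_const (κ n))
      have s2 : ∑' i, lam (k + i) / κ n = t k / κ n := by
        rw [htk k, tsum_div_const]
      have s3 : t k / κ n ≤ t k / lam k :=
        div_le_div_of_nonneg_left (ht_pos k).le (hlam_pos k) hk_lt.le
      rw [s2] at s1
      exact s1.trans s3
    have hsplit : (∑ i ∈ Finset.range k, x i) + ∑' i, x (k + i) = (n:ℝ) := by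
      rw [← hS]
      have h2 : ∑' i, x (k + i) = ∑' i, x (i + k) :=
        tsum_congr (fun i => by rw [Nat.add_comm])
      rw [h2]
      exact Summable.sum_add_tsum_nat_add k hsumx
    have hhead : ∑ i ∈ Finset.range k, x i ≤ (k:ℝ) := by
      calc ∑ i ∈ Finset.range k, x i ≤ ∑ _i ∈ Finset.range k, (1:ℝ) :=
            Finset.sum_le_sum (fun i _ => hx1 i)
        _ = (k:ℝ) := by simp
    have hn_le : (n:ℝ) ≤ (k:ℝ) + t k / lam k := by
      rw [← hsplit]; linarith [htail]
    -- k is large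
    have hk_big : 2*K + 2 ≤ k := by
      by_contra hcon
      push_neg at hcon
      have h1 : t k ≤ t 0 := ht_anti (Nat.zero_le k)
      have h2 : lam (2*K+2) ≤ lam k := hlam_mono (by omega)
      have h3 : t k / lam k ≤ t 0 / lam (2*K+2) :=
        div_le_div₀ (ht_pos 0).le h1 (hlam_pos _) h2
      have h4 : (k:ℝ) ≤ ((2*K+2:ℕ):ℝ) := Nat.cast_le.mpr (by omega)
      have h5 : (N₀:ℝ) + 1 ≤ (n:ℝ) := by exact_mod_cast hn
      linarith [hn_le, hN₀]
    have hkK₁ : K₁ ≤ k := by omega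
    have hk0R : (0:ℝ) < (k:ℝ) := Nat.cast_pos.mpr (by omega)
    have h6 : t k / lam k ≤ 2*(k:ℝ)/c := by
      rw [div_le_div_iff₀ (hlam_pos k) hc]
      have := hlb k hkK₁
      nlinarith
    have hn_le' : (n:ℝ) ≤ (k:ℝ) + 2*(k:ℝ)/c := by linarith
    have hkγ : γ * (n:ℝ) ≤ (k:ℝ) := by
      rw [hγ_def, div_mul_eq_mul_div, div_le_iff₀ (by linarith : (0:ℝ) < c+2)]
      have e : c*(2*(k:ℝ)/c) = 2*(k:ℝ) := by field_simp
      nlinarith [mul_le_mul_of_nonneg_left hn_le' hc.le]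
    -- lower bound on x for small indices
    have hxi_half : ∀ i, i < k → 1/2 ≤ x i := by
      intro i hi
      simp only [hx_def]
      rw [le_div_iff₀ (hden i)]
      have := hk_ge i hi
      linarith [hlam_pos i]
    -- lower bound on the sum of squares
    have hQ1 : (k:ℝ) * (1/4) ≤ ∑ i ∈ Finset.range k, x i ^ 2 := by
      have := Finset.card_nsmul_le_sum (Finset.range k) (fun i => x i ^ 2) (1/4)
        (fun i hi => by
          have h8 := hxi_half i (Finset.mem_range.mp hi)
          nlinarith)
      simpa [nsmul_eq_mul] using this
    have hQ_lb : γ*(n:ℝ)/4 ≤ ∑' i, x i ^ 2 := by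
      have h9 : ∑ i ∈ Finset.range k, x i ^ 2 ≤ ∑' i, x i ^ 2 :=
        Summable.sum_le_tsum _ (fun i _ => sq_nonneg _) hsumx2
      linarith
    -- the middle block
    set m : ℕ := (k+1)/2 with hm2_def
    have hmlam : lam m ≤ M * lam k := hlamdouble k hk_big
    have hterm : ∀ i ∈ Finset.Ico m k, 1/(2*(M+1)) ≤ x i - x i ^ 2 := by
      intro i hi
      obtain ⟨him, hik⟩ := Finset.mem_Ico.mp hi
      have hxi := hxi_half i hik
      have hlami : lam i ≤ M * κ n := by
        have h10 : lam i ≤ lam m := hlam_mono him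
        nlinarith [hmlam, hk_lt, hM0]
      have h1x : 1/(M+1) ≤ 1 - x i := by
        have hne : lam i + κ n ≠ 0 := (hden i).ne'
        have hxe : 1 - x i = κ n/(lam i + κ n) := by
          simp only [hx_def]
          field_simp
          ring
        rw [hxe, div_le_div_iff₀ (by linarith) (hden i)]
        linarith
      have e2 : (1:ℝ)/2 * (1/(M+1)) = 1/(2*(M+1)) := by
        rw [div_mul_div_comm, one_mul]
      have e3 : x i - x i ^ 2 = x i * (1 - x i) := by ring
      have e4 : (1:ℝ)/2 * (1/(M+1)) ≤ x i * (1 - x i) :=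
        mul_le_mul hxi h1x (by positivity) (hx_pos i).le
      linarith
    have hcard : ((k - m:ℕ):ℝ) * (1/(2*(M+1))) ≤ ∑ i ∈ Finset.Ico m k, (x i - x i ^ 2) := by
      have := Finset.card_nsmul_le_sum (Finset.Ico m k) (fun i => x i - x i ^ 2)
        (1/(2*(M+1))) hterm
      simpa [Nat.card_Ico, nsmul_eq_mul] using this
    have hsub : ∑' i, (x i - x i ^ 2) = (n:ℝ) - ∑' i, x i ^ 2 := by
      rw [Summable.tsum_sub hsumx hsumx2, hS]
    have hNQ : ((k-m:ℕ):ℝ) * (1/(2*(M+1))) ≤ (n:ℝ) - ∑' i, x i ^ 2 := by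
      rw [← hsub]
      refine le_trans hcard (Summable.sum_le_tsum _ (fun i _ => ?_) (hsumx.sub hsumx2))
      nlinarith [hx_pos i, hx1 i]
    have hkm4 : (k:ℝ) ≤ 4*((k-m:ℕ):ℝ) := by
      have h11 : k ≤ 4*(k-m) := by omega
      exact_mod_cast h11
    have hNQ_lb : γ*(n:ℝ) ≤ 8*(M+1)*((n:ℝ) - ∑' i, x i ^ 2) := by
      have e5 : 8*(M+1)*(((k-m:ℕ):ℝ) * (1/(2*(M+1)))) = 4*((k-m:ℕ):ℝ) := by
        field_simp
        ring
      have h12 := mul_le_mul_of_nonneg_left hNQ (by positivity : (0:ℝ) ≤ 8*(M+1))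
      linarith
    have hQpos : 0 < (n:ℝ) - ∑' i, x i ^ 2 := by
      nlinarith [hNQ_lb, hγ0, hnR, hM0]
    have hEn : E n = (n:ℝ)/((n:ℝ) - ∑' i, x i ^ 2) := by
      simp only [hx_def]; exact hE n
    constructor
    · rw [hEn, div_le_div_iff₀ (by linarith : (0:ℝ) < 1 - γ/4) hQpos]
      nlinarith [hQ_lb]
    · rw [hEn, div_le_div_iff₀ hQpos hγ0]
      nlinarith [hNQ_lb]
  -- conclusion
  have hevlb : ∀ᶠ n in atTop, 1/(1-γ/4) ≤ E n :=
    eventually_atTop.mpr ⟨N₀+1, fun n hn => (main n hn).1⟩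
  have hevub : ∀ᶠ n in atTop, E n ≤ 8*(M+1)/γ :=
    eventually_atTop.mpr ⟨N₀+1, fun n hn => (main n hn).2⟩
  have hbdd : Filter.IsBoundedUnder (· ≤ ·) atTop E :=
    ⟨8*(M+1)/γ, eventually_map.mpr hevub⟩
  refine ⟨lt_of_lt_of_le ?_ (le_liminf_of_le hbdd.isCoboundedUnder_ge hevlb), hbdd⟩
  rw [lt_div_iff₀ (by linarith : (0:ℝ) < 1 - γ/4)]
  linarith
end

section
/- If lim_{k→∞} k/r_k = ∞, then overfitting is catastrophic: lim_{n→∞} E_0(n) = ∞. -/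
open Filter Finset

/-- If `lim_{k→∞} k/r_k = ∞`, then overfitting is catastrophic:
`lim_{n→∞} E_0(n) = ∞`. -/
theorem catastrophic_overfitting_of_k_div_rk_tendsto_atTop
    (lam : ℕ → ℝ) (hlam_pos : ∀ i, 0 < lam i) (hlam_mono : Antitone lam)
    (hlam_summable : Summable lam)
    (κ : ℕ → ℝ) (hκ_pos : ∀ n, 1 ≤ n → 0 < κ n)
    (hκ_eq : ∀ n : ℕ, 1 ≤ n → ∑' i, lam i / (lam i + κ n) = (n : ℝ))
    (E : ℕ → ℝ)
    (hE : ∀ n : ℕ, E n = (n : ℝ) / ((n : ℝ) - ∑' i, (lam i / (lam i + κ n)) ^ 2))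
    (r : ℕ → ℝ) (hr : ∀ j, r j = (∑' i, lam (j + i)) / lam j)
    (h : Filter.Tendsto (fun k : ℕ => (k : ℝ) / r k) Filter.atTop Filter.atTop) :
    Filter.Tendsto E Filter.atTop Filter.atTop := by
  classical
  have htail_sum : ∀ j : ℕ, Summable (fun i => lam (j + i)) := by
    intro j
    have := (summable_nat_add_iff j).mpr hlam_summable
    simpa [add_comm] using this
  have htail_pos : ∀ j : ℕ, 0 < ∑' i, lam (j + i) := fun j =>
    Summable.tsum_pos (htail_sum j) (fun i => (hlam_pos _).le) 0 (hlam_pos _)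
  have hr_pos : ∀ j, 0 < r j := fun j => by
    rw [hr j]; exact div_pos (htail_pos j) (hlam_pos j)
  rw [tendsto_atTop]
  intro C
  obtain ⟨C', hC'def⟩ : ∃ x : ℝ, x = max C 1 := ⟨_, rfl⟩
  have hC1 : (1:ℝ) ≤ C' := hC'def ▸ le_max_right _ _
  have hC0 : (0:ℝ) < C' := lt_of_lt_of_le one_pos hC1
  obtain ⟨ε, hεdef⟩ : ∃ x : ℝ, x = 1 / (2 * C') := ⟨_, rfl⟩
  have hε_pos : 0 < ε := by rw [hεdef]; positivity
  have hε_half : ε ≤ 1/2 := by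
    rw [hεdef, div_le_div_iff₀ (by positivity) (by norm_num)]
    nlinarith
  obtain ⟨δ, hδdef⟩ : ∃ x : ℝ, x = ε^2 / 2 := ⟨_, rfl⟩
  have hδ_pos : 0 < δ := by rw [hδdef]; positivity
  obtain ⟨M, hM⟩ := eventually_atTop.mp (tendsto_atTop.mp h (1/δ))
  have hMr : ∀ k ≥ M, r k ≤ δ * k := by
    intro k hk
    have h1 := hM k hk
    have h2 := hr_pos k
    rw [div_le_div_iff₀ hδ_pos h2] at h1
    linarith
  have hne : (Finset.range (M+1)).Nonempty := ⟨0, by simp⟩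
  obtain ⟨R, hRdef⟩ : ∃ x : ℝ, x = (Finset.range (M+1)).sup' hne r := ⟨_, rfl⟩
  obtain ⟨B, hBdef⟩ : ∃ x : ℝ, x = M + R / ε := ⟨_, rfl⟩
  refine eventually_atTop.mpr ⟨max 1 (⌈B⌉₊ + 1), fun n hn => ?_⟩
  have hn1 : 1 ≤ n := le_trans (le_max_left _ _) hn
  have hnB : B < (n : ℝ) := by
    have h1 : (⌈B⌉₊ + 1 : ℕ) ≤ n := le_trans (le_max_right _ _) hn
    have h2 : B ≤ (⌈B⌉₊ : ℝ) := Nat.le_ceil B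
    have h3 : ((⌈B⌉₊ + 1 : ℕ) : ℝ) ≤ n := Nat.cast_le.mpr h1
    push_cast at h3
    linarith
  have hn_pos : (0:ℝ) < n := by exact_mod_cast hn1
  obtain ⟨t, htdef⟩ : ∃ x : ℝ, x = κ n := ⟨_, rfl⟩
  have ht : 0 < t := htdef ▸ hκ_pos n hn1
  obtain ⟨f, hfdef⟩ : ∃ F : ℕ → ℝ, F = fun i => lam i / (lam i + t) := ⟨_, rfl⟩
  have hf_pos : ∀ i, 0 < f i := fun i => by
    rw [hfdef]; exact div_pos (hlam_pos i) (by linarith [hlam_pos i])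
  have hf_lt1 : ∀ i, f i < 1 := fun i => by
    rw [hfdef]
    exact (div_lt_one (by linarith [hlam_pos i])).mpr (by linarith [hlam_pos i])
  have hf_le : ∀ i, f i ≤ lam i / t := fun i => by
    rw [hfdef]
    exact div_le_div_of_nonneg_left (hlam_pos i).le ht (by linarith [hlam_pos i])
  have hfs : Summable f :=
    Summable.of_nonneg_of_le (fun i => (hf_pos i).le) hf_le (hlam_summable.div_const t)
  have hf2s : Summable (fun i => f i ^ 2) := by
    refine Summable.of_nonneg_of_le (fun i => sq_nonneg _) (fun i => ?_) hfs
    nlinarith [hf_pos i, hf_lt1 i]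
  have hsum_f : ∑' i, f i = (n : ℝ) := by
    simp only [hfdef, htdef]
    exact hκ_eq n hn1
  obtain ⟨g, hgdef⟩ : ∃ G : ℕ → ℝ, G = fun i => f i - f i ^ 2 := ⟨_, rfl⟩
  have hg_eq : ∀ i, g i = f i * (1 - f i) := fun i => by rw [hgdef]; ring
  have hg_nonneg : ∀ i, 0 ≤ g i := fun i => by
    rw [hg_eq]; exact mul_nonneg (hf_pos i).le (by linarith [hf_lt1 i])
  have hg_le_f : ∀ i, g i ≤ f i := fun i => by
    simp only [hgdef]; nlinarith [sq_nonneg (f i)]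
  have hgs : Summable g := hgdef ▸ hfs.sub hf2s
  obtain ⟨T, hTdef⟩ : ∃ x : ℝ, x = ∑' i, g i := ⟨_, rfl⟩
  have hT_pos : 0 < T := by
    rw [hTdef]
    exact Summable.tsum_pos hgs hg_nonneg 0
      (by rw [hg_eq]; exact mul_pos (hf_pos 0) (by linarith [hf_lt1 0]))
  have hT_eq : (n : ℝ) - ∑' i, f i ^ 2 = T := by
    rw [hTdef, hgdef, Summable.tsum_sub hfs hf2s, hsum_f]
  -- choice of m
  have hex : ∃ i, lam i < t / ε :=
    (hlam_summable.tendsto_atTop_zero.eventually_lt_const (by positivity)).exists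
  obtain ⟨m, hm1, hm2⟩ : ∃ m, lam m < t / ε ∧ ∀ i < m, t / ε ≤ lam i :=
    ⟨Nat.find hex, Nat.find_spec hex, fun i hi => le_of_not_gt (Nat.find_min hex hi)⟩
  have hεlam : ε * lam m < t := by
    rw [lt_div_iff₀ hε_pos] at hm1
    linarith
  have hεlam_pos : 0 < ε * lam m := mul_pos hε_pos (hlam_pos m)
  -- tail bound
  have htail_f : ∑' i, f (i + m) ≤ r m / ε := by
    have hfm : Summable (fun i => f (i + m)) := (summable_nat_add_iff m).mpr hfs
    have hstep : ∀ i : ℕ, f (i + m) ≤ lam (m + i) / (ε * lam m) := by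
      intro i
      rw [add_comm m i]
      exact le_trans (hf_le _)
        (div_le_div_of_nonneg_left (hlam_pos _).le hεlam_pos hεlam.le)
    calc ∑' i, f (i + m) ≤ ∑' i, lam (m + i) / (ε * lam m) :=
          Summable.tsum_le_tsum hstep hfm ((htail_sum m).div_const _)
      _ = (∑' i, lam (m + i)) / (ε * lam m) := tsum_div_const
      _ = r m / ε := by rw [hr m, mul_comm ε (lam m), ← div_div]
  -- head lower bound: f i ≥ 1 - ε for i < m, hence m(1-ε) ≤ n
  have hhead_ge : ∀ i < m, 1 - ε ≤ f i := by
    intro i hi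
    have hli := hlam_pos i
    have h1 : 1 - f i = t / (lam i + t) := by
      rw [hfdef]
      field_simp
      ring
    have h2 : t / (lam i + t) ≤ t / lam i :=
      div_le_div_of_nonneg_left ht.le hli (by linarith)
    have h3 : t / lam i ≤ ε := by
      rw [div_le_iff₀ hli]
      have := hm2 i hi
      rw [div_le_iff₀ hε_pos] at this
      linarith
    linarith
  have hhead_le_n : ∑ i ∈ Finset.range m, f i ≤ (n : ℝ) := by
    rw [← hsum_f]
    exact Summable.sum_le_tsum _ (fun i _ => (hf_pos i).le) hfs
  have hm_le : (m : ℝ) * (1 - ε) ≤ (n : ℝ) := by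
    have h1 : (m : ℝ) * (1 - ε) ≤ ∑ i ∈ Finset.range m, f i := by
      calc (m : ℝ) * (1 - ε) = ∑ _i ∈ Finset.range m, (1 - ε) := by
            simp [mul_comm]
            ring
        _ ≤ ∑ i ∈ Finset.range m, f i :=
            Finset.sum_le_sum fun i hi => hhead_ge i (Finset.mem_range.mp hi)
    linarith
  have hm2n : (m : ℝ) ≤ 2 * n := by nlinarith
  -- m is eventually larger than M
  have hmM : M ≤ m := by
    by_contra hcon
    push_neg at hcon
    have hmem : m ∈ Finset.range (M+1) := Finset.mem_range.mpr (by omega)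
    have hrm : r m ≤ R := hRdef ▸ Finset.le_sup' r hmem
    have hsplit : (n : ℝ) = (∑ i ∈ Finset.range m, f i) + ∑' i, f (i + m) := by
      rw [← hsum_f, Summable.sum_add_tsum_nat_add m hfs]
    have hhead : ∑ i ∈ Finset.range m, f i ≤ (m : ℝ) := by
      calc ∑ i ∈ Finset.range m, f i ≤ ∑ _i ∈ Finset.range m, (1:ℝ) :=
            Finset.sum_le_sum fun i _ => (hf_lt1 i).le
        _ = m := by simp
    have h1 : (m : ℝ) ≤ M := by exact_mod_cast hcon.le
    have h2 : r m / ε ≤ R / ε := by gcongr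
    rw [hBdef] at hnB
    linarith [htail_f]
  -- main bounds
  have hrmδ : r m ≤ δ * m := hMr m hmM
  have htail2 : ∑' i, f (i + m) ≤ ε * n := by
    have h1 : r m / ε ≤ δ * m / ε := by gcongr
    have h2 : δ * m / ε = ε * m / 2 := by
      rw [hδdef, div_eq_div_iff hε_pos.ne' (by norm_num : (2:ℝ) ≠ 0)]
      ring
    have h3 : ε * m / 2 ≤ ε * n := by
      have h4 := mul_le_mul_of_nonneg_left hm2n hε_pos.le
      linarith
    linarith [htail_f]
  have hhead_g : ∑ i ∈ Finset.range m, g i ≤ ε * n := by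
    have h1 : ∑ i ∈ Finset.range m, g i ≤ ∑ i ∈ Finset.range m, ε * f i := by
      refine Finset.sum_le_sum fun i hi => ?_
      rw [hg_eq, mul_comm ε (f i)]
      have h2 := hhead_ge i (Finset.mem_range.mp hi)
      exact mul_le_mul_of_nonneg_left (by linarith) (hf_pos i).le
    have h5 : ∑ i ∈ Finset.range m, ε * f i = ε * ∑ i ∈ Finset.range m, f i :=
      (Finset.mul_sum _ _ _).symm
    have h6 : ε * ∑ i ∈ Finset.range m, f i ≤ ε * n :=
      mul_le_mul_of_nonneg_left hhead_le_n hε_pos.le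
    linarith
  have htail_g : ∑' i, g (i + m) ≤ ε * n := by
    have hgm : Summable (fun i => g (i + m)) := (summable_nat_add_iff m).mpr hgs
    have hfm : Summable (fun i => f (i + m)) := (summable_nat_add_iff m).mpr hfs
    calc ∑' i, g (i + m) ≤ ∑' i, f (i + m) := Summable.tsum_le_tsum (fun i => hg_le_f _) hgm hfm
      _ ≤ ε * n := htail2
  have hT_le : T ≤ 2 * ε * n := by
    rw [hTdef, ← Summable.sum_add_tsum_nat_add m hgs]
    linarith
  -- conclusion
  have hEn : E n = (n : ℝ) / T := by
    rw [hE n, ← htdef, ← hT_eq, hfdef]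
  rw [hEn]
  have h1 : C ≤ C' := hC'def ▸ le_max_left _ _
  have h2 : C' ≤ (n : ℝ) / (2 * ε * n) := by
    have hεn : 2 * ε * n = n / C' := by
      have hC'ne : C' ≠ 0 := hC0.ne'
      rw [hεdef]
      field_simp
    rw [hεn, div_div_eq_mul_div, mul_comm (n:ℝ) C', mul_div_assoc, div_self hn_pos.ne',
      mul_one]
  have h3 : (n : ℝ) / (2 * ε * n) ≤ (n : ℝ) / T := by
    gcongr
  linarith
end

section
/- (Lower bounds on the effective regularization.) For any integer k ≥ 0 with λ_{k+1} > 0, the ridgeless effective regularization satisfies both κ_0 ≥ (1 − n/R_k) · (Σ_{i>k} λ_i)/n and κ_0 ≥ λ_{k+1} · ((k + r_k)/n − 1). -/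
set_option maxHeartbeats 1000000


/-- Lower bounds on the effective regularization: For any
`k ≥ 0` with `λ_{k+1} > 0`,
`κ_0 ≥ (1 − n/R_k)·(Σ_{i>k} λ_i)/n` and `κ_0 ≥ λ_{k+1}·((k + r_k)/n − 1)`.
(Here `lam i` denotes `λ_{i+1}`.) -/
theorem kappa_lower_bounds
    (n : ℕ) (hn : 1 ≤ n)
    (lam : ℕ → ℝ) (hlam_nonneg : ∀ i, 0 ≤ lam i) (hlam_mono : Antitone lam)
    (hlam_summable : Summable lam) (hlam_ne : ∃ i, lam i ≠ 0)
    (κ0 : ℝ) (hκ0 : 0 < κ0)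
    (hκ0_eq : ∑' i, lam i / (lam i + κ0) = (n : ℝ))
    (k : ℕ) (hlamk : 0 < lam k)
    (r : ℕ → ℝ) (hr : ∀ j, r j = (∑' i, lam (j + i)) / lam j)
    (R : ℕ → ℝ) (hR : ∀ j, R j = (∑' i, lam (j + i)) ^ 2 / ∑' i, lam (j + i) ^ 2) :
    (1 - (n : ℝ) / R k) * (∑' i, lam (k + i)) / n ≤ κ0 ∧
      lam k * (((k : ℝ) + r k) / n - 1) ≤ κ0 := by
  have hn' : (0:ℝ) < n := by exact_mod_cast hn
  have hcomm : ∀ (h : ℕ → ℝ), (fun i => h (k + i)) = fun i => h (i + k) :=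
    fun h => funext fun i => by rw [Nat.add_comm]
  have hpos : ∀ i, 0 < lam i + κ0 := fun i => by linarith [hlam_nonneg i]
  -- summability facts
  have htail : Summable (fun i => lam (k + i)) := by
    rw [hcomm lam]; exact (summable_nat_add_iff k).2 hlam_summable
  have hsq : Summable (fun i => lam (k + i) ^ 2) := by
    refine Summable.of_nonneg_of_le (fun i => sq_nonneg _) (fun i => ?_)
      (htail.mul_left (lam k))
    have h1 : lam (k + i) ≤ lam k := hlam_mono (Nat.le_add_right k i)
    nlinarith [hlam_nonneg (k + i)]
  have hfrac : Summable (fun i => lam i / (lam i + κ0)) := by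
    refine Summable.of_nonneg_of_le (fun i => div_nonneg (hlam_nonneg i) (hpos i).le)
      (fun i => ?_) (hlam_summable.div_const κ0)
    exact div_le_div_of_nonneg_left (hlam_nonneg i) hκ0 (by linarith [hlam_nonneg i])
  have hfrac_tail : Summable (fun i => lam (k + i) / (lam (k + i) + κ0)) := by
    rw [hcomm (fun j => lam j / (lam j + κ0))]
    exact (summable_nat_add_iff k).2 hfrac
  have hprod : Summable (fun i => lam (k + i) * (lam (k + i) + κ0)) := by
    have h := hsq.add (htail.mul_left κ0)
    exact h.congr fun i => by ring
  set T := ∑' i, lam (k + i) with hT_def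
  set S := ∑' i, lam (k + i) ^ 2 with hS_def
  have hT : 0 < T := by
    have h := Summable.le_tsum htail 0 (fun j _ => hlam_nonneg _)
    simp only [Nat.add_zero] at h
    linarith
  have hS : 0 < S := by
    have h := Summable.le_tsum hsq 0 (fun j _ => sq_nonneg _)
    simp only [Nat.add_zero] at h
    nlinarith
  set N := ∑' i, lam (k + i) / (lam (k + i) + κ0) with hN_def
  clear_value T S N
  have hN_le : N ≤ (n:ℝ) := by
    have hsplit := Summable.sum_add_tsum_nat_add (f := fun i => lam i / (lam i + κ0)) k hfrac
    rw [hκ0_eq] at hsplit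
    have hfin : 0 ≤ ∑ i ∈ Finset.range k, lam i / (lam i + κ0) :=
      Finset.sum_nonneg fun i _ => div_nonneg (hlam_nonneg i) (hpos i).le
    have hNe : N = ∑' i, lam (i + k) / (lam (i + k) + κ0) := by
      rw [hN_def, hcomm (fun j => lam j / (lam j + κ0))]
    rw [hNe]
    linarith
  ----------------------------------------------------------------
  -- Bound 1 via AM-GM trick with t = T/n
  ----------------------------------------------------------------
  set t := T / n with ht_def
  clear_value t
  have hperterm : ∀ i, 2 * t * lam (k + i) ≤
      t ^ 2 * (lam (k + i) / (lam (k + i) + κ0)) + lam (k + i) * (lam (k + i) + κ0) := by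
    intro i
    set a := lam (k + i) with ha_def
    have ha : 0 ≤ a := hlam_nonneg _
    have hap : 0 < a + κ0 := hpos _
    have key : 2 * t * a * (a + κ0) ≤ t ^ 2 * a + a * (a + κ0) ^ 2 := by
      nlinarith [mul_nonneg ha (sq_nonneg (t - (a + κ0)))]
    have h2 : t ^ 2 * (a / (a + κ0)) + a * (a + κ0) =
        (t ^ 2 * a + a * (a + κ0) ^ 2) / (a + κ0) := by
      field_simp
    rw [h2, le_div_iff₀ hap]
    linarith
  have hsum_ineq : 2 * t * T ≤ t ^ 2 * N + (S + κ0 * T) := by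
    have hL : Summable (fun i => 2 * t * lam (k + i)) := htail.mul_left _
    have hR1 : Summable (fun i =>
        t ^ 2 * (lam (k + i) / (lam (k + i) + κ0)) + lam (k + i) * (lam (k + i) + κ0)) :=
      (hfrac_tail.mul_left _).add hprod
    have hts := Summable.tsum_le_tsum hperterm hL hR1
    calc 2 * t * T = ∑' i, 2 * t * lam (k + i) := by
          rw [hT_def]; exact (tsum_mul_left).symm
      _ ≤ ∑' i, (t ^ 2 * (lam (k + i) / (lam (k + i) + κ0))
            + lam (k + i) * (lam (k + i) + κ0)) := hts
      _ = t ^ 2 * N + (S + κ0 * T) := by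
          rw [Summable.tsum_add (hfrac_tail.mul_left _) hprod, tsum_mul_left, ← hN_def]
          congr 1
          calc ∑' i, lam (k + i) * (lam (k + i) + κ0)
              = ∑' i, (lam (k + i) ^ 2 + κ0 * lam (k + i)) :=
                tsum_congr fun i => by ring
            _ = S + κ0 * T := by
                rw [Summable.tsum_add hsq (htail.mul_left κ0), tsum_mul_left, ← hS_def, ← hT_def]
  have hfinal : T ^ 2 ≤ n * S + n * κ0 * T := by
    have h1 : t ^ 2 * N ≤ t ^ 2 * n := mul_le_mul_of_nonneg_left hN_le (sq_nonneg t)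
    have h2 : t ^ 2 * n = T ^ 2 / n := by rw [ht_def]; field_simp
    have h3 : 2 * t * T = 2 * (T ^ 2 / n) := by rw [ht_def]; field_simp
    have h4 : T ^ 2 / n ≤ S + κ0 * T := by
      have h := hsum_ineq
      rw [h3] at h
      linarith [h, h1, h2]
    rw [div_le_iff₀ hn'] at h4
    nlinarith
  constructor
  · -- first bound
    rw [hR k, ← hT_def, ← hS_def]
    have hexp : (1 - (n:ℝ) / (T ^ 2 / S)) * T / n = T / n - S / T := by
      field_simp
    rw [hexp, sub_le_iff_le_add, div_le_iff₀ hn']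
    have h5 : (κ0 + S / T) * n = (κ0 * T + S) * n / T := by field_simp
    rw [h5, le_div_iff₀ hT]
    nlinarith
  · -- second bound
    rw [hr k, ← hT_def]
    have hg_sum : Summable (fun i => (lam k + κ0) * (lam i / (lam i + κ0))) :=
      hfrac.mul_left _
    have hmain : (k : ℝ) * lam k + T ≤ (lam k + κ0) * n := by
      have hg_tot : ∑' i, (lam k + κ0) * (lam i / (lam i + κ0)) = (lam k + κ0) * n := by
        rw [tsum_mul_left, hκ0_eq]
      have hsplit := Summable.sum_add_tsum_nat_add
        (f := fun i => (lam k + κ0) * (lam i / (lam i + κ0))) k hg_sum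
      rw [hg_tot] at hsplit
      have hfin : (k : ℝ) * lam k ≤
          ∑ i ∈ Finset.range k, (lam k + κ0) * (lam i / (lam i + κ0)) := by
        have hterm : ∀ i ∈ Finset.range k,
            lam k ≤ (lam k + κ0) * (lam i / (lam i + κ0)) := by
          intro i hi
          have hik : lam k ≤ lam i := hlam_mono (Finset.mem_range.1 hi).le
          have hip : 0 < lam i + κ0 := hpos i
          rw [← sub_nonneg]
          have hid : (lam k + κ0) * (lam i / (lam i + κ0)) - lam k
              = ((lam i - lam k) * κ0) / (lam i + κ0) := by field_simp; ring
          rw [hid]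
          have h6 : 0 ≤ lam i - lam k := by linarith
          positivity
        calc (k : ℝ) * lam k = ∑ _i ∈ Finset.range k, lam k := by
              rw [Finset.sum_const, Finset.card_range]; ring
          _ ≤ _ := Finset.sum_le_sum hterm
      have htailge : T ≤ ∑' i, (lam k + κ0) * (lam (i + k) / (lam (i + k) + κ0)) := by
        have heq : (fun i => (lam k + κ0) * (lam (i + k) / (lam (i + k) + κ0)))
            = fun i => (lam k + κ0) * (lam (k + i) / (lam (k + i) + κ0)) := by
          exact (hcomm (fun j => (lam k + κ0) * (lam j / (lam j + κ0)))).symm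
        rw [heq, hT_def]
        refine Summable.tsum_le_tsum (fun i => ?_) htail (hfrac_tail.mul_left _)
        · have hle : lam (k + i) ≤ lam k := hlam_mono (Nat.le_add_right k i)
          have hip : 0 < lam (k + i) + κ0 := hpos _
          rw [← sub_nonneg]
          have hid : (lam k + κ0) * (lam (k + i) / (lam (k + i) + κ0)) - lam (k + i)
              = ((lam k - lam (k + i)) * lam (k + i)) / (lam (k + i) + κ0) := by
            field_simp; ring
          rw [hid]
          have h7 : 0 ≤ lam k - lam (k + i) := by linarith
          have h8 := hlam_nonneg (k + i)
          positivity
      linarith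
    have hexp : lam k * (((k : ℝ) + T / lam k) / n - 1)
        = ((k : ℝ) * lam k + T) / n - lam k := by
      field_simp
    rw [hexp, sub_le_iff_le_add, div_le_iff₀ hn']
    nlinarith
end

section
/- (Upper bound on the effective regularization.) For any integer k with 0 ≤ k < n, the ridgeless effective regularization satisfies the strict inequality κ_0 < (1 − k/n)^{−1} · (Σ_{i>k} λ_i)/n. -/
/-- Upper bound on the effective regularization: For any
`0 ≤ k < n`, `κ_0 < (1 − k/n)⁻¹ · (Σ_{i>k} λ_i)/n`.
(Here `lam i` denotes `λ_{i+1}`, so `∑' i, lam (k+i) = Σ_{i>k} λ_i`.) -/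
theorem kappa_upper_bound
    (n : ℕ) (hn : 1 ≤ n)
    (lam : ℕ → ℝ) (hlam_nonneg : ∀ i, 0 ≤ lam i) (hlam_mono : Antitone lam)
    (hlam_summable : Summable lam) (hlam_ne : ∃ i, lam i ≠ 0)
    (κ0 : ℝ) (hκ0 : 0 < κ0)
    (hκ0_eq : ∑' i, lam i / (lam i + κ0) = (n : ℝ))
    (k : ℕ) (hk : k < n) :
    κ0 < (1 - (k : ℝ) / n)⁻¹ * ((∑' i, lam (k + i)) / n) := by
  have hn' : (0:ℝ) < n := by exact_mod_cast hn
  have hkn : (k:ℝ) < n := by exact_mod_cast hk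
  set f : ℕ → ℝ := fun i => lam i / (lam i + κ0) with hfdef
  have hden : ∀ i, 0 < lam i + κ0 := fun i =>
    add_pos_of_nonneg_of_pos (hlam_nonneg i) hκ0
  have hf_nonneg : ∀ i, 0 ≤ f i := fun i => div_nonneg (hlam_nonneg i) (hden i).le
  have hf_le : ∀ i, f i ≤ lam i / κ0 := by
    intro i
    apply div_le_div_of_nonneg_left (hlam_nonneg i) hκ0
    linarith [hlam_nonneg i]
  have hlamdiv : Summable fun i => lam i / κ0 := hlam_summable.div_const κ0
  have hf_summable : Summable f := Summable.of_nonneg_of_le hf_nonneg hf_le hlamdiv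
  have hsplit := hf_summable.sum_add_tsum_nat_add k
  rw [hκ0_eq] at hsplit
  have hhead : ∑ i ∈ Finset.range k, f i ≤ (k:ℝ) := by
    calc ∑ i ∈ Finset.range k, f i ≤ ∑ _i ∈ Finset.range k, (1:ℝ) := by
          apply Finset.sum_le_sum
          intro i _
          have : lam i < lam i + κ0 := by linarith
          exact le_of_lt ((div_lt_one (hden i)).2 this)
      _ = (k:ℝ) := by simp
  -- tail sums
  have hlam_tail : Summable fun i => lam (i + k) := (summable_nat_add_iff k).2 hlam_summable
  have hf_tail : Summable fun i => f (i + k) := (summable_nat_add_iff k).2 hf_summable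
  have hlamk : 0 < lam k := by
    by_contra h
    have hk0 : lam k = 0 := le_antisymm (not_lt.1 h) (hlam_nonneg k)
    have htail0 : ∀ i, f (i + k) = 0 := by
      intro i
      have h1 : lam (i + k) ≤ lam k := hlam_mono (Nat.le_add_left k i)
      have h2 : lam (i + k) = 0 := le_antisymm (hk0 ▸ h1) (hlam_nonneg _)
      simp [hfdef, h2]
    have : (∑' i, f (i + k)) = 0 := by simp [htail0]
    rw [this] at hsplit
    have : (n:ℝ) ≤ k := by linarith [hhead, hsplit]
    linarith
  have hstrict : (∑' i, f (i + k)) < (∑' i, lam (i + k)) / κ0 := by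
    rw [← tsum_div_const]
    refine Summable.tsum_lt_tsum (i := 0) (fun i => hf_le (i + k)) ?_ hf_tail
      (hlam_tail.div_const κ0)
    show f (0 + k) < lam (0 + k) / κ0
    simp only [Nat.zero_add]
    apply div_lt_div_of_pos_left hlamk hκ0
    linarith
  have hmain : (n:ℝ) - k < (∑' i, lam (i + k)) / κ0 := by linarith
  have hnk : (0:ℝ) < (n:ℝ) - k := by linarith
  have hmul : κ0 * ((n:ℝ) - k) < ∑' i, lam (i + k) := by
    have := (lt_div_iff₀ hκ0).1 hmain
    linarith [this]
  have hk2 : κ0 < (∑' i, lam (i + k)) / ((n:ℝ) - k) :=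
    (lt_div_iff₀ hnk).2 (by linarith [hmul])
  have hrw : (∑' i, lam (k + i)) = ∑' i, lam (i + k) :=
    tsum_congr fun i => by rw [add_comm]
  rw [hrw]
  have heq : (1 - (k:ℝ)/n)⁻¹ * ((∑' i, lam (i + k))/n)
      = (∑' i, lam (i + k)) / ((n:ℝ) - k) := by
    rw [show (1 - (k:ℝ)/n) = ((n:ℝ) - k)/n by field_simp]
    rw [inv_div]
    field_simp
  rw [heq]
  exact hk2
end

section
/- For any integer k with 0 ≤ k < n such that λ_{k+1} > 0 and k + r_k > n, the overfitting coefficient satisfies E_0 ≤ (1 − k/n)^{−1} · (1 − n/(k + r_k))^{−1}. -/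
set_option maxHeartbeats 1000000


/-- For any `0 ≤ k < n` with `λ_{k+1} > 0` and `k + r_k > n`,
`E_0 ≤ (1 − k/n)⁻¹ · (1 − n/(k + r_k))⁻¹`.
(Here `lam i` denotes `λ_{i+1}`, so `r k = (Σ_{i>k} λ_i)/λ_{k+1}`.) -/
theorem e0_upper_bound_rk
    (n : ℕ) (hn : 1 ≤ n)
    (lam : ℕ → ℝ) (hlam_nonneg : ∀ i, 0 ≤ lam i) (hlam_mono : Antitone lam)
    (hlam_summable : Summable lam) (hlam_ne : ∃ i, lam i ≠ 0)
    (κ0 : ℝ) (hκ0 : 0 < κ0)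
    (hκ0_eq : ∑' i, lam i / (lam i + κ0) = (n : ℝ))
    (E0 : ℝ)
    (hE0 : E0 = (n : ℝ) / ((n : ℝ) - ∑' i, (lam i / (lam i + κ0)) ^ 2))
    (k : ℕ) (hk : k < n) (hlamk : 0 < lam k)
    (r : ℕ → ℝ) (hr : ∀ j, r j = (∑' i, lam (j + i)) / lam j)
    (hkr : (n : ℝ) < (k : ℝ) + r k) :
    E0 ≤ (1 - (k : ℝ) / n)⁻¹ * (1 - (n : ℝ) / ((k : ℝ) + r k))⁻¹ := by
  set L : ℕ → ℝ := fun i => lam i / (lam i + κ0) with hLdef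
  have hpos : ∀ i, 0 < lam i + κ0 := fun i => add_pos_of_nonneg_of_pos (hlam_nonneg i) hκ0
  have hL0 : ∀ i, 0 ≤ L i := fun i => div_nonneg (hlam_nonneg i) (hpos i).le
  have hL1 : ∀ i, L i < 1 := fun i => (div_lt_one (hpos i)).mpr (lt_add_of_pos_right _ hκ0)
  have hLanti : ∀ i j, i ≤ j → L j ≤ L i := by
    intro i j hij
    have h := hlam_mono hij
    simp only [hLdef]
    rw [div_le_div_iff₀ (hpos j) (hpos i)]
    nlinarith [hlam_nonneg j]
  have hLsum : Summable L := by
    apply Summable.of_nonneg_of_le hL0 (fun i => ?_) (hlam_summable.div_const κ0)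
    exact div_le_div_of_nonneg_left (hlam_nonneg i) hκ0 (le_add_of_nonneg_left (hlam_nonneg i))
  have hL2sum : Summable (fun i => (L i) ^ 2) := by
    apply Summable.of_nonneg_of_le (fun i => sq_nonneg _) (fun i => ?_) hLsum
    nlinarith [hL0 i, hL1 i]
  have htailL : Summable (fun i => L (i + k)) := (summable_nat_add_iff k).mpr hLsum
  have htailL2 : Summable (fun i => (L (i + k)) ^ 2) := (summable_nat_add_iff k).mpr hL2sum
  have htaillam : Summable (fun i => lam (i + k)) := (summable_nat_add_iff k).mpr hlam_summable
  set Sk := ∑ i ∈ Finset.range k, L i with hSkdef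
  set TL := ∑' i, L (i + k) with hTLdef
  have hsplit : Sk + TL = (n : ℝ) := by
    rw [hSkdef, hTLdef, Summable.sum_add_tsum_nat_add k hLsum]
    exact hκ0_eq
  have hSk_le : Sk ≤ (k : ℝ) := by
    calc Sk ≤ ∑ i ∈ Finset.range k, (1 : ℝ) :=
          Finset.sum_le_sum (fun i _ => (hL1 i).le)
      _ = (k : ℝ) := by simp
  have hSk_ge : (k : ℝ) * L k ≤ Sk := by
    calc (k : ℝ) * L k = ∑ i ∈ Finset.range k, L k := by simp [mul_comm]
      _ ≤ Sk := Finset.sum_le_sum (fun i hi => hLanti i k (Finset.mem_range.mp hi).le)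
  have hTL_nonneg : 0 ≤ TL := tsum_nonneg (fun i => hL0 _)
  -- tail of squares bounded
  have htail2_le : ∑' i, (L (i + k)) ^ 2 ≤ L k * TL := by
    rw [hTLdef, ← tsum_mul_left]
    refine Summable.tsum_le_tsum (fun i => ?_) htailL2 (htailL.mul_left _)
    have h1 := hLanti k (i + k) (Nat.le_add_left k i)
    nlinarith [hL0 (i + k)]
  have hS2split : ∑' i, (L i) ^ 2 = (∑ i ∈ Finset.range k, (L i) ^ 2) + ∑' i, (L (i + k)) ^ 2 :=
    (Summable.sum_add_tsum_nat_add k hL2sum).symm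
  have hS2head : ∑ i ∈ Finset.range k, (L i) ^ 2 ≤ Sk :=
    Finset.sum_le_sum (fun i _ => by nlinarith [hL0 i, hL1 i])
  have key1 : ((n : ℝ) - k) * (1 - L k) ≤ (n : ℝ) - ∑' i, (L i) ^ 2 := by
    have hkn : (k : ℝ) < (n : ℝ) := by exact_mod_cast hk
    nlinarith [hL0 k, hL1 k, hsplit, htail2_le, hS2split, hS2head, hSk_le, hTL_nonneg]
  -- r k in terms of tail sum
  set T := ∑' i, lam (i + k) with hTdef
  have hrk : r k = T / lam k := by
    rw [hr k, hTdef]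
    congr 1
    exact tsum_congr fun i => by rw [Nat.add_comm]
  have hT_le : T ≤ (lam k + κ0) * TL := by
    rw [hTdef, hTLdef, ← tsum_mul_left]
    refine Summable.tsum_le_tsum (fun i => ?_) htaillam (htailL.mul_left _)
    have h1 := hlam_mono (Nat.le_add_left k i)
    have h2 := hlam_nonneg (i + k)
    simp only [hLdef]
    rw [← mul_div_assoc, le_div_iff₀ (hpos (i + k))]
    nlinarith
  have hLk_mul : L k * (lam k + κ0) = lam k := div_mul_cancel₀ _ (hpos k).ne'
  have hkr_pos : (0 : ℝ) < (k : ℝ) + r k := by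
    have : (0 : ℝ) < (n : ℝ) := by exact_mod_cast hn
    linarith
  have key2 : L k ≤ (n : ℝ) / ((k : ℝ) + r k) := by
    rw [le_div_iff₀ hkr_pos, hrk]
    have h1 : L k * ((k : ℝ) + T / lam k) = ((k : ℝ) * lam k + T) / (lam k + κ0) := by
      simp only [hLdef]
      field_simp
    rw [h1, div_le_iff₀ (hpos k)]
    nlinarith [hSk_ge, hT_le, hLk_mul, hsplit, hpos k]
  have hfrac_lt : (n : ℝ) / ((k : ℝ) + r k) < 1 := (div_lt_one hkr_pos).mpr hkr
  have hB_pos : (0 : ℝ) < 1 - (n : ℝ) / ((k : ℝ) + r k) := by linarith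
  have hkn : (k : ℝ) < (n : ℝ) := by exact_mod_cast hk
  have hD_ge : ((n : ℝ) - k) * (1 - (n : ℝ) / ((k : ℝ) + r k)) ≤ (n : ℝ) - ∑' i, (L i) ^ 2 := by
    have : ((n : ℝ) - k) * (1 - (n : ℝ) / ((k : ℝ) + r k)) ≤ ((n : ℝ) - k) * (1 - L k) := by
      apply mul_le_mul_of_nonneg_left _ (by linarith)
      linarith [key2]
    linarith [key1]
  have hD'_pos : (0 : ℝ) < ((n : ℝ) - k) * (1 - (n : ℝ) / ((k : ℝ) + r k)) := by
    apply mul_pos (by linarith) hB_pos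
  have hn_pos : (0 : ℝ) < (n : ℝ) := by exact_mod_cast hn
  have hstep : E0 ≤ (n : ℝ) / (((n : ℝ) - k) * (1 - (n : ℝ) / ((k : ℝ) + r k))) := by
    rw [hE0]
    exact div_le_div_of_nonneg_left hn_pos.le hD'_pos hD_ge
  calc E0 ≤ (n : ℝ) / (((n : ℝ) - k) * (1 - (n : ℝ) / ((k : ℝ) + r k))) := hstep
    _ = (1 - (k : ℝ) / n)⁻¹ * (1 - (n : ℝ) / ((k : ℝ) + r k))⁻¹ := by
        have hnk : (0 : ℝ) < (n : ℝ) - k := by linarith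
        have h1 : (1 - (k : ℝ) / n) = ((n : ℝ) - k) / n := by field_simp
        rw [h1, inv_div, ← div_div, div_eq_mul_inv ((n : ℝ) / ((n : ℝ) - k))]
end
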